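/- arXiv:2501.03806 — 12 statements merged into one kernel-verified Lean document; each statement's English description precedes it below -/
import Mathlib

section
/- Let G be a connected graph with maximum degree Δ, second maximum degree Δ₂, and α ∈ [0,1]. Then λ₁(A_α(G)) ≤ (α(Δ+1) + Δ₂ - 1 + sqrt(α²(Δ+1)² + (Δ₂-1)² - 2α((Δ-1)Δ₂ + 3Δ + 1) + 4Δ))/2. -/
open Matrix SimpleGraph Finset

noncomputable def Aalpha {n : ℕ} (G : SimpleGraph (Fin n)) [DecidableRel G.Adj] (α : ℝ) :
    Matrix (Fin n) (Fin n) ℝ :=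
  α • Matrix.diagonal (fun i => (G.degree i : ℝ)) + (1 - α) • G.adjMatrix ℝ

lemma row_sum {n : ℕ} (G : SimpleGraph (Fin n)) [DecidableRel G.Adj] (α : ℝ)
    (i : Fin n) (v : Fin n → ℝ) :
    ∑ j, Aalpha G α i j * v j
      = α * (G.degree i : ℝ) * v i + (1 - α) * ∑ j ∈ G.neighborFinset i, v j := by
  have : ∑ j, Aalpha G α i j * v j = (Aalpha G α *ᵥ v) i := rfl
  rw [this, Aalpha, add_mulVec, smul_mulVec, smul_mulVec]
  simp [mulVec_diagonal, adjMatrix_mulVec_apply, mul_assoc]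

lemma key {n : ℕ} (G : SimpleGraph (Fin n)) [DecidableRel G.Adj] (α : ℝ)
    (hα0 : 0 ≤ α) (hα1 : α ≤ 1) (Δ Δ₂ : ℕ) (hΔΔ : Δ₂ ≤ Δ)
    (hdeg : ∀ v, G.degree v ≤ Δ)
    (hdeg2 : ∀ u v : Fin n, u ≠ v → G.degree u ≤ Δ₂ ∨ G.degree v ≤ Δ₂)
    (hdegpos : ∀ v, 1 ≤ G.degree v)
    (lam : ℝ) (y : Fin n → ℝ) (hy0 : ∀ i, 0 ≤ y i) (hyne : y ≠ 0)
    (hAy : ∀ i, lam * y i ≤ ∑ j, Aalpha G α i j * y j) :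
    ∃ t : ℝ, lam ≤ t ∧
      t ^ 2 - (α * ((Δ:ℝ) + 1) + (Δ₂:ℝ) - 1) * t + (α * Δ * ((Δ₂:ℝ) + 1) - Δ) ≤ 0 := by
  have hΔΔ' : (Δ₂ : ℝ) ≤ (Δ : ℝ) := Nat.cast_le.2 hΔΔ
  have hne : Nonempty (Fin n) := by
    rcases Function.ne_iff.1 hyne with ⟨i, -⟩; exact ⟨i⟩
  obtain ⟨u, hu⟩ := Finite.exists_max y
  have hyu : 0 < y u := by
    rcases Function.ne_iff.1 hyne with ⟨i, hi⟩
    exact lt_of_lt_of_le (lt_of_le_of_ne (hy0 i) (by simpa using (Ne.symm hi))) (hu i)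
  have h1a : 0 ≤ 1 - α := by linarith
  have hrow : ∀ i, lam * y i
      ≤ α * (G.degree i : ℝ) * y i + (1 - α) * ∑ j ∈ G.neighborFinset i, y j :=
    fun i => (hAy i).trans_eq (row_sum G α i y)
  by_cases hcase : G.degree u ≤ Δ₂
  · -- lam ≤ degree u ≤ Δ₂, and F(Δ₂) = (1-α)(Δ₂-Δ) ≤ 0
    refine ⟨(Δ₂ : ℝ), ?_, by nlinarith⟩
    have hsum : ∑ j ∈ G.neighborFinset u, y j ≤ (G.degree u : ℝ) * y u := by
      have := Finset.sum_le_card_nsmul (G.neighborFinset u) y (y u) (fun j _ => hu j)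
      simpa [nsmul_eq_mul] using this
    have h := hrow u
    have hd : (G.degree u : ℝ) ≤ (Δ₂ : ℝ) := Nat.cast_le.2 hcase
    have : lam * y u ≤ (Δ₂ : ℝ) * y u := by nlinarith
    exact le_of_mul_le_mul_right (by linarith) hyu
  · push_neg at hcase
    have hother : ∀ v : Fin n, v ≠ u → (G.degree v : ℝ) ≤ (Δ₂ : ℝ) := by
      intro v hv
      rcases hdeg2 u v (Ne.symm hv) with h | h
      · omega
      · exact_mod_cast Nat.cast_le.2 h
    obtain ⟨w0, hw0⟩ := (G.degree_pos_iff_exists_adj u).1 (hdegpos u)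
    obtain ⟨w, hwmem, hwmax'⟩ := Finset.exists_max_image ((univ : Finset (Fin n)).erase u) y
      ⟨w0, by simp [Ne.symm (G.ne_of_adj hw0)]⟩
    have hwu : w ≠ u := (Finset.mem_erase.1 hwmem).1
    have hwmax : ∀ v, v ≠ u → y v ≤ y w := fun v hv => hwmax' v (by simp [hv])
    have hyw0 : 0 ≤ y w := hy0 w
    have hywu : y w ≤ y u := hu w
    -- inequality 1
    have ineq1 : (lam - α * (Δ:ℝ)) * y u ≤ (1 - α) * (Δ:ℝ) * y w := by
      have hsum : ∑ j ∈ G.neighborFinset u, y j ≤ (G.degree u : ℝ) * y w := by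
        have := Finset.sum_le_card_nsmul (G.neighborFinset u) y (y w)
          (fun j hj => hwmax j (fun h => (G.notMem_neighborFinset_self u) (h ▸ hj)))
        simpa [nsmul_eq_mul] using this
      have h := hrow u
      have hdu : (G.degree u : ℝ) ≤ (Δ:ℝ) := Nat.cast_le.2 (hdeg u)
      have s1 : (1-α) * (∑ j ∈ G.neighborFinset u, y j) ≤ (1-α) * ((G.degree u : ℝ) * y w) :=
        mul_le_mul_of_nonneg_left hsum h1a
      have s2 : (1-α) * ((G.degree u : ℝ) * y w) ≤ (1-α) * ((Δ:ℝ) * y w) :=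
        mul_le_mul_of_nonneg_left (mul_le_mul_of_nonneg_right hdu hyw0) h1a
      have s3 : α * (G.degree u : ℝ) * y u ≤ α * (Δ:ℝ) * y u :=
        mul_le_mul_of_nonneg_right (mul_le_mul_of_nonneg_left hdu hα0) hyu.le
      nlinarith
    -- inequality 2
    have ineq2 : (lam - ((Δ₂:ℝ) - 1 + α)) * y w ≤ (1 - α) * y u := by
      have hdw1 : (1:ℝ) ≤ (G.degree w : ℝ) := by exact_mod_cast hdegpos w
      have hsum : ∑ j ∈ G.neighborFinset w, y j ≤ y u + ((G.degree w : ℝ) - 1) * y w := by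
        by_cases huw : u ∈ G.neighborFinset w
        · have hsplit := Finset.sum_erase_add (G.neighborFinset w) y huw
          have hbound : ∑ j ∈ (G.neighborFinset w).erase u, y j
              ≤ ((G.degree w : ℝ) - 1) * y w := by
            have hc := Finset.sum_le_card_nsmul ((G.neighborFinset w).erase u) y (y w)
              (fun j hj => hwmax j (Finset.mem_erase.1 hj).1)
            have hcard : ((G.neighborFinset w).erase u).card = G.degree w - 1 := by
              rw [Finset.card_erase_of_mem huw]; rfl
            rw [hcard] at hc
            have : ((G.degree w - 1 : ℕ) : ℝ) = (G.degree w : ℝ) - 1 := by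
              have := hdegpos w; push_cast [Nat.cast_sub this]; ring
            simpa [nsmul_eq_mul, this] using hc
          linarith
        · have hc := Finset.sum_le_card_nsmul (G.neighborFinset w) y (y w)
            (fun j hj => hwmax' j (by
              simp only [Finset.mem_erase, Finset.mem_univ, and_true]
              rintro rfl; exact huw hj))
          have : ∑ j ∈ G.neighborFinset w, y j ≤ (G.degree w : ℝ) * y w := by
            simpa [nsmul_eq_mul] using hc
          nlinarith
      have h := hrow w
      have hdw : (G.degree w : ℝ) ≤ (Δ₂:ℝ) := hother w hwu
      have s1 : (1-α) * (∑ j ∈ G.neighborFinset w, y j)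
          ≤ (1-α) * (y u + ((G.degree w : ℝ) - 1) * y w) := mul_le_mul_of_nonneg_left hsum h1a
      have s2 : α * (G.degree w : ℝ) * y w ≤ α * (Δ₂:ℝ) * y w :=
        mul_le_mul_of_nonneg_right (mul_le_mul_of_nonneg_left hdw hα0) hyw0
      have s3 : (1-α) * (((G.degree w : ℝ) - 1) * y w) ≤ (1-α) * (((Δ₂:ℝ) - 1) * y w) :=
        mul_le_mul_of_nonneg_left (mul_le_mul_of_nonneg_right (by linarith) hyw0) h1a
      nlinarith
    by_cases hc1 : lam ≤ α * (Δ:ℝ)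
    · refine ⟨α * (Δ:ℝ), hc1, ?_⟩
      have hΔ0 : (0:ℝ) ≤ (Δ:ℝ) := Nat.cast_nonneg _
      nlinarith [sq_nonneg (1 - α)]
    by_cases hc2 : lam ≤ (Δ₂:ℝ) - 1 + α
    · exact ⟨(Δ₂:ℝ), by linarith, by nlinarith⟩
    push_neg at hc1 hc2
    have hyw : 0 < y w := by
      by_contra h
      have hyw0' : y w = 0 := le_antisymm (by linarith) hyw0
      rw [hyw0'] at ineq1
      nlinarith
    refine ⟨lam, le_refl _, ?_⟩
    have hQw : 0 ≤ (lam - ((Δ₂:ℝ) - 1 + α)) * y w := by nlinarith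
    have hRw : 0 ≤ (1 - α) * (Δ:ℝ) * y w := by positivity
    have hmul := mul_le_mul ineq1 ineq2 hQw hRw
    have hPQ : (lam - α * (Δ:ℝ)) * (lam - ((Δ₂:ℝ) - 1 + α)) ≤ (1 - α) ^ 2 * (Δ:ℝ) := by
      have h2 : (lam - α * (Δ:ℝ)) * (lam - ((Δ₂:ℝ) - 1 + α)) * (y u * y w)
          ≤ (1 - α) ^ 2 * (Δ:ℝ) * (y u * y w) := by
        have e1 : (lam - α * (Δ:ℝ)) * (lam - ((Δ₂:ℝ) - 1 + α)) * (y u * y w)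
            = ((lam - α * (Δ:ℝ)) * y u) * ((lam - ((Δ₂:ℝ) - 1 + α)) * y w) := by ring
        have e2 : (1 - α) ^ 2 * (Δ:ℝ) * (y u * y w)
            = ((1 - α) * (Δ:ℝ) * y w) * ((1 - α) * y u) := by ring
        rw [e1, e2]; exact hmul
      exact le_of_mul_le_mul_right h2 (mul_pos hyu hyw)
    have e3 : lam ^ 2 - (α * ((Δ:ℝ) + 1) + (Δ₂:ℝ) - 1) * lam + (α * Δ * ((Δ₂:ℝ) + 1) - Δ)
        = (lam - α * (Δ:ℝ)) * (lam - ((Δ₂:ℝ) - 1 + α)) - (1 - α) ^ 2 * (Δ:ℝ) := by ring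
    linarith [e3.le, e3.ge, hPQ]

lemma root_bound (b c t : ℝ) (h : t ^ 2 - b * t + c ≤ 0) :
    t ≤ (b + Real.sqrt (b ^ 2 - 4 * c)) / 2 := by
  have h1 : (2 * t - b) ^ 2 ≤ b ^ 2 - 4 * c := by nlinarith
  have h2 : 2 * t - b ≤ Real.sqrt (b ^ 2 - 4 * c) := by
    calc 2 * t - b ≤ |2 * t - b| := le_abs_self _
      _ = Real.sqrt ((2 * t - b) ^ 2) := (Real.sqrt_sq_eq_abs _).symm
      _ ≤ _ := Real.sqrt_le_sqrt h1
  linarith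

set_option maxHeartbeats 1000000 in
theorem stmt2 {n : ℕ} (hn : 2 ≤ n) (G : SimpleGraph (Fin n)) [DecidableRel G.Adj]
    (hconn : G.Connected)
    (α : ℝ) (hα0 : 0 ≤ α) (hα1 : α ≤ 1)
    (e : Fin n ≃ Fin n) (he : Antitone (fun k => G.degree (e k)))
    (Δ Δ₂ : ℕ) (hΔ : Δ = G.degree (e ⟨0, by omega⟩)) (hΔ₂ : Δ₂ = G.degree (e ⟨1, by omega⟩))
    (hH : (Aalpha G α).IsHermitian) :
    (⨆ i, hH.eigenvalues i) ≤
      (α * ((Δ : ℝ) + 1) + (Δ₂ : ℝ) - 1 +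
        Real.sqrt (α ^ 2 * ((Δ : ℝ) + 1) ^ 2 + ((Δ₂ : ℝ) - 1) ^ 2 -
          2 * α * (((Δ : ℝ) - 1) * (Δ₂ : ℝ) + 3 * (Δ : ℝ) + 1) + 4 * (Δ : ℝ))) / 2 := by
  have hnon : Nonempty (Fin n) := ⟨⟨0, by omega⟩⟩
  -- degree facts
  have hΔΔ : Δ₂ ≤ Δ := by
    rw [hΔ, hΔ₂]
    exact he (show (⟨0, by omega⟩ : Fin n) ≤ ⟨1, by omega⟩ by simp [Fin.le_def])
  have hdeg : ∀ v, G.degree v ≤ Δ := by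
    intro v
    have h0 : (⟨0, by omega⟩ : Fin n) ≤ e.symm v := by simp [Fin.le_def]
    have := he h0
    simp only at this
    rw [Equiv.apply_symm_apply] at this
    simpa [hΔ] using this
  have hdeg2 : ∀ u v : Fin n, u ≠ v → G.degree u ≤ Δ₂ ∨ G.degree v ≤ Δ₂ := by
    intro u v huv
    by_cases h1 : 1 ≤ (e.symm u : ℕ)
    · left
      have h0 : (⟨1, by omega⟩ : Fin n) ≤ e.symm u := by simpa [Fin.le_def] using h1
      have := he h0
      simp only at this
      rw [Equiv.apply_symm_apply] at this
      simpa [hΔ₂] using this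
    · right
      have h1' : 1 ≤ (e.symm v : ℕ) := by
        by_contra h2
        apply huv
        have : e.symm u = e.symm v := by
          apply Fin.ext; omega
        simpa using congrArg e this
      have h0 : (⟨1, by omega⟩ : Fin n) ≤ e.symm v := by simpa [Fin.le_def] using h1'
      have := he h0
      simp only at this
      rw [Equiv.apply_symm_apply] at this
      simpa [hΔ₂] using this
  have hdegpos : ∀ v, 1 ≤ G.degree v := by
    intro v
    rw [Nat.one_le_iff_ne_zero, ← Nat.pos_iff_ne_zero, G.degree_pos_iff_exists_adj]
    obtain ⟨w, hw⟩ := Fintype.exists_ne_of_one_lt_card (by simp only [Fintype.card_fin]; omega) v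
    obtain ⟨p⟩ := hconn.preconnected v w
    exact ⟨p.getVert 1, p.adj_snd (SimpleGraph.Walk.not_nil_of_ne (Ne.symm hw))⟩
  -- the top eigenvalue and its eigenvector
  obtain ⟨i₀, hi₀⟩ := exists_eq_ciSup_of_finite (f := hH.eigenvalues)
  rw [← hi₀]
  set lam := hH.eigenvalues i₀ with hlam
  set x : Fin n → ℝ := ⇑(hH.eigenvectorBasis i₀) with hx
  have hAx : Aalpha G α *ᵥ x = lam • x := hH.mulVec_eigenvectorBasis i₀
  have hxne : x ≠ 0 := by
    intro h
    exact hH.eigenvectorBasis.orthonormal.ne_zero i₀ (by ext j; exact congrFun h j)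
  set y : Fin n → ℝ := fun i => |x i| with hy
  have hy0 : ∀ i, 0 ≤ y i := fun i => abs_nonneg _
  have hyne : y ≠ 0 := by
    intro h
    apply hxne
    funext j
    have := congrFun h j
    simpa [hy, abs_eq_zero] using this
  have hAnn : ∀ i j, 0 ≤ Aalpha G α i j := by
    intro i j
    simp only [Aalpha, Matrix.add_apply, Matrix.smul_apply, Matrix.diagonal_apply,
      SimpleGraph.adjMatrix_apply, smul_eq_mul]
    by_cases hij : i = j <;> by_cases hadj : G.Adj i j <;>
      simp [hij, hadj] <;> first | positivity | linarith
  have hAy : ∀ i, lam * y i ≤ ∑ j, Aalpha G α i j * y j := by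
    intro i
    have h1 : lam * y i ≤ |lam * x i| := by
      rw [abs_mul]
      exact mul_le_mul_of_nonneg_right (le_abs_self lam) (abs_nonneg _)
    have h2 : lam * x i = ∑ j, Aalpha G α i j * x j := by
      have := congrFun hAx i
      simpa [Matrix.mulVec, dotProduct] using this.symm
    rw [h2] at h1
    refine h1.trans ?_
    refine (Finset.abs_sum_le_sum_abs _ _).trans ?_
    refine Finset.sum_le_sum fun j _ => ?_
    rw [abs_mul, abs_of_nonneg (hAnn i j)]
  obtain ⟨t, hlt, hF⟩ := key G α hα0 hα1 Δ Δ₂ hΔΔ hdeg hdeg2 hdegpos lam y hy0 hyne hAy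
  have hb := root_bound (α * ((Δ:ℝ) + 1) + (Δ₂:ℝ) - 1) (α * Δ * ((Δ₂:ℝ) + 1) - Δ) t hF
  have hs : (α * ((Δ:ℝ) + 1) + (Δ₂:ℝ) - 1) ^ 2 - 4 * (α * Δ * ((Δ₂:ℝ) + 1) - Δ)
      = α ^ 2 * ((Δ : ℝ) + 1) ^ 2 + ((Δ₂ : ℝ) - 1) ^ 2 -
          2 * α * (((Δ : ℝ) - 1) * (Δ₂ : ℝ) + 3 * (Δ : ℝ) + 1) + 4 * (Δ : ℝ) := by ring
  rw [hs] at hb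
  linarith

-- #print axioms check
end

section
/- Let G be a graph with n vertices, m edges, first Zagreb index Z₁ = Σᵢ dᵢ², and α ∈ [0,1]. Then λ₁(A_α(G)) ≤ (2αm + sqrt((n-1)(α²(-4m² + 2mn + nZ₁) - 4αmn + 2mn)))/n. -/
open Matrix SimpleGraph Finset

lemma herm_trace' {N : ℕ} (A : Matrix (Fin N) (Fin N) ℝ) (hA : A.IsHermitian) :
    A.trace = ∑ i, hA.eigenvalues i := by
  conv_lhs => rw [hA.spectral_theorem, Unitary.conjStarAlgAut_apply]
  rw [Matrix.trace_mul_cycle]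
  rw [(Matrix.mem_unitaryGroup_iff').mp (hA.eigenvectorUnitary).2]
  simp [Matrix.trace_diagonal]

lemma herm_trace_sq' {N : ℕ} (A : Matrix (Fin N) (Fin N) ℝ) (hA : A.IsHermitian) :
    (A * A).trace = ∑ i, hA.eigenvalues i ^ 2 := by
  conv_lhs => rw [hA.spectral_theorem, Unitary.conjStarAlgAut_apply]
  have hU : (star (hA.eigenvectorUnitary : Matrix (Fin N) (Fin N) ℝ)) * hA.eigenvectorUnitary = 1 :=
    (Matrix.mem_unitaryGroup_iff').mp (hA.eigenvectorUnitary).2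
  rw [show ∀ (U D V : Matrix (Fin N) (Fin N) ℝ),
      (U * D * V) * (U * D * V) = U * (D * (V * U) * D) * V by intros; noncomm_ring]
  rw [hU, Matrix.trace_mul_cycle, ← Matrix.mul_assoc, hU]
  simp [Matrix.trace_diagonal, Matrix.diagonal_mul_diagonal, sq]

lemma keylem {N : ℕ} (hN : 0 < N) (f : Fin N → ℝ) (j : Fin N) :
    f j ≤ ((∑ i, f i) + Real.sqrt ((N - 1 : ℝ) * (N * ∑ i, f i ^ 2 - (∑ i, f i) ^ 2))) / N := by
  have hN0 : (0:ℝ) < N := by exact_mod_cast hN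
  set t : ℝ := ∑ i, f i with ht
  set S : ℝ := ∑ i, f i ^ 2 with hS
  set g : Fin N → ℝ := fun i => f i - t / N with hg
  have hgsum : ∑ i, g i = 0 := by
    simp only [hg, Finset.sum_sub_distrib, Finset.sum_const, Finset.card_univ, Fintype.card_fin,
      nsmul_eq_mul, ← ht]
    field_simp
    ring
  set Q : ℝ := ∑ i, g i ^ 2 with hQ
  have hQ0 : 0 ≤ Q := Finset.sum_nonneg fun i _ => sq_nonneg _
  have hQeq : Q = S - t ^ 2 / N := by
    rw [hQ, Finset.sum_congr rfl
      (fun i _ => by ring :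
        ∀ i ∈ Finset.univ, g i ^ 2 = f i ^ 2 - (2 * (t / N)) * f i + (t / N) ^ 2)]
    rw [Finset.sum_add_distrib, Finset.sum_sub_distrib, ← Finset.mul_sum, ← hS, ← ht,
      Finset.sum_const, Finset.card_univ, Fintype.card_fin, nsmul_eq_mul]
    field_simp
    ring
  have hcs : (∑ i ∈ Finset.univ.erase j, g i) ^ 2 ≤
      ((Finset.univ.erase j).card : ℝ) * ∑ i ∈ Finset.univ.erase j, g i ^ 2 := by
    exact_mod_cast sq_sum_le_card_mul_sum_sq (s := Finset.univ.erase j) (f := g)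
  have hcard : ((Finset.univ.erase j).card : ℝ) = (N : ℝ) - 1 := by
    rw [Finset.card_erase_of_mem (Finset.mem_univ j)]
    simp only [Finset.card_univ, Fintype.card_fin]
    have : 1 ≤ N := hN
    push_cast [Nat.cast_sub this]
    ring
  have hsg : ∑ i ∈ Finset.univ.erase j, g i = -g j := by
    have h2 : g j + ∑ i ∈ Finset.univ.erase j, g i = ∑ i, g i :=
      Finset.add_sum_erase Finset.univ g (Finset.mem_univ j)
    rw [hgsum] at h2; linarith
  have hsq : ∑ i ∈ Finset.univ.erase j, g i ^ 2 = Q - g j ^ 2 := by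
    have h2 : g j ^ 2 + ∑ i ∈ Finset.univ.erase j, g i ^ 2 = ∑ i, g i ^ 2 :=
      Finset.add_sum_erase Finset.univ (fun i => g i ^ 2) (Finset.mem_univ j)
    rw [← hQ] at h2; linarith
  rw [hsg, hsq, hcard, neg_sq] at hcs
  have hkey : (N:ℝ) * g j ^ 2 ≤ ((N:ℝ) - 1) * Q := by nlinarith [sq_nonneg (g j)]
  have hN1Q : 0 ≤ ((N:ℝ) - 1) * Q := le_trans (by positivity) hkey
  have hgj : g j ≤ Real.sqrt (((N:ℝ) - 1) * Q / N) := by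
    calc g j ≤ |g j| := le_abs_self _
    _ = Real.sqrt (g j ^ 2) := (Real.sqrt_sq_eq_abs _).symm
    _ ≤ Real.sqrt (((N:ℝ) - 1) * Q / N) := by
        apply Real.sqrt_le_sqrt
        rw [le_div_iff₀ hN0]
        linarith [hkey]
  have hNQ : (N:ℝ) * Q = N * S - t ^ 2 := by rw [hQeq]; field_simp
  have hnonneg : 0 ≤ ((N:ℝ) - 1) * ((N:ℝ) * S - t ^ 2) := by
    rw [← hNQ]
    calc (0:ℝ) ≤ (N:ℝ) * (((N:ℝ) - 1) * Q) := by positivity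
    _ = ((N:ℝ) - 1) * ((N:ℝ) * Q) := by ring
  have hrw : Real.sqrt (((N:ℝ) - 1) * Q / N) =
      Real.sqrt (((N:ℝ) - 1) * ((N:ℝ) * S - t ^ 2)) / N := by
    rw [show ((N:ℝ) - 1) * Q / N = ((N:ℝ) - 1) * ((N:ℝ) * S - t ^ 2) / (N:ℝ) ^ 2 by
      rw [← hNQ]; field_simp]
    rw [Real.sqrt_div hnonneg, Real.sqrt_sq hN0.le]
  have hgj2 : g j ≤ Real.sqrt (((N:ℝ) - 1) * ((N:ℝ) * S - t ^ 2)) / N := hrw ▸ hgj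
  have hfj : f j = g j + t / N := by simp [hg]
  rw [hfj, add_div]
  linarith

lemma Aalpha_trace {n : ℕ} (G : SimpleGraph (Fin n)) [DecidableRel G.Adj] (α : ℝ) :
    (Aalpha G α).trace = α * (2 * G.edgeFinset.card) := by
  simp only [Aalpha, Matrix.trace_add, Matrix.trace_smul, Matrix.trace_diagonal,
    trace_adjMatrix, smul_zero, add_zero, smul_eq_mul]
  rw [show (∑ i : Fin n, ((G.degree i : ℕ) : ℝ)) = ((∑ i : Fin n, G.degree i : ℕ) : ℝ) by
    push_cast; ring, G.sum_degrees_eq_twice_card_edges]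
  push_cast
  ring

lemma Aalpha_trace_sq {n : ℕ} (G : SimpleGraph (Fin n)) [DecidableRel G.Adj] (α : ℝ) :
    (Aalpha G α * Aalpha G α).trace =
      α ^ 2 * (∑ i, (G.degree i : ℝ) ^ 2) + (1 - α) ^ 2 * (2 * G.edgeFinset.card) := by
  set D : Matrix (Fin n) (Fin n) ℝ := Matrix.diagonal (fun i => (G.degree i : ℝ)) with hD
  set A : Matrix (Fin n) (Fin n) ℝ := G.adjMatrix ℝ with hA
  have hexp : Aalpha G α * Aalpha G α =
      (α * α) • (D * D) + (α * (1 - α)) • (D * A) + ((1 - α) * α) • (A * D)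
        + ((1 - α) * (1 - α)) • (A * A) := by
    simp only [Aalpha, ← hD, ← hA, add_mul, mul_add, smul_mul_assoc, mul_smul_comm, smul_smul]
    module
  rw [hexp]
  have hDD : (D * D).trace = ∑ i, (G.degree i : ℝ) ^ 2 := by
    simp [hD, Matrix.diagonal_mul_diagonal, Matrix.trace_diagonal, sq]
  have hDA : (D * A).trace = 0 := by
    simp only [Matrix.trace, Matrix.diag, hD, hA, Matrix.mul_apply]
    refine Finset.sum_eq_zero fun x _ => Finset.sum_eq_zero fun y _ => ?_
    by_cases h : x = y
    · subst h; simp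
    · simp [Matrix.diagonal_apply_ne _ h]
  have hAD : (A * D).trace = 0 := by
    simp only [Matrix.trace, Matrix.diag, hD, hA, Matrix.mul_apply]
    refine Finset.sum_eq_zero fun x _ => Finset.sum_eq_zero fun y _ => ?_
    by_cases h : x = y
    · subst h; simp
    · simp [Matrix.diagonal_apply_ne _ (Ne.symm h)]
  have hAA : (A * A).trace = (2 * G.edgeFinset.card : ℝ) := by
    simp only [Matrix.trace, Matrix.diag, hA, adjMatrix_mul_self_apply_self]
    rw [show (∑ i : Fin n, ((G.degree i : ℕ) : ℝ)) = ((∑ i : Fin n, G.degree i : ℕ) : ℝ) by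
      push_cast; ring]
    rw [G.sum_degrees_eq_twice_card_edges]
    push_cast; ring
  simp only [Matrix.trace_add, Matrix.trace_smul, hDD, hDA, hAD, hAA, smul_eq_mul, smul_zero]
  ring

theorem stmt3 {n : ℕ} (hn : 0 < n) (G : SimpleGraph (Fin n)) [DecidableRel G.Adj]
    (α : ℝ) (hα0 : 0 ≤ α) (hα1 : α ≤ 1)
    (m : ℕ) (hm : m = G.edgeFinset.card)
    (Z₁ : ℝ) (hZ : Z₁ = ∑ i : Fin n, (G.degree i : ℝ) ^ 2)
    (hH : (Aalpha G α).IsHermitian) :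
    (⨆ i, hH.eigenvalues i) ≤
      (2 * α * (m : ℝ) +
        Real.sqrt ((n - 1 : ℝ) *
          (α ^ 2 * (-4 * (m : ℝ) ^ 2 + 2 * m * n + n * Z₁) - 4 * α * m * n + 2 * m * n))) /
        (n : ℝ) := by
  haveI : Nonempty (Fin n) := Fin.pos_iff_nonempty.mp hn
  have h1 : ∑ i, hH.eigenvalues i = 2 * α * m := by
    rw [← herm_trace' _ hH, Aalpha_trace, ← hm]; ring
  have h2 : ∑ i, hH.eigenvalues i ^ 2 = α ^ 2 * Z₁ + (1 - α) ^ 2 * (2 * m) := by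
    rw [← herm_trace_sq' _ hH, Aalpha_trace_sq, ← hm, hZ]
  apply ciSup_le
  intro j
  have hb := keylem hn hH.eigenvalues j
  rw [h1, h2] at hb
  rw [show (n : ℝ) * (α ^ 2 * Z₁ + (1 - α) ^ 2 * (2 * m)) - (2 * α * m) ^ 2 =
      α ^ 2 * (-4 * (m : ℝ) ^ 2 + 2 * m * n + n * Z₁) - 4 * α * m * n + 2 * m * n by ring] at hb
  exact hb
end

section
/- For the complete graph Kₙ with n ≥ 1, equality holds in the bound λ₁(A_α(G)) ≤ (2αm + sqrt((n-1)(α²(-4m² + 2mn + nZ₁) - 4αmn + 2mn)))/n; that is, for G = Kₙ with m = n(n-1)/2 and Z₁ = n(n-1)², the right-hand side equals n-1 = λ₁(A_α(Kₙ)). -/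
open Matrix SimpleGraph Finset

theorem stmt4 {n : ℕ} (hn : 1 ≤ n)
    (α : ℝ) (hα0 : 0 ≤ α) (hα1 : α ≤ 1)
    (m Z₁ : ℝ) (hm : m = (n : ℝ) * ((n : ℝ) - 1) / 2) (hZ : Z₁ = (n : ℝ) * ((n : ℝ) - 1) ^ 2)
    (hH : (Aalpha (⊤ : SimpleGraph (Fin n)) α).IsHermitian) :
    (2 * α * m +
        Real.sqrt ((n - 1 : ℝ) *
          (α ^ 2 * (-4 * m ^ 2 + 2 * m * n + n * Z₁) - 4 * α * m * n + 2 * m * n))) /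
        (n : ℝ) = (n : ℝ) - 1 ∧
      (⨆ i, hH.eigenvalues i) = (n : ℝ) - 1 := by
  have hn1 : (1 : ℝ) ≤ (n : ℝ) := by exact_mod_cast hn
  have hn0 : (n : ℝ) ≠ 0 := by linarith
  haveI : Nonempty (Fin n) := ⟨⟨0, hn⟩⟩
  constructor
  · have hin : (n - 1 : ℝ) *
        (α ^ 2 * (-4 * m ^ 2 + 2 * m * n + n * Z₁) - 4 * α * m * n + 2 * m * n)
        = ((n : ℝ) * ((n : ℝ) - 1) * (1 - α)) ^ 2 := by
      subst hm hZ; ring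
    rw [hin, Real.sqrt_sq (by nlinarith)]
    subst hm
    field_simp
    ring
  · -- entries of the matrix
    have hent : ∀ i j, Aalpha (⊤ : SimpleGraph (Fin n)) α i j
        = if i = j then α * ((n : ℝ) - 1) else (1 - α) := by
      intro i j
      by_cases h : i = j
      · subst h
        simp [Aalpha, Matrix.diagonal_apply_eq, Nat.cast_sub hn]
      · simp [Aalpha, Matrix.diagonal_apply_ne _ h, h, Ne.symm h]
    -- row-sum formula
    have hrow : ∀ (v : Fin n → ℝ) (i : Fin n),
        (∑ j, (if i = j then α * ((n : ℝ) - 1) else (1 - α)) * v j)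
          = (α * (n : ℝ) - 1) * v i + (1 - α) * ∑ j, v j := by
      intro v i
      have h1 : ∀ j, (if i = j then α * ((n : ℝ) - 1) else (1 - α)) * v j
          = (if i = j then (α * (n : ℝ) - 1) * v j else 0) + (1 - α) * v j := by
        intro j; split <;> ring
      rw [Finset.sum_congr rfl fun j _ => h1 j, Finset.sum_add_distrib,
        Finset.sum_ite_eq, ← Finset.mul_sum]
      simp
    -- eigenvalue dichotomy
    have key : ∀ i, hH.eigenvalues i = (n : ℝ) - 1 ∨ hH.eigenvalues i = α * n - 1 := by
      intro i
      set lam := hH.eigenvalues i with hlam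
      have hv := hH.mulVec_eigenvectorBasis i
      set v : Fin n → ℝ := ⇑(hH.eigenvectorBasis i) with hvdef
      have hvne : v ≠ 0 := fun h0 => hH.eigenvectorBasis.orthonormal.ne_zero i
        (by ext k; simpa [hvdef] using congrFun h0 k)
      have hcomp : ∀ k, (lam - (α * n - 1)) * v k = (1 - α) * ∑ j, v j := by
        intro k
        have h2 := congrFun hv k
        have h3 : (Aalpha (⊤ : SimpleGraph (Fin n)) α *ᵥ v) k
            = ∑ j, (if k = j then α * ((n : ℝ) - 1) else (1 - α)) * v j := by
          simp only [Matrix.mulVec, dotProduct]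
          exact Finset.sum_congr rfl fun j _ => congrArg (· * v j) (hent k j)
        rw [h3, hrow] at h2
        simp only [Pi.smul_apply, smul_eq_mul] at h2
        linarith [h2]
      by_cases hcase : lam = α * n - 1
      · right; exact hcase
      · left
        set S := ∑ j, v j with hS
        have hSne : S ≠ 0 := by
          intro h0
          apply hvne
          funext k
          have h4 := hcomp k
          rw [h0, mul_zero] at h4
          have := mul_eq_zero.mp h4
          rcases this with h | h
          · exact absurd (by linarith : lam = α * n - 1) hcase
          · exact h
        have hsum : (lam - (α * n - 1)) * S = ((n : ℝ) * (1 - α)) * S := by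
          have h5 : ∑ k, (lam - (α * n - 1)) * v k = ∑ k : Fin n, (1 - α) * S :=
            Finset.sum_congr rfl fun k _ => hcomp k
          rw [← Finset.mul_sum, ← hS, Finset.sum_const, Finset.card_univ,
            Fintype.card_fin, nsmul_eq_mul] at h5
          rw [h5]; ring
        have h6 : lam - (α * n - 1) = (n : ℝ) * (1 - α) := mul_right_cancel₀ hSne hsum
        have : lam = (n : ℝ) - 1 := by nlinarith [h6]
        exact this
      -- trace
    have htr : ∑ i, hH.eigenvalues i = α * n * ((n : ℝ) - 1) := by
      have h := hH.spectral_theorem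
      have htr1 : Matrix.trace (Aalpha (⊤ : SimpleGraph (Fin n)) α)
          = ∑ i, hH.eigenvalues i := by
        rw [congrArg Matrix.trace h, Unitary.conjStarAlgAut_apply, Matrix.trace_mul_comm, ← Matrix.mul_assoc]
        rw [Unitary.coe_star_mul_self, Matrix.one_mul, Matrix.trace_diagonal]
        simp
      have htr2 : Matrix.trace (Aalpha (⊤ : SimpleGraph (Fin n)) α)
          = α * n * ((n : ℝ) - 1) := by
        rw [Matrix.trace]
        have : ∀ i : Fin n, Matrix.diag (Aalpha (⊤ : SimpleGraph (Fin n)) α) i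
            = α * ((n : ℝ) - 1) := fun i => by
          rw [Matrix.diag_apply, hent]; simp
        rw [Finset.sum_congr rfl fun i _ => this i, Finset.sum_const, Finset.card_univ,
          Fintype.card_fin, nsmul_eq_mul]
        ring
      rw [← htr1, htr2]
    -- existence of eigenvalue n - 1
    have hex : ∃ i, hH.eigenvalues i = (n : ℝ) - 1 := by
      by_contra hno
      push_neg at hno
      have hall : ∀ i, hH.eigenvalues i = α * n - 1 :=
        fun i => (key i).resolve_left (hno i)
      have h7 : ∑ i, hH.eigenvalues i = (n : ℝ) * (α * n - 1) := by
        rw [Finset.sum_congr rfl fun i _ => hall i, Finset.sum_const, Finset.card_univ,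
          Fintype.card_fin, nsmul_eq_mul]
      rw [htr] at h7
      have hα : α = 1 := by
        have h8 : (n : ℝ) * (α - 1) = 0 := by nlinarith [h7]
        rcases mul_eq_zero.mp h8 with h | h
        · exact absurd h hn0
        · linarith
      exact hno ⟨0, hn⟩ (by rw [hall ⟨0, hn⟩, hα]; ring)
    obtain ⟨i0, hi0⟩ := hex
    have hub : ∀ i, hH.eigenvalues i ≤ (n : ℝ) - 1 := by
      intro i
      rcases key i with h | h
      · exact le_of_eq h
      · rw [h]; nlinarith
    apply le_antisymm
    · exact ciSup_le hub
    · rw [← hi0]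
      exact le_ciSup (Set.Finite.bddAbove (Set.finite_range _)) i0
end

section
/- Let G be a graph on n vertices with maximum degree Δ, clique number ω ≥ 1, and α ∈ [0,1]. Then λ₁(A_α(G)) ≤ αΔ + (1-α)(1 - 1/ω)n. -/
open Matrix SimpleGraph Finset

lemma quad_shift {n : ℕ} (A : Matrix (Fin n) (Fin n) ℝ) (hA : Aᵀ = A) (y : Fin n → ℝ)
    (i₀ j₀ : Fin n)
    (h0 : A i₀ i₀ = 0) (h1 : A j₀ j₀ = 0) (h2 : A i₀ j₀ = 0) (h3 : A j₀ i₀ = 0) (t : ℝ) :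
    (y + t • (Pi.single i₀ 1 - Pi.single j₀ 1)) ⬝ᵥ
      (A *ᵥ (y + t • (Pi.single i₀ 1 - Pi.single j₀ 1)))
      = y ⬝ᵥ (A *ᵥ y) + 2 * t * ((A *ᵥ y) i₀ - (A *ᵥ y) j₀) := by
  have hsym : ∀ u v : Fin n → ℝ, u ⬝ᵥ (A *ᵥ v) = v ⬝ᵥ (A *ᵥ u) := by
    intro u v
    rw [Matrix.dotProduct_mulVec, ← Matrix.mulVec_transpose, hA, dotProduct_comm]
  set d : Fin n → ℝ := Pi.single i₀ 1 - Pi.single j₀ 1 with hd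
  have hAd : A *ᵥ d = (fun i => A i i₀ - A i j₀) := by
    funext i
    simp [hd, Matrix.mulVec_sub, Matrix.mulVec_single]
  have h5 : d ⬝ᵥ (A *ᵥ y) = (A *ᵥ y) i₀ - (A *ᵥ y) j₀ := by
    simp [hd, sub_dotProduct, single_dotProduct]
  have h6 : d ⬝ᵥ (A *ᵥ d) = 0 := by
    rw [hAd]
    simp [hd, sub_dotProduct, single_dotProduct, h0, h1, h2, h3]
  rw [Matrix.mulVec_add, Matrix.mulVec_smul, add_dotProduct, dotProduct_add,
    dotProduct_add, smul_dotProduct, dotProduct_smul,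
    dotProduct_smul,
    hsym y d, h5, smul_dotProduct, h6]
  simp [smul_eq_mul]
  ring

lemma shift_step {n : ℕ} (G : SimpleGraph (Fin n)) [DecidableRel G.Adj]
    (y : Fin n → ℝ) (hy : ∀ i, 0 ≤ y i) (i₀ j₀ : Fin n) (hne : i₀ ≠ j₀)
    (hnadj : ¬ G.Adj i₀ j₀)
    (hr : (G.adjMatrix ℝ *ᵥ y) j₀ ≤ (G.adjMatrix ℝ *ᵥ y) i₀) :
    ∃ z : Fin n → ℝ, (∀ i, 0 ≤ z i) ∧ z j₀ = 0 ∧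
      (∀ i, i ≠ i₀ → z i ≠ 0 → y i ≠ 0) ∧
      (∑ i, z i = ∑ i, y i) ∧
      y ⬝ᵥ (G.adjMatrix ℝ *ᵥ y) ≤ z ⬝ᵥ (G.adjMatrix ℝ *ᵥ z) := by
  set t := y j₀ with ht
  set d : Fin n → ℝ := Pi.single i₀ 1 - Pi.single j₀ 1 with hd
  refine ⟨y + t • d, ?_, ?_, ?_, ?_, ?_⟩
  · intro i
    by_cases h1 : i = i₀
    · subst h1
      have h3 := hy i; have h4 := hy j₀
      simp [hd, ht, Pi.single_apply, hne]
      nlinarith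
    · by_cases h2 : i = j₀
      · subst h2; simp [hd, Pi.single_apply, Ne.symm hne, ht]
      · simp [hd, Pi.single_apply, h1, h2, hy i]
  · simp [hd, Pi.single_apply, Ne.symm hne, ht]
  · intro i h1 h2
    by_cases h3 : i = j₀
    · subst h3; simp [hd, Pi.single_apply, Ne.symm hne, ht] at h2
    · simpa [hd, Pi.single_apply, h1, h3] using h2
  · simp [hd, Finset.sum_add_distrib, Finset.smul_sum, Pi.single_apply,
      Finset.sum_sub_distrib, smul_eq_mul, mul_sub]
  · rw [quad_shift (G.adjMatrix ℝ) (by simp) y i₀ j₀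
      (by simp) (by simp) (by simp [hnadj]) (by simp; exact fun h => hnadj h.symm) t]
    nlinarith [hy j₀, hr]

lemma MS_step {n : ℕ} (G : SimpleGraph (Fin n)) [DecidableRel G.Adj]
    (ω : ℕ) (hω1 : 1 ≤ ω) (hcl : G.cliqueNum ≤ ω)
    (k : ℕ)
    (ih : ∀ (y : Fin n → ℝ), (∀ i, 0 ≤ y i) →
      (Finset.univ.filter (fun i => y i ≠ 0)).card ≤ k →
      y ⬝ᵥ (G.adjMatrix ℝ *ᵥ y) ≤ (1 - 1/(ω : ℝ)) * (∑ i, y i)^2)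
    (y : Fin n → ℝ) (hy : ∀ i, 0 ≤ y i)
    (hcard : (Finset.univ.filter (fun i => y i ≠ 0)).card ≤ k + 1) :
    y ⬝ᵥ (G.adjMatrix ℝ *ᵥ y) ≤ (1 - 1/(ω : ℝ)) * (∑ i, y i)^2 := by
  set s := Finset.univ.filter (fun i => y i ≠ 0) with hs
  have hmem : ∀ i, i ∈ s ↔ y i ≠ 0 := by intro i; simp [hs]
  by_cases hclq : G.IsClique ↑s
  · -- clique case
    rcases Finset.eq_empty_or_nonempty s with he | hne
    · have hy0 : y = 0 := by
        funext i
        by_contra h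
        exact Finset.notMem_empty i (he ▸ (hmem i).mpr h)
      subst hy0
      simp
    · set S := ∑ i, y i with hS
      set T := ∑ i, y i ^ 2 with hT
      have hQ : y ⬝ᵥ (G.adjMatrix ℝ *ᵥ y) ≤ S ^ 2 - T := by
        have step1 : y ⬝ᵥ (G.adjMatrix ℝ *ᵥ y)
            ≤ ∑ i, ∑ j, (if i = j then 0 else y i * y j) := by
          simp only [dotProduct, Matrix.mulVec, Finset.mul_sum]
          apply Finset.sum_le_sum
          intro i _
          apply Finset.sum_le_sum
          intro j _
          by_cases h : i = j
          · subst h; simp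
          · simp only [if_neg h, SimpleGraph.adjMatrix_apply]
            by_cases hadj : G.Adj i j
            · simp [hadj]
            · simp [hadj]; exact mul_nonneg (hy i) (hy j)
        have step2 : ∑ i, ∑ j, (if i = j then 0 else y i * y j) = S ^ 2 - T := by
          have key : ∀ i : Fin n, ∑ j, (if i = j then 0 else y i * y j)
              = (∑ j, y i * y j) - y i * y i := by
            intro i
            have h2 : ∀ j : Fin n, (if i = j then 0 else y i * y j)
                = y i * y j - (if i = j then y i * y j else 0) := by
              intro j; split <;> simp
            simp only [h2, Finset.sum_sub_distrib, Finset.sum_ite_eq, Finset.mem_univ,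
              if_true]
          simp only [key, Finset.sum_sub_distrib, ← Finset.mul_sum]
          rw [hS, hT, sq, Finset.sum_mul]
          congr 1
          apply Finset.sum_congr rfl
          intro i _; ring
        linarith [step1, step2.le, step2.ge]
      have hSs : S = ∑ i ∈ s, y i := by
        rw [hS, hs]; exact (Finset.sum_filter_ne_zero Finset.univ).symm
      have hTs : T = ∑ i ∈ s, y i ^ 2 := by
        rw [hT]
        refine (Finset.sum_subset (Finset.subset_univ s) ?_).symm
        intro i _ hi
        have : y i = 0 := by by_contra h; exact hi ((hmem i).mpr h)
        simp [this]
      have hCS : S ^ 2 ≤ (s.card : ℝ) * T := by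
        rw [hSs, hTs]
        exact_mod_cast sq_sum_le_card_mul_sum_sq (s := s) (f := y)
      have hcω : (s.card : ℝ) ≤ (ω : ℝ) := by
        exact_mod_cast le_trans hclq.card_le_cliqueNum hcl
      have hc1 : (1 : ℝ) ≤ (s.card : ℝ) := by
        exact_mod_cast Finset.card_pos.mpr hne
      have hω0 : (0 : ℝ) < (ω : ℝ) := by exact_mod_cast hω1
      have hT0 : (0 : ℝ) ≤ T := by rw [hT]; positivity
      have h1 : S ^ 2 / (ω : ℝ) ≤ T := by
        have h2 : S ^ 2 / (s.card : ℝ) ≤ T := by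
          rw [div_le_iff₀ (by linarith)]
          linarith [hCS]
        have h3 : S ^ 2 / (ω : ℝ) ≤ S ^ 2 / (s.card : ℝ) := by
          gcongr
        linarith
      have h4 : (1 - 1/(ω : ℝ)) * S ^ 2 = S ^ 2 - S ^ 2 / (ω : ℝ) := by ring
      linarith
  · -- non-clique case
    have key : ∀ i₀ j₀ : Fin n, i₀ ∈ s → j₀ ∈ s → i₀ ≠ j₀ → ¬ G.Adj i₀ j₀ →
        (G.adjMatrix ℝ *ᵥ y) j₀ ≤ (G.adjMatrix ℝ *ᵥ y) i₀ →
        y ⬝ᵥ (G.adjMatrix ℝ *ᵥ y) ≤ (1 - 1/(ω : ℝ)) * (∑ i, y i)^2 := by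
      intro i₀ j₀ hi₀ hj₀ hne hnadj hr
      obtain ⟨z, hz0, hzj, hzy, hzsum, hQ⟩ := shift_step G y hy i₀ j₀ hne hnadj hr
      have hsub : Finset.univ.filter (fun i => z i ≠ 0) ⊆ s.erase j₀ := by
        intro i hi
        simp only [Finset.mem_filter, Finset.mem_univ, true_and] at hi
        rw [Finset.mem_erase]
        constructor
        · intro h; exact hi (h ▸ hzj)
        · by_cases h : i = i₀
          · exact h ▸ hi₀
          · exact (hmem i).mpr (hzy i h hi)
      have hzcard : (Finset.univ.filter (fun i => z i ≠ 0)).card ≤ k := by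
        have h1 := Finset.card_le_card hsub
        have h2 := Finset.card_erase_of_mem hj₀
        have h3 : 1 ≤ s.card := Finset.card_pos.mpr ⟨j₀, hj₀⟩
        omega
      calc y ⬝ᵥ (G.adjMatrix ℝ *ᵥ y) ≤ z ⬝ᵥ (G.adjMatrix ℝ *ᵥ z) := hQ
        _ ≤ (1 - 1/(ω : ℝ)) * (∑ i, z i)^2 := ih z hz0 hzcard
        _ = (1 - 1/(ω : ℝ)) * (∑ i, y i)^2 := by rw [hzsum]
    obtain ⟨i₀, hi₀, j₀, hj₀, hne, hnadj⟩ :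
        ∃ i ∈ s, ∃ j ∈ s, i ≠ j ∧ ¬ G.Adj i j := by
      by_contra h
      push_neg at h
      exact hclq fun i hi j hj hij => h i (Finset.mem_coe.mp hi) j (Finset.mem_coe.mp hj) hij
    rcases le_total ((G.adjMatrix ℝ *ᵥ y) j₀) ((G.adjMatrix ℝ *ᵥ y) i₀) with h | h
    · exact key i₀ j₀ hi₀ hj₀ hne hnadj h
    · exact key j₀ i₀ hj₀ hi₀ hne.symm (fun ha => hnadj ha.symm) h

lemma MS {n : ℕ} (G : SimpleGraph (Fin n)) [DecidableRel G.Adj]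
    (ω : ℕ) (hω1 : 1 ≤ ω) (hcl : G.cliqueNum ≤ ω) :
    ∀ (k : ℕ) (y : Fin n → ℝ), (∀ i, 0 ≤ y i) →
      (Finset.univ.filter (fun i => y i ≠ 0)).card ≤ k →
      y ⬝ᵥ (G.adjMatrix ℝ *ᵥ y) ≤ (1 - 1/(ω : ℝ)) * (∑ i, y i)^2 := by
  intro k
  induction k with
  | zero =>
    intro y hy hcard
    have hy0 : y = 0 := by
      funext i
      simp only [Pi.zero_apply]
      by_contra h
      have h1 : i ∈ Finset.univ.filter (fun i => y i ≠ 0) := by simp [h]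
      have h2 := Finset.card_pos.mpr ⟨i, h1⟩
      omega
    subst hy0
    simp
  | succ k ih => exact MS_step G ω hω1 hcl k ih

theorem stmt5 {n : ℕ} (G : SimpleGraph (Fin n)) [DecidableRel G.Adj]
    (α : ℝ) (hα0 : 0 ≤ α) (hα1 : α ≤ 1)
    (Δ ω : ℕ) (hΔ : Δ = G.maxDegree) (hω : ω = G.cliqueNum) (hω1 : 1 ≤ ω)
    (hH : (Aalpha G α).IsHermitian) :
    (⨆ i, hH.eigenvalues i) ≤ α * (Δ : ℝ) + (1 - α) * (1 - 1 / (ω : ℝ)) * (n : ℝ) := by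
  rcases Nat.eq_zero_or_pos n with hn | hn
  · subst hn
    rw [show (⨆ i : Fin 0, hH.eigenvalues i) = 0 from Real.iSup_of_isEmpty _]
    have : (0:ℝ) ≤ α * (Δ : ℝ) := by positivity
    simpa using this
  have hne : Nonempty (Fin n) := ⟨⟨0, hn⟩⟩
  apply ciSup_le
  intro i
  set v : Fin n → ℝ := ⇑(hH.eigenvectorBasis i) with hv
  have hnorm : ∑ j, v j * v j = 1 := by
    have h1 := (hH.eigenvectorBasis.orthonormal).1 i
    have h2 : @inner ℝ _ _ (hH.eigenvectorBasis i) (hH.eigenvectorBasis i) = (1:ℝ) := by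
      rw [real_inner_self_eq_norm_sq, h1]; norm_num
    rw [← h2, PiLp.inner_apply]
    simp [hv, RCLike.inner_apply, conj_trivial, sq]
  have heig : v ⬝ᵥ (Aalpha G α *ᵥ v) = hH.eigenvalues i := by
    rw [hH.mulVec_eigenvectorBasis i]
    simp only [dotProduct_smul, smul_eq_mul, ← hv]
    rw [show v ⬝ᵥ v = ∑ j, v j * v j from rfl, hnorm, mul_one]
  rw [← heig]
  have hexpand : v ⬝ᵥ (Aalpha G α *ᵥ v)
      = α * (∑ j, (G.degree j : ℝ) * (v j * v j))
        + (1 - α) * (v ⬝ᵥ (G.adjMatrix ℝ *ᵥ v)) := by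
    rw [Aalpha, Matrix.add_mulVec, Matrix.smul_mulVec, Matrix.smul_mulVec,
      dotProduct_add, dotProduct_smul, dotProduct_smul]
    congr 1
    rw [smul_eq_mul]
    congr 1
    rw [dotProduct]
    apply Finset.sum_congr rfl
    intro j _
    rw [Matrix.mulVec_diagonal]
    ring
  rw [hexpand]
  have hterm1 : ∑ j, (G.degree j : ℝ) * (v j * v j) ≤ (Δ : ℝ) := by
    calc ∑ j, (G.degree j : ℝ) * (v j * v j) ≤ ∑ j, (Δ : ℝ) * (v j * v j) := by
          apply Finset.sum_le_sum
          intro j _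
          apply mul_le_mul_of_nonneg_right _ (mul_self_nonneg (v j))
          exact_mod_cast hΔ ▸ G.degree_le_maxDegree j
      _ = (Δ : ℝ) := by rw [← Finset.mul_sum, hnorm, mul_one]
  set y : Fin n → ℝ := fun j => |v j| with hy
  have hterm2 : v ⬝ᵥ (G.adjMatrix ℝ *ᵥ v) ≤ y ⬝ᵥ (G.adjMatrix ℝ *ᵥ y) := by
    simp only [dotProduct, Matrix.mulVec, Finset.mul_sum]
    apply Finset.sum_le_sum
    intro a _
    apply Finset.sum_le_sum
    intro b _
    calc v a * ((G.adjMatrix ℝ) a b * v b) ≤ |v a * ((G.adjMatrix ℝ) a b * v b)| :=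
          le_abs_self _
      _ = y a * ((G.adjMatrix ℝ) a b * y b) := by
          have hA : (0:ℝ) ≤ (G.adjMatrix ℝ) a b := by
            simp only [SimpleGraph.adjMatrix_apply]
            split <;> norm_num
          rw [abs_mul, abs_mul, abs_of_nonneg hA]
  have hMS := MS G ω hω1 hω.ge ((Finset.univ.filter (fun i => y i ≠ 0)).card) y
    (fun j => abs_nonneg (v j)) le_rfl
  have hsum : (∑ j, y j)^2 ≤ (n : ℝ) := by
    calc (∑ j, y j)^2 ≤ (Finset.univ : Finset (Fin n)).card * ∑ j, y j ^ 2 := by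
          exact_mod_cast sq_sum_le_card_mul_sum_sq (s := Finset.univ) (f := y)
      _ = (n : ℝ) := by
          simp only [Finset.card_univ, Fintype.card_fin]
          have : ∑ j, y j ^ 2 = ∑ j, v j * v j := by
            apply Finset.sum_congr rfl; intro j _; rw [hy]; simp [sq_abs, sq]
          rw [this, hnorm, mul_one]
  have hω0 : (0:ℝ) < (ω : ℝ) := by exact_mod_cast hω1
  have h1ω : (0:ℝ) ≤ 1 - 1/(ω:ℝ) := by
    have : 1/(ω:ℝ) ≤ 1 := by
      rw [div_le_one hω0]; exact_mod_cast hω1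
    linarith
  have h2 : v ⬝ᵥ (G.adjMatrix ℝ *ᵥ v) ≤ (1 - 1/(ω:ℝ)) * (n:ℝ) := by
    calc v ⬝ᵥ (G.adjMatrix ℝ *ᵥ v) ≤ y ⬝ᵥ (G.adjMatrix ℝ *ᵥ y) := hterm2
      _ ≤ (1 - 1/(ω:ℝ)) * (∑ j, y j)^2 := hMS
      _ ≤ (1 - 1/(ω:ℝ)) * (n:ℝ) := mul_le_mul_of_nonneg_left hsum h1ω
  have h1α : (0:ℝ) ≤ 1 - α := by linarith
  calc α * (∑ j, (G.degree j : ℝ) * (v j * v j)) + (1 - α) * (v ⬝ᵥ (G.adjMatrix ℝ *ᵥ v))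
      ≤ α * (Δ:ℝ) + (1 - α) * ((1 - 1/(ω:ℝ)) * (n:ℝ)) := by
        apply add_le_add
        · exact mul_le_mul_of_nonneg_left hterm1 hα0
        · exact mul_le_mul_of_nonneg_left h2 h1α
    _ = α * (Δ:ℝ) + (1 - α) * (1 - 1/(ω:ℝ)) * (n:ℝ) := by ring
end

section
/- Let G be a non-bipartite graph on n vertices with diameter D, maximum degree Δ, and α ∈ [0,1]. Then the smallest eigenvalue satisfies λₙ(A_α(G)) ≥ -Δ + (1+α)/(n(D+1)). -/
open Matrix SimpleGraph Finset

set_option linter.unusedSectionVars false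
set_option maxHeartbeats 1000000

noncomputable def fsq {n : ℕ} (x : Fin n → ℝ) : Sym2 (Fin n) → ℝ :=
  Sym2.lift ⟨fun a b => (x a + x b)^2, fun a b => by ring⟩

noncomputable def gsq {n : ℕ} (x : Fin n → ℝ) : Sym2 (Fin n) → ℝ :=
  Sym2.lift ⟨fun a b => (|x a| - |x b|)^2, fun a b => by ring⟩

section helpers
variable {n : ℕ} {G : SimpleGraph (Fin n)} [DecidableRel G.Adj]

@[simp] lemma fsq_mk (x : Fin n → ℝ) (a b : Fin n) : fsq x s(a,b) = (x a + x b)^2 := rfl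
@[simp] lemma gsq_mk (x : Fin n → ℝ) (a b : Fin n) : gsq x s(a,b) = (|x a| - |x b|)^2 := rfl

lemma fsq_nonneg (x : Fin n → ℝ) (e : Sym2 (Fin n)) : 0 ≤ fsq x e := by
  induction e using Sym2.inductionOn with
  | hf a b => simpa using sq_nonneg _

lemma gsq_nonneg (x : Fin n → ℝ) (e : Sym2 (Fin n)) : 0 ≤ gsq x e := by
  induction e using Sym2.inductionOn with
  | hf a b => simpa using sq_nonneg _

lemma gsq_le_fsq (x : Fin n → ℝ) (e : Sym2 (Fin n)) : gsq x e ≤ fsq x e := by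
  induction e using Sym2.inductionOn with
  | hf a b =>
    simp only [fsq_mk, gsq_mk]
    nlinarith [neg_abs_le (x a * x b), abs_mul (x a) (x b), sq_abs (x a), sq_abs (x b)]

lemma deg_sum (i : Fin n) : (G.degree i : ℝ) = ∑ j, if G.Adj i j then (1:ℝ) else 0 := by
  rw [← card_neighborFinset_eq_degree, neighborFinset_eq_filter, Finset.card_filter]
  push_cast
  rfl

lemma pair_sum_eq (f : Fin n → Fin n → ℝ) (hf : ∀ a b, f a b = f b a) :
    ∑ i, ∑ j, (if G.Adj i j then f i j else 0)
      = 2 * ∑ e ∈ G.edgeFinset, Sym2.lift ⟨f, hf⟩ e := by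
  have h1 : ∑ i, ∑ j, (if G.Adj i j then f i j else 0)
      = ∑ p ∈ (Finset.univ ×ˢ Finset.univ).filter (fun p : Fin n × Fin n => G.Adj p.1 p.2),
          f p.1 p.2 := by
    rw [Finset.sum_filter, Finset.sum_product]
  rw [h1]
  rw [← Finset.sum_fiberwise_of_maps_to (g := fun p : Fin n × Fin n => s(p.1, p.2))
      (t := G.edgeFinset) (by
        intro p hp
        simp only [Finset.mem_filter] at hp
        rw [mem_edgeFinset]
        exact hp.2)]
  rw [Finset.mul_sum]
  apply Finset.sum_congr rfl
  intro e he
  induction e using Sym2.inductionOn with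
  | hf u v =>
    have huv : G.Adj u v := by rwa [mem_edgeFinset, mem_edgeSet] at he
    have hne : u ≠ v := G.ne_of_adj huv
    have hfib : ((Finset.univ ×ˢ Finset.univ).filter
        (fun p : Fin n × Fin n => G.Adj p.1 p.2)).filter
          (fun p => s(p.1, p.2) = s(u,v)) = {(u,v), (v,u)} := by
      ext q
      simp only [Finset.mem_filter, Finset.mem_insert, Finset.mem_singleton,
        Finset.mem_product, Finset.mem_univ, true_and, and_true, Sym2.eq_iff]
      constructor
      · rintro ⟨_, (⟨h1, h2⟩ | ⟨h1, h2⟩)⟩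
        · left; exact Prod.ext h1 h2
        · right; exact Prod.ext h1 h2
      · rintro (rfl | rfl)
        · exact ⟨huv, Or.inl ⟨rfl, rfl⟩⟩
        · exact ⟨huv.symm, Or.inr ⟨rfl, rfl⟩⟩
    rw [hfib, Finset.sum_pair (by simp [hne, Prod.ext_iff])]
    simp only [Sym2.lift_mk]
    rw [hf v u]
    ring

lemma edges_sum_nonneg (x : Fin n → ℝ) {u v : Fin n} (w : G.Walk u v) :
    0 ≤ (w.edges.map (gsq x)).sum := by
  apply List.sum_nonneg
  intro z hz
  obtain ⟨e, _, rfl⟩ := List.mem_map.mp hz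
  exact gsq_nonneg x e

lemma walk_tele (x : Fin n → ℝ) {u v : Fin n} (w : G.Walk u v) :
    (|x u| - |x v|)^2 ≤ (w.length : ℝ) * (w.edges.map (gsq x)).sum := by
  induction w with
  | nil => simp
  | @cons u u' v h w ih =>
    rw [SimpleGraph.Walk.edges_cons, SimpleGraph.Walk.length_cons, List.map_cons, List.sum_cons]
    push_cast
    set k : ℝ := (w.length : ℝ) with hk
    have hk0 : 0 ≤ k := by positivity
    have hS : 0 ≤ (w.edges.map (gsq x)).sum := edges_sum_nonneg x w
    set S : ℝ := (w.edges.map (gsq x)).sum with hSdef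
    set a : ℝ := |x u| - |x u'| with ha
    set b : ℝ := |x u'| - |x v| with hb
    have hab : |x u| - |x v| = a + b := by ring
    rw [hab, gsq_mk, ← ha]
    rcases eq_or_lt_of_le hk0 with hk1 | hk1
    · have hb2 : b^2 ≤ 0 := by rw [← hk1] at ih; simpa using ih
      have hb0 : b = 0 := by nlinarith [sq_nonneg b]
      rw [hb0]
      nlinarith [sq_nonneg a]
    · have hkk : 1 ≤ k := by
        rw [hk]
        exact_mod_cast Nat.one_le_iff_ne_zero.mpr (by
          intro h0
          rw [hk, h0] at hk1
          simp at hk1)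
      nlinarith [sq_nonneg (k*a - b), ih, sq_nonneg a, sq_nonneg b]

lemma lemA (hconn : G.Connected) (hnb : ¬ G.Colorable 2)
    (x : Fin n → ℝ) (hx : ∑ i, x i ^ 2 = 1) :
    1 / ((n : ℝ) * ((G.diam : ℝ) + 1)) ≤ ∑ e ∈ G.edgeFinset, fsq x e := by
  -- n positive
  have hn : 0 < n := by
    rcases Nat.eq_zero_or_pos n with h0 | h0
    · subst h0; simp at hx
    · exact h0
  have : Nonempty (Fin n) := ⟨⟨0, hn⟩⟩
  -- max vertex
  obtain ⟨p, -, hp⟩ := Finset.exists_max_image Finset.univ (fun i => x i ^ 2) ⟨⟨0, hn⟩, Finset.mem_univ _⟩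
  have hp1 : 1 ≤ (n : ℝ) * x p ^ 2 := by
    calc (1:ℝ) = ∑ i, x i ^ 2 := hx.symm
    _ ≤ ∑ _i : Fin n, x p ^ 2 := Finset.sum_le_sum (fun i _ => hp i (Finset.mem_univ i))
    _ = (n : ℝ) * x p ^ 2 := by simp [Finset.sum_const, Finset.card_univ, mul_comm]
  -- good edge
  have hedge : ∃ a b, G.Adj a b ∧ 0 ≤ x a * x b ∧ |x a| ≤ |x b| := by
    have h1 : ∃ a b, G.Adj a b ∧ 0 ≤ x a * x b := by
      by_contra hcon
      push_neg at hcon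
      refine hnb ⟨SimpleGraph.Coloring.mk (fun v => if 0 < x v then (0 : Fin 2) else 1) ?_⟩
      intro u v huv heq
      have h := hcon u v huv
      by_cases h1 : 0 < x u <;> by_cases h2 : 0 < x v <;> simp [h1, h2] at heq ⊢ <;> nlinarith
    obtain ⟨a, b, hab, hxab⟩ := h1
    rcases le_total |x a| |x b| with hle | hle
    · exact ⟨a, b, hab, hxab, hle⟩
    · exact ⟨b, a, hab.symm, by linarith [mul_comm (x a) (x b)], hle⟩
  obtain ⟨a, b, hab, hxab, habs⟩ := hedge
  -- path from p to a
  have hed : G.ediam ≠ ⊤ := by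
    obtain ⟨u, v, huv⟩ := SimpleGraph.exists_edist_eq_ediam_of_finite (G := G)
    rw [← huv]
    obtain ⟨wuv⟩ := hconn u v
    exact (wuv.edist_le.trans_lt (by simp [lt_top_iff_ne_top])).ne
  obtain ⟨q, hqpath, hkD⟩ : ∃ q : G.Walk p a, q.IsPath ∧ q.length ≤ G.diam := by
    obtain ⟨w0, hw0⟩ := hconn.exists_walk_length_eq_dist p a
    refine ⟨w0.bypass, w0.bypass_isPath, ?_⟩
    calc w0.bypass.length ≤ w0.length := SimpleGraph.Walk.length_bypass_le w0
    _ = G.dist p a := hw0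
    _ ≤ G.diam := SimpleGraph.dist_le_diam hed
  set S : ℝ := (q.edges.map (gsq x)).sum with hSdef
  have hS0 : 0 ≤ S := edges_sum_nonneg x q
  have htel : (|x p| - |x a|) ^ 2 ≤ (q.length : ℝ) * S := walk_tele x q
  -- the special edge inequality
  have he0 : gsq x s(a,b) + x a ^ 2 ≤ fsq x s(a,b) := by
    simp only [fsq_mk, gsq_mk]
    have h1 : |x a| * |x b| = x a * x b := by
      rw [← abs_mul]; exact abs_of_nonneg hxab
    have h2 : x a ^ 2 ≤ x a * x b := by
      calc x a ^ 2 = |x a| * |x a| := by rw [← abs_mul, abs_mul_self]; ring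
      _ ≤ |x a| * |x b| := mul_le_mul_of_nonneg_left habs (abs_nonneg _)
      _ = x a * x b := h1
    nlinarith [sq_abs (x a), sq_abs (x b)]
  -- the edge sums
  set W : ℝ := ∑ e ∈ G.edgeFinset, fsq x e with hW
  have hnodup : q.edges.Nodup := hqpath.edges_nodup
  have hSfin : S = ∑ e ∈ q.edges.toFinset, gsq x e := by
    rw [hSdef, List.sum_toFinset _ hnodup]
  have hsubPE : q.edges.toFinset ⊆ G.edgeFinset := by
    intro e he
    rw [List.mem_toFinset] at he
    rw [mem_edgeFinset]
    exact q.edges_subset_edgeSet he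
  have he0mem : s(a,b) ∈ G.edgeFinset := by rwa [mem_edgeFinset, mem_edgeSet]
  have hkey : S + x a ^ 2 ≤ W := by
    have hsub : insert s(a,b) q.edges.toFinset ⊆ G.edgeFinset :=
      Finset.insert_subset he0mem hsubPE
    have step1 : ∑ e ∈ insert s(a,b) q.edges.toFinset, fsq x e ≤ W := by
      rw [hW]
      exact Finset.sum_le_sum_of_subset_of_nonneg hsub (fun e _ _ => fsq_nonneg x e)
    refine le_trans ?_ step1
    rw [hSfin]
    by_cases hmem : s(a,b) ∈ q.edges.toFinset
    · rw [Finset.insert_eq_self.mpr hmem]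
      rw [← Finset.sum_erase_add _ _ hmem, ← Finset.sum_erase_add _ (fsq x) hmem]
      have : ∑ e ∈ q.edges.toFinset.erase s(a,b), gsq x e
          ≤ ∑ e ∈ q.edges.toFinset.erase s(a,b), fsq x e :=
        Finset.sum_le_sum (fun e _ => gsq_le_fsq x e)
      linarith [he0]
    · rw [Finset.sum_insert hmem]
      have : ∑ e ∈ q.edges.toFinset, gsq x e ≤ ∑ e ∈ q.edges.toFinset, fsq x e :=
        Finset.sum_le_sum (fun e _ => gsq_le_fsq x e)
      linarith [he0, gsq_nonneg x s(a,b)]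
  -- final arithmetic
  have hya : |x a| ≤ |x p| := by
    have := hp a (Finset.mem_univ a)
    nlinarith [abs_nonneg (x a), abs_nonneg (x p), sq_abs (x a), sq_abs (x p)]
  set kr : ℝ := (q.length : ℝ) with hkr
  have hkr0 : 0 ≤ kr := by positivity
  have hxp : x p ^ 2 ≤ (kr + 1) * (S + x a ^ 2) := by
    set t : ℝ := |x p| - |x a| with htdef
    have ht0 : 0 ≤ t := by simp [htdef]; linarith
    have ht2 : t ^ 2 ≤ kr * S := htel
    have hxpy : x p ^ 2 = (t + |x a|) ^ 2 := by
      rw [htdef]; rw [← sq_abs (x p)]; ring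
    rw [hxpy]
    rcases eq_or_lt_of_le hkr0 with hk1 | hk1
    · have : t ^ 2 ≤ 0 := by rw [← hk1] at ht2; simpa using ht2
      have ht00 : t = 0 := by nlinarith [sq_nonneg t]
      rw [ht00]
      nlinarith [sq_abs (x a)]
    · have hql : (0:ℝ) < (q.length : ℝ) := hkr ▸ hk1
      have hql2 : 0 < q.length := by exact_mod_cast hql
      have hkk : 1 ≤ kr := by rw [hkr]; exact_mod_cast hql2
      rw [← sq_abs (x a)]
      set d : ℝ := |x a| with hd
      have e1 : (kr+1)*t^2 ≤ (kr+1)*(kr*S) := mul_le_mul_of_nonneg_left ht2 (by linarith)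
      have e2 : (0:ℝ) ≤ (t - kr*d)^2 := sq_nonneg _
      have scaled : kr*((t+d)^2) ≤ kr*((kr+1)*(S+d^2)) := by nlinarith [e1, e2]
      exact (mul_le_mul_iff_right₀ hk1).mp scaled
  have hDr : kr + 1 ≤ (G.diam : ℝ) + 1 := by
    have : (q.length : ℝ) ≤ (G.diam : ℝ) := by exact_mod_cast hkD
    linarith
  have hSx0 : 0 ≤ S + x a ^ 2 := by positivity
  have hchain : 1 ≤ (n : ℝ) * (((G.diam : ℝ) + 1) * W) := by
    have h6 : (kr + 1) * (S + x a ^ 2) ≤ ((G.diam : ℝ) + 1) * W :=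
      mul_le_mul hDr hkey hSx0 (by positivity)
    have h7 : x p ^ 2 ≤ ((G.diam : ℝ) + 1) * W := le_trans hxp h6
    calc (1:ℝ) ≤ (n : ℝ) * x p ^ 2 := hp1
    _ ≤ (n : ℝ) * (((G.diam : ℝ) + 1) * W) :=
        mul_le_mul_of_nonneg_left h7 (by positivity)
  have hpos : 0 < (n : ℝ) * ((G.diam : ℝ) + 1) := by
    have : (1:ℝ) ≤ (n:ℝ) := by exact_mod_cast hn
    positivity
  rw [div_le_iff₀ hpos]
  nlinarith [hchain]

end helpers

theorem stmt6 {n : ℕ} (G : SimpleGraph (Fin n)) [DecidableRel G.Adj]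
    (hconn : G.Connected) (hnb : ¬ G.Colorable 2)
    (α : ℝ) (hα0 : 0 ≤ α) (hα1 : α ≤ 1)
    (Δ : ℕ) (hΔ : Δ = G.maxDegree)
    (hH : (Aalpha G α).IsHermitian) :
    (⨅ i, hH.eigenvalues i) ≥ -(Δ : ℝ) + (1 + α) / ((n : ℝ) * ((G.diam : ℝ) + 1)) := by
  have hn : 2 < n := by
    by_contra h
    push_neg at h
    exact hnb ((G.colorable_of_fintype).mono (by simpa using h))
  have hne : Nonempty (Fin n) := ⟨⟨0, by omega⟩⟩
  rw [ge_iff_le]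
  apply le_ciInf
  intro i
  -- the unit eigenvector
  set x : Fin n → ℝ := ⇑(hH.eigenvectorBasis i) with hxdef
  have hx1 : ∑ j, x j ^ 2 = 1 := by
    have hnorm : ‖hH.eigenvectorBasis i‖ = 1 := hH.eigenvectorBasis.orthonormal.1 i
    rw [EuclideanSpace.norm_eq] at hnorm
    have h0 : 0 ≤ ∑ j, ‖hH.eigenvectorBasis i j‖ ^ 2 :=
      Finset.sum_nonneg fun j _ => sq_nonneg _
    have := Real.sqrt_eq_one.mp hnorm
    calc ∑ j, x j ^ 2 = ∑ j, ‖hH.eigenvectorBasis i j‖ ^ 2 := by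
          apply Finset.sum_congr rfl; intro j _; rw [Real.norm_eq_abs, sq_abs]
    _ = 1 := this
  -- quadratic form
  have hquad : hH.eigenvalues i = x ⬝ᵥ (Aalpha G α *ᵥ x) := by
    rw [hH.mulVec_eigenvectorBasis i]
    rw [← hxdef]
    rw [dotProduct_smul]
    simp only [smul_eq_mul, dotProduct]
    have : ∑ j, x j * x j = 1 := by
      rw [← hx1]; apply Finset.sum_congr rfl; intro j _; ring
    rw [this, mul_one]
  -- expand the quadratic form
  set Sd : ℝ := ∑ j, (G.degree j : ℝ) * x j ^ 2 with hSd
  set E : ℝ := ∑ j, ∑ k, (if G.Adj j k then x j * x k else 0) with hE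
  have hexp : x ⬝ᵥ (Aalpha G α *ᵥ x) = α * Sd + (1 - α) * E := by
    rw [Aalpha, add_mulVec, smul_mulVec, smul_mulVec, dotProduct_add,
      dotProduct_smul, dotProduct_smul]
    congr 1
    · rw [smul_eq_mul]
      congr 1
      simp only [dotProduct, mulVec_diagonal]
      apply Finset.sum_congr rfl; intro j _; ring
    · rw [smul_eq_mul]
      congr 1
      rw [hE]
      simp only [dotProduct]
      apply Finset.sum_congr rfl
      intro j _
      rw [adjMatrix_mulVec_apply, Finset.mul_sum, neighborFinset_eq_filter, Finset.sum_filter]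
  -- W = Sd + E
  set W : ℝ := ∑ e ∈ G.edgeFinset, fsq x e with hW
  have hWeq : 2 * W = 2 * Sd + 2 * E := by
    have h1 := pair_sum_eq (G := G) (fun a b => (x a + x b)^2) (fun a b => by ring)
    have h2 : ∑ j, ∑ k, (if G.Adj j k then (x j + x k)^2 else 0) = 2 * Sd + 2 * E := by
      have expand : ∀ j k : Fin n, (if G.Adj j k then (x j + x k)^2 else 0)
          = (if G.Adj j k then x j ^2 else 0) + (if G.Adj j k then x k ^2 else 0)
            + 2 * (if G.Adj j k then x j * x k else 0) := by
        intro j k; split_ifs <;> ring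
      simp only [expand, Finset.sum_add_distrib, ← Finset.mul_sum]
      have T1 : ∑ j, ∑ k, (if G.Adj j k then x j ^2 else 0) = Sd := by
        rw [hSd]
        apply Finset.sum_congr rfl
        intro j _
        rw [deg_sum, Finset.sum_mul]
        apply Finset.sum_congr rfl
        intro k _
        split_ifs <;> ring
      have T2 : ∑ j, ∑ k, (if G.Adj j k then x k ^2 else 0) = Sd := by
        rw [Finset.sum_comm, hSd]
        apply Finset.sum_congr rfl
        intro k _
        rw [deg_sum, Finset.sum_mul]
        apply Finset.sum_congr rfl
        intro j _
        by_cases h : G.Adj k j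
        · simp [h, G.adj_symm h]
        · have h' : ¬ G.Adj j k := fun hh => h (G.adj_symm hh)
          simp [h, h']
      rw [T1, T2, ← hE]
      ring
    rw [← h2, h1, hW]
    rfl
  have hWSE : W = Sd + E := by linarith
  -- lemma A
  have hA' : 1 / ((n : ℝ) * ((G.diam : ℝ) + 1)) ≤ Sd + E := hWSE ▸ lemA hconn hnb x hx1
  -- lemma B pieces
  set SΔ : ℝ := ∑ j, ((Δ : ℝ) - (G.degree j : ℝ)) * x j ^ 2 with hSDdef
  have hSΔ0 : 0 ≤ SΔ := by
    apply Finset.sum_nonneg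
    intro j _
    apply mul_nonneg _ (sq_nonneg _)
    have : G.degree j ≤ Δ := hΔ ▸ G.degree_le_maxDegree j
    have : (G.degree j : ℝ) ≤ (Δ : ℝ) := by exact_mod_cast this
    linarith
  have hΔeq : (Δ : ℝ) = SΔ + Sd := by
    have : SΔ + Sd = ∑ j, (Δ : ℝ) * x j ^ 2 := by
      rw [hSDdef, hSd, ← Finset.sum_add_distrib]
      apply Finset.sum_congr rfl
      intro j _
      ring
    rw [this, ← Finset.mul_sum, hx1, mul_one]
  have hdeg1 : ∀ v : Fin n, 1 ≤ G.degree v := by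
    intro v
    have hex : ∃ w, G.Adj v w := by
      have hnt : Nontrivial (Fin n) :=
        ⟨⟨⟨0, by omega⟩, ⟨1, by omega⟩, by simp [Fin.ext_iff]⟩⟩
      obtain ⟨u, hu⟩ := exists_ne v
      obtain ⟨w⟩ := hconn v u
      cases w with
      | nil => exact absurd rfl (Ne.symm hu)
      | cons h _ => exact ⟨_, h⟩
    obtain ⟨w, hw⟩ := hex
    exact (G.degree_pos_iff_exists_adj v).mpr ⟨w, hw⟩
  have hB : 1 ≤ SΔ + 2 * Sd := by
    have key : SΔ + 2 * Sd = ∑ j, ((Δ : ℝ) + (G.degree j : ℝ)) * x j ^ 2 := by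
      rw [hSDdef, hSd, Finset.mul_sum, ← Finset.sum_add_distrib]
      apply Finset.sum_congr rfl
      intro j _
      ring
    rw [key, ← hx1]
    apply Finset.sum_le_sum
    intro j _
    have h1 : (1 : ℝ) ≤ (G.degree j : ℝ) := by exact_mod_cast hdeg1 j
    nlinarith [sq_nonneg (x j), Nat.cast_nonneg (α := ℝ) Δ]
  -- final assembly
  set t : ℝ := 1 / ((n : ℝ) * ((G.diam : ℝ) + 1)) with htd
  have hX2 : (2:ℝ) ≤ (n : ℝ) * ((G.diam : ℝ) + 1) := by
    have h3 : (3:ℝ) ≤ (n:ℝ) := by exact_mod_cast hn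
    have hD0 : (0:ℝ) ≤ (G.diam : ℝ) := Nat.cast_nonneg _
    nlinarith
  have ht2 : 2 * t ≤ 1 := by
    have hXpos : (0:ℝ) < (n : ℝ) * ((G.diam : ℝ) + 1) := by linarith
    rw [htd, mul_one_div, div_le_one hXpos]
    linarith
  have h1 : (1-α)*t ≤ (1-α)*(Sd+E) := mul_le_mul_of_nonneg_left hA' (by linarith)
  have h2 : α*1 ≤ α*(SΔ+2*Sd) := mul_le_mul_of_nonneg_left hB hα0
  have h3 : 0 ≤ (1-α)*SΔ := mul_nonneg (by linarith) hSΔ0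
  have h4 : α*(2*t) ≤ α*1 := mul_le_mul_of_nonneg_left ht2 hα0
  have key : hH.eigenvalues i + (Δ:ℝ) = (1-α)*(Sd+E) + α*(SΔ+2*Sd) + (1-α)*SΔ := by
    rw [hquad, hexp, hΔeq]; ring
  have hgoal : (1+α)/((n:ℝ)*((G.diam:ℝ)+1)) = (1+α)*t := by rw [htd]; ring
  rw [hgoal]
  nlinarith [h1, h2, h3, h4, key]
end

section
/- Let G be a non-bipartite Δ-regular graph on n vertices with diameter D and α ∈ [0,1]. Then λ₁(A_α(G)) + λₙ(A_α(G)) ≥ (1+α)/(n(D+1)). -/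
open Matrix SimpleGraph Finset

lemma list_cs (l : List ℝ) : l.sum ^ 2 ≤ l.length * (l.map (fun y => y ^ 2)).sum := by
  induction l with
  | nil => simp
  | cons a l ih =>
    set Q := (l.map (fun y => y ^ 2)).sum with hQdef
    have hQ : 0 ≤ Q := by
      apply List.sum_nonneg; intro y hy
      obtain ⟨z, _, rfl⟩ := List.mem_map.mp hy; positivity
    have hn : (0:ℝ) ≤ l.length := by positivity
    have hc : 0 ≤ (l.length : ℝ) * a ^ 2 + Q := by positivity
    have h1 : (2 * a * l.sum) ^ 2 ≤ ((l.length : ℝ) * a ^ 2 + Q) ^ 2 := by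
      nlinarith [mul_le_mul_of_nonneg_left ih (by positivity : (0:ℝ) ≤ 4 * a ^ 2),
        sq_nonneg ((l.length : ℝ) * a ^ 2 - Q)]
    have key : 2 * a * l.sum ≤ (l.length : ℝ) * a ^ 2 + Q := (abs_le_of_sq_le_sq' h1 hc).2
    simp only [List.sum_cons, List.map_cons, List.length_cons, ← hQdef]
    push_cast
    nlinarith [ih]

lemma telescope {n : ℕ} {G : SimpleGraph (Fin n)} (x : Fin n → ℝ) {a b : Fin n} (p : G.Walk a b) :
    |x a| ≤ |x b| + (p.darts.map (fun d => |x d.fst + x d.snd|)).sum := by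
  induction p with
  | nil => simp
  | @cons u v w h q ih =>
    have h1 : |x u| ≤ |x u + x v| + |x v| := by
      have := abs_add_le (x u + x v) (-(x v)); simpa using this
    simp only [Walk.darts_cons, List.map_cons, List.sum_cons]
    linarith

lemma pair_sum {n : ℕ} (G : SimpleGraph (Fin n)) [DecidableRel G.Adj] (f : Fin n → Fin n → ℝ) :
    ∑ q ∈ univ.filter (fun q : Fin n × Fin n => G.Adj q.1 q.2), f q.1 q.2
      = ∑ i, ∑ j ∈ G.neighborFinset i, f i j := by
  rw [Finset.sum_filter, ← Finset.univ_product_univ, Finset.sum_product]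
  congr 1; ext i
  rw [neighborFinset_eq_filter, Finset.sum_filter]

lemma double_bound {n : ℕ} {G : SimpleGraph (Fin n)} [DecidableRel G.Adj] {u v w : Fin n}
    (p : G.Walk u v) (hp : p.IsPath) (hvw : G.Adj v w) (hots : s(v, w) ∉ p.edges)
    (x : Fin n → ℝ) :
    2 * ((x v + x w) ^ 2 + (p.darts.map (fun d => (x d.fst + x d.snd) ^ 2)).sum)
      ≤ ∑ i, ∑ j ∈ G.neighborFinset i, (x i + x j) ^ 2 := by
  classical
  set f : Fin n × Fin n → ℝ := fun q => (x q.1 + x q.2) ^ 2 with hf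
  set T : Finset (Fin n × Fin n) := univ.filter (fun q : Fin n × Fin n => G.Adj q.1 q.2) with hT
  set A : List (Fin n × Fin n) := p.darts.map Dart.toProd with hA
  set B : List (Fin n × Fin n) := p.darts.map (fun d => (d.snd, d.fst)) with hB
  set L : List (Fin n × Fin n) := (v, w) :: (w, v) :: (A ++ B) with hL
  have hedges : p.edges = p.darts.map Dart.edge := rfl
  have hdn : p.darts.Nodup := by
    have := hp.isTrail.edges_nodup; rw [hedges] at this; exact this.of_map _
  have hinj : ∀ d₁ ∈ p.darts, ∀ d₂ ∈ p.darts, d₁.edge = d₂.edge → d₁ = d₂ := by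
    have := hp.isTrail.edges_nodup; rw [hedges] at this
    exact fun d₁ h₁ d₂ h₂ h => List.inj_on_of_nodup_map this h₁ h₂ h
  have hedgemem : ∀ d ∈ p.darts, d.edge ∈ p.edges := by
    intro d hd; rw [hedges]; exact List.mem_map_of_mem hd
  have hvw_not : ∀ d ∈ p.darts, d.toProd ≠ (v, w) ∧ d.toProd ≠ (w, v) := by
    intro d hd
    constructor <;> intro h <;> apply hots
    · have he : d.edge = s(v, w) := by rw [Dart.edge, h]
      exact he ▸ hedgemem d hd
    · have he : d.edge = s(v, w) := by rw [Dart.edge, h]; exact Sym2.eq_swap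
      exact he ▸ hedgemem d hd
  have hmemL : ∀ q ∈ L, q ∈ T := by
    intro q hq
    rw [hT, Finset.mem_filter]
    refine ⟨mem_univ _, ?_⟩
    rw [hL] at hq
    rcases List.mem_cons.mp hq with rfl | hq
    · exact hvw
    rcases List.mem_cons.mp hq with rfl | hq
    · exact hvw.symm
    rcases List.mem_append.mp hq with hq | hq
    · obtain ⟨d, _, rfl⟩ := List.mem_map.mp hq; exact d.adj
    · obtain ⟨d, _, rfl⟩ := List.mem_map.mp hq; exact d.adj.symm
  have hnodL : L.Nodup := by
    rw [hL]
    refine List.nodup_cons.mpr ⟨?_, List.nodup_cons.mpr ⟨?_, ?_⟩⟩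
    · intro hmem
      rcases List.mem_cons.mp hmem with h | hmem
      · exact hvw.ne (congrArg Prod.fst h)
      rcases List.mem_append.mp hmem with h | h
      · obtain ⟨d, hd, hde⟩ := List.mem_map.mp h; exact (hvw_not d hd).1 hde
      · obtain ⟨d, hd, hde⟩ := List.mem_map.mp h
        have h1 : d.snd = v := congrArg Prod.fst hde
        have h2 : d.fst = w := congrArg Prod.snd hde
        exact (hvw_not d hd).2 (Prod.ext h2 h1)
    · intro hmem
      rcases List.mem_append.mp hmem with h | h
      · obtain ⟨d, hd, hde⟩ := List.mem_map.mp h; exact (hvw_not d hd).2 hde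
      · obtain ⟨d, hd, hde⟩ := List.mem_map.mp h
        have h1 : d.snd = w := congrArg Prod.fst hde
        have h2 : d.fst = v := congrArg Prod.snd hde
        exact (hvw_not d hd).1 (Prod.ext h2 h1)
    · refine List.Nodup.append (hdn.map Dart.toProd_injective) (hdn.map ?_) ?_
      · intro d₁ d₂ h
        apply Dart.toProd_injective
        have h1 := congrArg Prod.fst h; have h2 := congrArg Prod.snd h
        exact Prod.ext h2 h1
      · intro q hqA hqB
        obtain ⟨d₁, hd₁, hde₁⟩ := List.mem_map.mp hqA
        obtain ⟨d₂, hd₂, hde₂⟩ := List.mem_map.mp hqB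
        have he : d₁.edge = d₂.edge := by
          rw [Dart.edge, Dart.edge, hde₁, ← hde₂]
          exact Sym2.eq_swap
        have hd12 : d₁ = d₂ := hinj d₁ hd₁ d₂ hd₂ he
        subst hd12
        have h1 : d₁.fst = d₁.snd := by
          have := hde₁.trans hde₂.symm
          exact (congrArg Prod.fst this)
        exact d₁.adj.ne h1
  -- sum over L
  have hsub : L.toFinset ⊆ T := fun q hq => hmemL q (List.mem_toFinset.mp hq)
  have hfnonneg : ∀ q ∈ T, 0 ≤ f q := fun q _ => sq_nonneg _
  have hsum1 : (L.map f).sum ≤ ∑ q ∈ T, f q := by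
    rw [← List.sum_toFinset f hnodL]
    exact Finset.sum_le_sum_of_subset_of_nonneg hsub (fun q hq _ => hfnonneg q hq)
  have hBsum : (B.map f).sum = (p.darts.map (fun d => (x d.fst + x d.snd) ^ 2)).sum := by
    rw [hB, List.map_map]
    congr 1
    apply List.map_congr_left
    intro d _
    simp only [Function.comp_apply, hf]
    ring
  have hAsum : (A.map f).sum = (p.darts.map (fun d => (x d.fst + x d.snd) ^ 2)).sum := by
    rw [hA, List.map_map]; rfl
  have hLsum : (L.map f).sum
      = 2 * ((x v + x w) ^ 2 + (p.darts.map (fun d => (x d.fst + x d.snd) ^ 2)).sum) := by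
    rw [hL]
    simp only [List.map_cons, List.sum_cons, List.map_append, List.sum_append]
    rw [hAsum, hBsum, hf]
    simp only
    ring
  have hTsum : ∑ q ∈ T, f q = ∑ i, ∑ j ∈ G.neighborFinset i, (x i + x j) ^ 2 := by
    rw [hT, hf]
    have := pair_sum G (fun i j => (x i + x j) ^ 2)
    exact this
  rw [← hTsum, ← hLsum]
  exact hsum1


lemma key_bound {n : ℕ} (G : SimpleGraph (Fin n)) [DecidableRel G.Adj]
    (hconn : G.Connected) (hnb : ¬ G.Colorable 2)
    (x : Fin n → ℝ) (hx : ∑ i, x i ^ 2 = 1) :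
    2 / ((n : ℝ) * ((G.diam : ℝ) + 1)) ≤ ∑ i, ∑ j ∈ G.neighborFinset i, (x i + x j) ^ 2 := by
  classical
  have hne : Nonempty (Fin n) := hconn.nonempty
  have hn1 : (1:ℝ) ≤ n := by exact_mod_cast Nat.one_le_iff_ne_zero.mpr (by rintro rfl; exact hne.elim (fun i => i.elim0))
  -- the max vertex
  obtain ⟨u, -, hu⟩ := Finset.exists_max_image univ (fun i => x i ^ 2) ⟨Classical.arbitrary _, mem_univ _⟩
  have hun : 1 ≤ (n : ℝ) * x u ^ 2 := by
    calc (1:ℝ) = ∑ i, x i ^ 2 := hx.symm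
    _ ≤ ∑ _i : Fin n, x u ^ 2 := Finset.sum_le_sum (fun i _ => hu i (mem_univ i))
    _ = n * x u ^ 2 := by simp [mul_comm]
  -- a same-sign edge
  have hedge : ∃ v w, G.Adj v w ∧ 0 ≤ x v * x w := by
    by_contra hcon; push_neg at hcon
    refine hnb ⟨Coloring.mk (fun i => if 0 ≤ x i then 0 else 1) ?_⟩
    intro a b hab hcol
    have h1 := hcon a b hab
    by_cases ha : 0 ≤ x a <;> by_cases hb : 0 ≤ x b <;> simp [ha, hb] at hcol <;> nlinarith
  obtain ⟨v, w, hvw, hsign, hdle⟩ : ∃ v w, G.Adj v w ∧ 0 ≤ x v * x w ∧ G.dist u v ≤ G.dist u w := by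
    obtain ⟨v, w, h1, h2⟩ := hedge
    rcases le_total (G.dist u v) (G.dist u w) with h | h
    · exact ⟨v, w, h1, h2, h⟩
    · exact ⟨w, v, h1.symm, by linarith [mul_comm (x v) (x w)], h⟩
  obtain ⟨p, hp, hplen⟩ := hconn.exists_path_of_dist u v
  -- the edge vw is not on p
  have hots : s(v, w) ∉ p.edges := by
    intro hmem
    have hws : w ∈ p.support := p.snd_mem_support_of_mem_edges hmem
    have hsplit : ((p.takeUntil w hws).append (p.dropUntil w hws)).length = p.length := by
      rw [p.take_spec hws]
    rw [Walk.length_append] at hsplit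
    have h1 : G.dist u w ≤ (p.takeUntil w hws).length := SimpleGraph.dist_le _
    have h2 : (p.dropUntil w hws).length = 0 := by omega
    exact hvw.ne (Walk.eq_of_length_eq_zero h2).symm

  have hediam : G.ediam ≠ ⊤ := by
    obtain ⟨a, b, hab⟩ := G.exists_edist_eq_ediam_of_finite
    rw [← hab]
    exact (edist_ne_top_iff_reachable).mpr (hconn a b)
  have hdiam : (p.length : ℝ) ≤ (G.diam : ℝ) := by
    have := G.dist_le_diam hediam (u := u) (v := v)
    rw [← hplen] at this
    exact_mod_cast this
  set R := (p.darts.map (fun d => (x d.fst + x d.snd) ^ 2)).sum with hR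
  have hRnn : 0 ≤ R := List.sum_nonneg (by
    intro y hy; obtain ⟨d, _, rfl⟩ := List.mem_map.mp hy; positivity)
  set l : List ℝ := |x v| :: p.darts.map (fun d => |x d.fst + x d.snd|) with hl
  have htel : |x u| ≤ l.sum := by
    have := telescope x p
    rw [hl]; simp only [List.sum_cons]; linarith
  have hcs : l.sum ^ 2 ≤ l.length * (l.map (fun y => y ^ 2)).sum := list_cs l
  have hlen : (l.length : ℝ) = (p.length : ℝ) + 1 := by simp [hl]
  have hmap : (l.map (fun y => y ^ 2)).sum = x v ^ 2 + R := by
    rw [hl]; simp only [List.map_cons, List.sum_cons, List.map_map]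
    congr 1
    · exact sq_abs _
    · rw [hR]; congr 1; apply List.map_congr_left; intro d _
      simp [Function.comp, sq_abs]
  have hxv : x v ^ 2 ≤ (x v + x w) ^ 2 := by nlinarith [hsign]
  have hxu : x u ^ 2 ≤ ((G.diam : ℝ) + 1) * ((x v + x w) ^ 2 + R) := by
    have h1 : x u ^ 2 ≤ l.sum ^ 2 := by
      have h0 : 0 ≤ |x u| := abs_nonneg _
      calc x u ^ 2 = |x u| ^ 2 := (sq_abs _).symm
      _ ≤ l.sum ^ 2 := by nlinarith
    calc x u ^ 2 ≤ l.length * (l.map (fun y => y ^ 2)).sum := le_trans h1 hcs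
    _ = ((p.length : ℝ) + 1) * (x v ^ 2 + R) := by rw [hlen, hmap]
    _ ≤ ((G.diam : ℝ) + 1) * ((x v + x w) ^ 2 + R) := by
        apply mul_le_mul (by linarith) (by linarith) (by positivity) (by positivity)
  have hdb := double_bound p hp hvw hots x
  have hc : (0:ℝ) < (n : ℝ) * ((G.diam : ℝ) + 1) := by positivity
  rw [div_le_iff₀ hc]
  have hE : 1 ≤ ((n : ℝ) * ((G.diam : ℝ) + 1)) * ((x v + x w) ^ 2 + R) := by
    calc (1:ℝ) ≤ n * x u ^ 2 := hun
    _ ≤ n * (((G.diam : ℝ) + 1) * ((x v + x w) ^ 2 + R)) := by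
        apply mul_le_mul_of_nonneg_left hxu (by positivity)
    _ = ((n : ℝ) * ((G.diam : ℝ) + 1)) * ((x v + x w) ^ 2 + R) := by ring
  nlinarith [hdb, hE, hc, mul_le_mul_of_nonneg_left hdb (le_of_lt hc)]


lemma pair_swap {n : ℕ} (G : SimpleGraph (Fin n)) [DecidableRel G.Adj] (F : Fin n × Fin n → ℝ) :
    ∑ q ∈ univ.filter (fun q : Fin n × Fin n => G.Adj q.1 q.2), F q
      = ∑ q ∈ univ.filter (fun q : Fin n × Fin n => G.Adj q.1 q.2), F q.swap := by
  apply Finset.sum_nbij' (i := fun q => q.swap) (j := fun q => q.swap) <;>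
    simp [adj_comm]

lemma sum_neighbors {n : ℕ} (G : SimpleGraph (Fin n)) [DecidableRel G.Adj] {Δ : ℕ}
    (hreg : G.IsRegularOfDegree Δ) (g : Fin n → ℝ) :
    ∑ i, ∑ j ∈ G.neighborFinset i, g j = Δ * ∑ j, g j := by
  have h1 : ∑ i, ∑ j ∈ G.neighborFinset i, g j
      = ∑ q ∈ univ.filter (fun q : Fin n × Fin n => G.Adj q.1 q.2), g q.2 :=
    (pair_sum G (fun _ j => g j)).symm
  rw [h1, pair_swap]
  have h2 : ∑ q ∈ univ.filter (fun q : Fin n × Fin n => G.Adj q.1 q.2), g q.swap.2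
      = ∑ i, ∑ j ∈ G.neighborFinset i, g i := pair_sum G (fun i _ => g i)
  rw [h2]
  have h3 : ∀ i : Fin n, ∑ _j ∈ G.neighborFinset i, g i = (Δ : ℝ) * g i := by
    intro i
    rw [Finset.sum_const, card_neighborFinset_eq_degree, hreg i, nsmul_eq_mul]
  rw [Finset.sum_congr rfl (fun i _ => h3 i), ← Finset.mul_sum]

theorem stmt7 {n : ℕ} (G : SimpleGraph (Fin n)) [DecidableRel G.Adj]
    (hconn : G.Connected) (hnb : ¬ G.Colorable 2)
    (Δ : ℕ) (hreg : G.IsRegularOfDegree Δ)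
    (α : ℝ) (hα0 : 0 ≤ α) (hα1 : α ≤ 1)
    (hH : (Aalpha G α).IsHermitian) :
    (⨆ i, hH.eigenvalues i) + (⨅ i, hH.eigenvalues i) ≥
      (1 + α) / ((n : ℝ) * ((G.diam : ℝ) + 1)) := by
  classical
  have hne : Nonempty (Fin n) := hconn.nonempty
  have hn1 : (1:ℝ) ≤ n := by
    exact_mod_cast Nat.one_le_iff_ne_zero.mpr (by rintro rfl; exact hne.elim (fun i => i.elim0))
  -- pointwise formula for Aalpha *ᵥ y
  have hmv : ∀ (y : Fin n → ℝ) (i : Fin n),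
      (Aalpha G α *ᵥ y) i = α * (Δ * y i) + (1 - α) * (∑ j ∈ G.neighborFinset i, y j) := by
    intro y i
    simp only [Aalpha, Matrix.add_mulVec, Matrix.smul_mulVec, Pi.add_apply, Pi.smul_apply,
      smul_eq_mul, Matrix.mulVec_diagonal, adjMatrix_mulVec_apply, hreg i]
  set B := hH.eigenvectorBasis with hB
  -- Δ is an eigenvalue
  have hΔeig : ∃ i, hH.eigenvalues i = Δ := by
    by_contra hcon
    push_neg at hcon
    have hzero : ∀ i : Fin n, ∑ j, (B i : EuclideanSpace ℝ (Fin n)) j = 0 := by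
      intro i
      have he := hH.mulVec_eigenvectorBasis i
      set y : Fin n → ℝ := ⇑(B i) with hy
      have h1 : ∑ i', (Aalpha G α *ᵥ y) i' = hH.eigenvalues i * ∑ j, y j := by
        rw [he]
        simp only [Pi.smul_apply, smul_eq_mul]
        rw [Finset.mul_sum]
      have h2 : ∑ i', (Aalpha G α *ᵥ y) i' = (Δ : ℝ) * ∑ j, y j := by
        rw [Finset.sum_congr rfl (fun i' _ => hmv y i'), Finset.sum_add_distrib]
        have e1 : ∑ i', α * ((Δ : ℝ) * y i') = α * (Δ : ℝ) * ∑ i', y i' := by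
          rw [Finset.mul_sum]; exact Finset.sum_congr rfl (fun i' _ => by ring)
        have e2 : ∑ i', (1 - α) * ∑ j ∈ G.neighborFinset i', y j
            = (1 - α) * ((Δ : ℝ) * ∑ j, y j) := by
          rw [← Finset.mul_sum, sum_neighbors G hreg y]
        rw [e1, e2]
        ring
      have h3 : (hH.eigenvalues i - Δ) * ∑ j, y j = 0 := by
        rw [sub_mul, ← h1, ← h2, sub_self]
      rcases mul_eq_zero.mp h3 with h | h
      · exact absurd (by linarith [sub_eq_zero.mp h] : hH.eigenvalues i = Δ) (hcon i)
      · exact h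
    -- hence the all-ones vector is zero, contradiction
    set onesE : EuclideanSpace ℝ (Fin n) := WithLp.toLp 2 (fun _ => 1) with honesE
    have hrepr : ∀ i, B.repr onesE i = 0 := by
      intro i
      rw [B.repr_apply_apply]
      rw [real_inner_comm]
      rw [PiLp.inner_apply]
      simpa [honesE] using hzero i
    have h0 : onesE = 0 := by
      apply B.repr.injective
      ext i
      rw [hrepr i, map_zero]
      rfl
    have : (1:ℝ) = 0 := by
      have := congrFun (congrArg (fun (z : EuclideanSpace ℝ (Fin n)) => (z : Fin n → ℝ)) h0)
        (Classical.arbitrary _)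
      simpa [honesE] using this
    exact one_ne_zero this
  obtain ⟨i₀, hi₀⟩ := hΔeig
  have hsup : (Δ:ℝ) ≤ ⨆ i, hH.eigenvalues i :=
    hi₀ ▸ le_ciSup (Set.Finite.bddAbove (Set.finite_range _)) i₀
  -- the minimal eigenvalue
  obtain ⟨i₁, -, hmin⟩ :=
    Finset.exists_min_image univ hH.eigenvalues ⟨Classical.arbitrary _, mem_univ _⟩
  set μ := hH.eigenvalues i₁ with hμ
  have hinf : ⨅ i, hH.eigenvalues i = μ :=
    le_antisymm (ciInf_le (Set.Finite.bddBelow (Set.finite_range _)) i₁)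
      (le_ciInf fun j => hmin j (mem_univ j))
  set x : Fin n → ℝ := ⇑(B i₁) with hx
  have hx2 : ∑ j, x j ^ 2 = 1 := by
    have h := B.orthonormal.1 i₁
    have h2 : Real.sqrt (∑ j, ‖(B i₁ : EuclideanSpace ℝ (Fin n)) j‖ ^ 2) = 1 := by
      rw [← EuclideanSpace.norm_eq]; exact h
    have h3 := Real.sqrt_eq_one.mp h2
    simpa [hx, Real.norm_eq_abs, sq_abs] using h3
  have heig := hH.mulVec_eigenvectorBasis i₁
  have hpt : ∀ i, α * (Δ * x i) + (1 - α) * (∑ j ∈ G.neighborFinset i, x j) = μ * x i := by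
    intro i
    have h := congrFun heig i
    rw [hmv] at h
    exact h
  set P := ∑ i, x i * ∑ j ∈ G.neighborFinset i, x j with hPdef
  have hP : μ = α * Δ + (1 - α) * P := by
    have h1 : ∑ i, x i * (μ * x i) = μ := by
      have : ∑ i, x i * (μ * x i) = μ * ∑ i, x i ^ 2 := by
        rw [Finset.mul_sum]; exact Finset.sum_congr rfl (fun i _ => by ring)
      rw [this, hx2, mul_one]
    have h2 : ∑ i, x i * (α * (Δ * x i) + (1 - α) * ∑ j ∈ G.neighborFinset i, x j)
        = ∑ i, x i * (μ * x i) := Finset.sum_congr rfl (fun i _ => by rw [hpt i])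
    have h3 : ∑ i, x i * (α * (Δ * x i) + (1 - α) * ∑ j ∈ G.neighborFinset i, x j)
        = α * Δ * (∑ i, x i ^ 2) + (1 - α) * P := by
      have hterm : ∀ i, x i * (α * (Δ * x i) + (1 - α) * ∑ j ∈ G.neighborFinset i, x j)
          = α * Δ * x i ^ 2 + (1 - α) * (x i * ∑ j ∈ G.neighborFinset i, x j) :=
        fun i => by ring
      rw [Finset.sum_congr rfl (fun i _ => hterm i), Finset.sum_add_distrib,
        ← Finset.mul_sum, ← Finset.mul_sum]
    rw [hx2, mul_one] at h3
    linarith [h1, h2.symm.trans h3]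
  -- the quadratic form identity
  set S := ∑ i, ∑ j ∈ G.neighborFinset i, (x i + x j) ^ 2 with hSdef
  have hSid : S = 2 * Δ + 2 * P := by
    have hexp : ∀ i, ∑ j ∈ G.neighborFinset i, (x i + x j) ^ 2
        = (Δ : ℝ) * x i ^ 2 + 2 * (x i * ∑ j ∈ G.neighborFinset i, x j)
          + ∑ j ∈ G.neighborFinset i, x j ^ 2 := by
      intro i
      have e1 : ∑ j ∈ G.neighborFinset i, (x i + x j) ^ 2
          = ∑ j ∈ G.neighborFinset i, (x i ^ 2 + (2 * (x i * x j) + x j ^ 2)) :=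
        Finset.sum_congr rfl (fun j _ => by ring)
      rw [e1, Finset.sum_add_distrib, Finset.sum_add_distrib, Finset.sum_const,
        card_neighborFinset_eq_degree, hreg i, nsmul_eq_mul]
      have e2 : ∑ j ∈ G.neighborFinset i, 2 * (x i * x j)
          = 2 * (x i * ∑ j ∈ G.neighborFinset i, x j) := by
        simp only [Finset.mul_sum]
      rw [e2]; ring
    rw [hSdef, Finset.sum_congr rfl (fun i _ => hexp i), Finset.sum_add_distrib,
      Finset.sum_add_distrib]
    have t1 : ∑ i, (Δ:ℝ) * x i ^ 2 = (Δ:ℝ) := by rw [← Finset.mul_sum, hx2, mul_one]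
    have t2 : ∑ i, 2 * (x i * ∑ j ∈ G.neighborFinset i, x j) = 2 * P := by
      rw [hPdef, Finset.mul_sum]
    have t3 : ∑ i, ∑ j ∈ G.neighborFinset i, x j ^ 2 = (Δ:ℝ) := by
      rw [sum_neighbors G hreg (fun j => x j ^ 2), hx2, mul_one]
    rw [t1, t2, t3]
    ring
  have hkey := key_bound G hconn hnb x hx2
  rw [← hSdef] at hkey
  -- Δ ≥ 1
  have hΔ1 : (1:ℝ) ≤ Δ := by
    have hex : ∃ v w, G.Adj v w := by
      by_contra hno; push_neg at hno
      exact hnb ⟨Coloring.mk (fun _ => (0 : Fin 2)) (fun {a b} hab => absurd hab (hno a b))⟩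
    obtain ⟨v, w, hvw⟩ := hex
    have hd : 0 < G.degree v := (G.degree_pos_iff_exists_adj v).mpr ⟨w, hvw⟩
    rw [hreg v] at hd
    exact_mod_cast hd
  -- final arithmetic
  rw [ge_iff_le, hinf]
  set c : ℝ := (n : ℝ) * ((G.diam : ℝ) + 1) with hc
  have hcpos : (0:ℝ) < c := by positivity
  have hc1 : (1:ℝ) ≤ c := by
    have hD : (0:ℝ) ≤ (G.diam : ℝ) := by positivity
    nlinarith
  have h1c : 1 / c ≤ (Δ : ℝ) := by
    rw [div_le_iff₀ hcpos]; nlinarith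
  have hPbound : 1 / c - Δ ≤ P := by
    have : 2 / c ≤ 2 * Δ + 2 * P := hSid ▸ hkey
    have h2c : 2 / c = 2 * (1 / c) := by ring
    linarith [h2c ▸ this]
  have hprod1 : 2 * α * (1 / c) ≤ 2 * α * Δ :=
    mul_le_mul_of_nonneg_left h1c (by positivity)
  have hprod2 : (1 - α) * (1 / c - Δ) ≤ (1 - α) * P :=
    mul_le_mul_of_nonneg_left hPbound (by linarith)
  have heq : (1 + α) / c = 2 * α * (1 / c) + (1 - α) * (1 / c) := by ring
  calc (1 + α) / c = 2 * α * (1 / c) + (1 - α) * (1 / c) := heq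
  _ ≤ 2 * α * Δ + ((1 - α) * (1 / c - Δ) + (1 - α) * Δ) := by linarith
  _ ≤ Δ + μ := by
      rw [hP]
      have : (1 - α) * (1 / c - Δ) ≤ (1 - α) * P := hprod2
      nlinarith
  _ ≤ (⨆ i, hH.eigenvalues i) + μ := by linarith [hsup]
end

section
/- Let G be a graph with n vertices, m edges, minimum degree δ, clique number ω, and α ∈ [0,1]. Then αδ - sqrt(2m(1-α)(1 - 1/ω)) ≤ λₙ(A_α(G)) ≤ αδ + sqrt(2m(1-α)(1 - 1/ω)). -/
open Matrix SimpleGraph Finset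

variable {N : ℕ}

lemma inner_eq_dot (x y : EuclideanSpace ℝ (Fin N)) :
    (inner ℝ x y : ℝ) = (x : Fin N → ℝ) ⬝ᵥ (y : Fin N → ℝ) := by
  simp [PiLp.inner_apply, dotProduct, mul_comm]

lemma herm_symm_dot {A : Matrix (Fin N) (Fin N) ℝ} (hA : A.IsHermitian) (x y : Fin N → ℝ) :
    x ⬝ᵥ (A *ᵥ y) = (A *ᵥ x) ⬝ᵥ y := by
  have hT : Aᵀ = A := by rw [← conjTranspose_eq_transpose_of_trivial]; exact hA.eq
  rw [dotProduct_mulVec, ← mulVec_transpose, hT]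

/-- key expansion: quadratic form in eigencoordinates -/
lemma dot_eq_sum_eigen {A : Matrix (Fin N) (Fin N) ℝ} (hA : A.IsHermitian)
    (x : EuclideanSpace ℝ (Fin N)) :
    (x : Fin N → ℝ) ⬝ᵥ (A *ᵥ x) =
      ∑ i, hA.eigenvalues i * (inner ℝ (hA.eigenvectorBasis i) x : ℝ)^2 := by
  have h := hA.eigenvectorBasis.sum_inner_mul_inner x (((WithLp.equiv 2 _).symm (A *ᵥ x)) : EuclideanSpace ℝ (Fin N))
  rw [inner_eq_dot] at h
  refine Eq.trans (Eq.symm h) (Finset.sum_congr rfl ?_)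
  intro i _
  have h2 : (inner ℝ (hA.eigenvectorBasis i) (((WithLp.equiv 2 _).symm (A *ᵥ x)) : EuclideanSpace ℝ (Fin N)) : ℝ)
      = hA.eigenvalues i * (inner ℝ (hA.eigenvectorBasis i) x : ℝ) := by
    rw [inner_eq_dot, inner_eq_dot]
    have : ((((WithLp.equiv 2 _).symm (A *ᵥ x)) : EuclideanSpace ℝ (Fin N)) : Fin N → ℝ) = A *ᵥ x := rfl
    rw [this, herm_symm_dot hA]
    have h3 := congrArg (fun v : Fin N → ℝ => v ⬝ᵥ (x : Fin N → ℝ)) (hA.mulVec_eigenvectorBasis i)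
    simp only at h3
    refine h3.trans ?_
    rw [smul_dotProduct]
    rfl
  rw [h2, real_inner_comm x]
  ring

lemma parseval_sq {A : Matrix (Fin N) (Fin N) ℝ} (hA : A.IsHermitian)
    (x : EuclideanSpace ℝ (Fin N)) :
    ∑ i, (x i)^2 = ∑ i, (inner ℝ (hA.eigenvectorBasis i) x : ℝ)^2 := by
  have h := hA.eigenvectorBasis.sum_inner_mul_inner x x
  rw [inner_eq_dot] at h
  have : (x : Fin N → ℝ) ⬝ᵥ (x : Fin N → ℝ) = ∑ i, (x i)^2 := by
    simp [dotProduct, pow_two]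
  rw [← this, ← h]
  apply Finset.sum_congr rfl
  intro i _
  rw [real_inner_comm x]; ring

lemma inf_mul_le_dot {A : Matrix (Fin N) (Fin N) ℝ} (hN : 0 < N) (hA : A.IsHermitian)
    (x : EuclideanSpace ℝ (Fin N)) :
    (⨅ i, hA.eigenvalues i) * ∑ i, (x i)^2 ≤ (x : Fin N → ℝ) ⬝ᵥ (A *ᵥ x) := by
  haveI : Nonempty (Fin N) := ⟨⟨0, hN⟩⟩
  rw [dot_eq_sum_eigen hA, parseval_sq hA, Finset.mul_sum]
  refine Finset.sum_le_sum fun i _ => ?_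
  exact mul_le_mul_of_nonneg_right (ciInf_le (Set.Finite.bddBelow (Set.finite_range _)) i)
    (sq_nonneg _)

lemma dot_le_sup_mul {A : Matrix (Fin N) (Fin N) ℝ} (hN : 0 < N) (hA : A.IsHermitian)
    (x : EuclideanSpace ℝ (Fin N)) :
    (x : Fin N → ℝ) ⬝ᵥ (A *ᵥ x) ≤ (⨆ i, hA.eigenvalues i) * ∑ i, (x i)^2 := by
  haveI : Nonempty (Fin N) := ⟨⟨0, hN⟩⟩
  rw [dot_eq_sum_eigen hA, parseval_sq hA, Finset.mul_sum]
  refine Finset.sum_le_sum fun i _ => ?_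
  exact mul_le_mul_of_nonneg_right (le_ciSup (Set.Finite.bddAbove (Set.finite_range _)) i)
    (sq_nonneg _)

lemma eigenvec_dot {A : Matrix (Fin N) (Fin N) ℝ} (hA : A.IsHermitian) (i : Fin N) :
    (hA.eigenvectorBasis i : Fin N → ℝ) ⬝ᵥ (A *ᵥ (hA.eigenvectorBasis i : Fin N → ℝ))
      = hA.eigenvalues i ∧ ∑ j, (hA.eigenvectorBasis i j)^2 = 1 := by
  have hnorm : (inner ℝ (hA.eigenvectorBasis i) (hA.eigenvectorBasis i) : ℝ) = 1 := by
    rw [real_inner_self_eq_norm_sq, hA.eigenvectorBasis.orthonormal.1 i]; norm_num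
  have hsum : ∑ j, (hA.eigenvectorBasis i j)^2 = 1 := by
    rw [← hnorm, inner_eq_dot]
    simp [dotProduct, pow_two]
  refine ⟨?_, hsum⟩
  have h3 := congrArg (fun v : Fin N → ℝ =>
    (hA.eigenvectorBasis i : Fin N → ℝ) ⬝ᵥ v) (hA.mulVec_eigenvectorBasis i)
  simp only at h3
  refine h3.trans ?_
  have hone : (hA.eigenvectorBasis i : Fin N → ℝ) ⬝ᵥ (hA.eigenvectorBasis i : Fin N → ℝ) = 1 := by
    rw [← hsum]; simp [dotProduct, pow_two]
  rw [dotProduct_smul, smul_eq_mul,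
    show ((hA.eigenvectorBasis i : Fin N → ℝ) ⬝ᵥ (hA.eigenvectorBasis i : Fin N → ℝ) : ℝ) = 1 from hone, mul_one]

lemma sum_eigen {A : Matrix (Fin N) (Fin N) ℝ} (hA : A.IsHermitian) :
    ∑ i, hA.eigenvalues i = A.trace := by
  have h := congrArg Matrix.trace (show star (hA.eigenvectorUnitary : Matrix (Fin N) (Fin N) ℝ) * A * (hA.eigenvectorUnitary : Matrix (Fin N) (Fin N) ℝ) = Matrix.diagonal (RCLike.ofReal ∘ hA.eigenvalues) from by
    have := hA.conjStarAlgAut_star_eigenvectorUnitary; rwa [Unitary.conjStarAlgAut_star_apply] at this)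
  rw [Matrix.trace_mul_cycle,
    (Matrix.mem_unitaryGroup_iff).mp (hA.eigenvectorUnitary).2, Matrix.one_mul] at h
  rw [h, Matrix.trace_diagonal]
  rfl

lemma sum_eigen_sq {A : Matrix (Fin N) (Fin N) ℝ} (hA : A.IsHermitian) :
    ∑ i, (hA.eigenvalues i)^2 = (A * A).trace := by
  have h : star (hA.eigenvectorUnitary : Matrix (Fin N) (Fin N) ℝ) * A * (hA.eigenvectorUnitary : Matrix (Fin N) (Fin N) ℝ) = Matrix.diagonal (RCLike.ofReal ∘ hA.eigenvalues) := by
    have := hA.conjStarAlgAut_star_eigenvectorUnitary; rwa [Unitary.conjStarAlgAut_star_apply] at this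
  have hU : (hA.eigenvectorUnitary : Matrix (Fin N) (Fin N) ℝ)
      * star (hA.eigenvectorUnitary : Matrix (Fin N) (Fin N) ℝ) = 1 :=
    (Matrix.mem_unitaryGroup_iff).mp (hA.eigenvectorUnitary).2
  have h2 : star (hA.eigenvectorUnitary : Matrix (Fin N) (Fin N) ℝ) * (A * A)
      * (hA.eigenvectorUnitary : Matrix (Fin N) (Fin N) ℝ)
      = Matrix.diagonal (RCLike.ofReal ∘ hA.eigenvalues) * Matrix.diagonal (RCLike.ofReal ∘ hA.eigenvalues) := by
    rw [← h]
    set U := (hA.eigenvectorUnitary : Matrix (Fin N) (Fin N) ℝ)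
    calc star U * (A * A) * U = star U * A * (U * star U) * A * U := by
          rw [hU]; noncomm_ring
      _ = (star U * A * U) * (star U * A * U) := by noncomm_ring
  have h3 := congrArg Matrix.trace h2
  rw [Matrix.trace_mul_cycle, hU, Matrix.one_mul] at h3
  rw [h3, Matrix.diagonal_mul_diagonal, Matrix.trace_diagonal]
  simp [pow_two]

lemma adjH {n : ℕ} (G : SimpleGraph (Fin n)) [DecidableRel G.Adj] :
    (G.adjMatrix ℝ).IsHermitian := by
  rw [Matrix.IsHermitian, conjTranspose_eq_transpose_of_trivial]
  exact G.isSymm_adjMatrix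

lemma adj_entry_nonneg {n : ℕ} (G : SimpleGraph (Fin n)) [DecidableRel G.Adj] (i j : Fin n) :
    0 ≤ G.adjMatrix ℝ i j := by
  rw [adjMatrix_apply]; positivity

/-- smallest adjacency eigenvalue is at least -√m -/
lemma adj_inf_ge {n : ℕ} (hn : 0 < n) (G : SimpleGraph (Fin n)) [DecidableRel G.Adj] :
    -Real.sqrt (G.edgeFinset.card) ≤ ⨅ i, (adjH G).eigenvalues i := by
  haveI : Nonempty (Fin n) := ⟨⟨0, hn⟩⟩
  set lam := (adjH G).eigenvalues with hlam
  set I := ⨅ i, lam i with hI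
  set S := ⨆ i, lam i with hS
  by_cases hI0 : 0 ≤ I
  · linarith [Real.sqrt_nonneg (G.edgeFinset.card : ℝ)]
  push_neg at hI0
  -- sum of eigenvalues = 0
  have hsum0 : ∑ i, lam i = 0 := by
    rw [sum_eigen (adjH G), trace_adjMatrix]
  -- sum of squares = 2m
  have hsumsq : ∑ i, (lam i)^2 = 2 * (G.edgeFinset.card : ℝ) := by
    rw [sum_eigen_sq (adjH G)]
    rw [Matrix.trace]
    have : ∀ i, (G.adjMatrix ℝ * G.adjMatrix ℝ).diag i = (G.degree i : ℝ) := fun i =>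
      G.adjMatrix_mul_self_apply_self i
    rw [Finset.sum_congr rfl fun i _ => this i]
    rw [← Nat.cast_sum, G.sum_degrees_eq_twice_card_edges]
    push_cast; ring
  -- S ≥ 0
  have hS0 : 0 ≤ S := by
    by_contra hc
    push_neg at hc
    have : ∑ i, lam i < 0 := by
      have h1 : ∀ i ∈ Finset.univ, lam i ≤ S := fun i _ =>
        le_ciSup (Set.Finite.bddAbove (Set.finite_range _)) i
      calc ∑ i, lam i ≤ ∑ _i : Fin n, S := Finset.sum_le_sum h1
        _ = n * S := by rw [Finset.sum_const, Finset.card_univ, Fintype.card_fin]; simp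
        _ < 0 := by
          apply mul_neg_of_pos_of_neg _ hc
          exact_mod_cast hn
    linarith [hsum0]
  -- attainment
  obtain ⟨i₀, _, hi₀⟩ := Finset.exists_min_image Finset.univ lam ⟨⟨0, hn⟩, Finset.mem_univ _⟩
  obtain ⟨j₀, _, hj₀⟩ := Finset.exists_max_image Finset.univ lam ⟨⟨0, hn⟩, Finset.mem_univ _⟩
  have hIi : I = lam i₀ := le_antisymm (ciInf_le (Set.Finite.bddBelow (Set.finite_range _)) i₀)
    (le_ciInf fun j => hi₀ j (Finset.mem_univ _))
  have hSj : S = lam j₀ := le_antisymm (ciSup_le fun j => hj₀ j (Finset.mem_univ _))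
    (le_ciSup (Set.Finite.bddAbove (Set.finite_range _)) j₀)
  -- |I| ≤ S via ‖x‖ trick
  have habs : -S ≤ I := by
    obtain ⟨hdot, hunit⟩ := eigenvec_dot (adjH G) i₀
    set x : Fin n → ℝ := ((adjH G).eigenvectorBasis i₀ : Fin n → ℝ) with hx
    set y : EuclideanSpace ℝ (Fin n) := (WithLp.equiv 2 (Fin n → ℝ)).symm (fun i => |x i|) with hy
    have hysum : ∑ i, (y i)^2 = 1 := by
      rw [← hunit]
      exact Finset.sum_congr rfl fun i _ => by simp [hy, sq_abs]
    have hexp : ∀ v : Fin n → ℝ, v ⬝ᵥ (G.adjMatrix ℝ *ᵥ v)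
        = ∑ i, ∑ j, G.adjMatrix ℝ i j * v i * v j := by
      intro v
      simp only [dotProduct, mulVec, Finset.mul_sum]
      exact Finset.sum_congr rfl fun i _ => Finset.sum_congr rfl fun j _ => by ring
    have hyx : (y : Fin n → ℝ) = fun i => |x i| := rfl
    have h1 : -(x ⬝ᵥ (G.adjMatrix ℝ *ᵥ x)) ≤ (y : Fin n → ℝ) ⬝ᵥ (G.adjMatrix ℝ *ᵥ (y : Fin n → ℝ)) := by
      rw [hexp x, hexp ((y : Fin n → ℝ)), hyx]
      rw [← Finset.sum_neg_distrib]
      refine Finset.sum_le_sum fun i _ => ?_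
      rw [← Finset.sum_neg_distrib]
      refine Finset.sum_le_sum fun j _ => ?_
      have hn1 : -(x i * x j) ≤ |x i| * |x j| := by
        rw [← abs_mul]; exact neg_le_abs _
      calc -(G.adjMatrix ℝ i j * x i * x j) = G.adjMatrix ℝ i j * (-(x i * x j)) := by ring
        _ ≤ G.adjMatrix ℝ i j * (|x i| * |x j|) :=
            mul_le_mul_of_nonneg_left hn1 (adj_entry_nonneg G i j)
        _ = G.adjMatrix ℝ i j * |x i| * |x j| := by ring
    have h2 := dot_le_sup_mul hn (adjH G) y
    rw [hysum, mul_one] at h2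
    have h2' : (y : Fin n → ℝ) ⬝ᵥ (G.adjMatrix ℝ *ᵥ (y : Fin n → ℝ)) ≤ S := h2
    rw [hIi]
    have hdot' : x ⬝ᵥ (G.adjMatrix ℝ *ᵥ x) = lam i₀ := hdot
    linarith
  have hIS : I ≤ S := hIi ▸ hSj ▸ hi₀ j₀ (Finset.mem_univ _)
  -- I² + S² ≤ 2m
  have hij : i₀ ≠ j₀ := by
    intro h
    rw [hIi, h, ← hSj] at hI0
    linarith
  have hsq : I^2 + S^2 ≤ 2 * (G.edgeFinset.card : ℝ) := by
    rw [← hsumsq, hIi, hSj]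
    have : ({i₀, j₀} : Finset (Fin n)) ⊆ Finset.univ := Finset.subset_univ _
    calc lam i₀ ^2 + lam j₀ ^2 = ∑ i ∈ ({i₀, j₀} : Finset (Fin n)), lam i ^2 := by
          rw [Finset.sum_pair hij]
      _ ≤ ∑ i, lam i ^2 := Finset.sum_le_sum_of_subset_of_nonneg this
          fun i _ _ => sq_nonneg _
  have hI2 : I^2 ≤ (G.edgeFinset.card : ℝ) := by nlinarith
  have := Real.sqrt_le_sqrt hI2
  rw [Real.sqrt_sq_eq_abs] at this
  have := neg_abs_le I
  nlinarith [Real.sqrt_nonneg (G.edgeFinset.card : ℝ), Real.sq_sqrt (by positivity : (0:ℝ) ≤ (G.edgeFinset.card : ℝ))]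

theorem stmt8 {n : ℕ} (hn : 0 < n) (G : SimpleGraph (Fin n)) [DecidableRel G.Adj]
    (α : ℝ) (hα0 : 0 ≤ α) (hα1 : α ≤ 1)
    (m δ ω : ℕ) (hm : m = G.edgeFinset.card)
    (hδ : ∀ v, δ ≤ G.degree v) (hδ' : ∃ v, G.degree v = δ)
    (hω : ω = G.cliqueNum)
    (hH : (Aalpha G α).IsHermitian) :
    α * (δ : ℝ) - Real.sqrt (2 * m * (1 - α) * (1 - 1 / (ω : ℝ))) ≤ (⨅ i, hH.eigenvalues i) ∧
      (⨅ i, hH.eigenvalues i) ≤ α * (δ : ℝ) + Real.sqrt (2 * m * (1 - α) * (1 - 1 / (ω : ℝ))) := by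
  haveI : Nonempty (Fin n) := ⟨⟨0, hn⟩⟩
  have hBnn : 0 ≤ Real.sqrt (2 * m * (1 - α) * (1 - 1 / (ω : ℝ))) := Real.sqrt_nonneg _
  set B := Real.sqrt (2 * m * (1 - α) * (1 - 1 / (ω : ℝ))) with hB
  set L := ⨅ i, hH.eigenvalues i with hL
  constructor
  · -- lower bound
    obtain ⟨i₀, _, hi₀⟩ := Finset.exists_min_image Finset.univ hH.eigenvalues
      ⟨⟨0, hn⟩, Finset.mem_univ _⟩
    have hLi : L = hH.eigenvalues i₀ := le_antisymm
      (ciInf_le (Set.Finite.bddBelow (Set.finite_range _)) i₀)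
      (le_ciInf fun j => hi₀ j (Finset.mem_univ _))
    obtain ⟨hdot, hunit⟩ := eigenvec_dot hH i₀
    set x : Fin n → ℝ := (hH.eigenvectorBasis i₀ : Fin n → ℝ) with hx
    have hsplit : x ⬝ᵥ ((Aalpha G α) *ᵥ x)
        = α * (∑ i, (G.degree i : ℝ) * x i ^ 2)
          + (1 - α) * (x ⬝ᵥ (G.adjMatrix ℝ *ᵥ x)) := by
      rw [Aalpha, add_mulVec, dotProduct_add, smul_mulVec, smul_mulVec,
        dotProduct_smul, dotProduct_smul, smul_eq_mul, smul_eq_mul]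
      congr 1
      congr 1
      simp only [dotProduct, mulVec_diagonal]
      exact Finset.sum_congr rfl fun i _ => by ring
    have hdeg : α * (δ : ℝ) ≤ α * (∑ i, (G.degree i : ℝ) * x i ^ 2) := by
      apply mul_le_mul_of_nonneg_left _ hα0
      calc (δ : ℝ) = ∑ i, (δ : ℝ) * x i ^ 2 := by
            rw [← Finset.mul_sum, hunit, mul_one]
        _ ≤ ∑ i, (G.degree i : ℝ) * x i ^ 2 := Finset.sum_le_sum fun i _ =>
            mul_le_mul_of_nonneg_right (by exact_mod_cast hδ i) (sq_nonneg _)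
    -- adjacency part
    set t := x ⬝ᵥ (G.adjMatrix ℝ *ᵥ x) with ht
    have hadjpart : -B ≤ (1 - α) * t := by
      by_cases hm0 : G.edgeFinset.card = 0
      · have hadj0 : G.adjMatrix ℝ = 0 := by
          ext i j
          simp only [adjMatrix_apply, Matrix.zero_apply, ite_eq_right_iff, one_ne_zero]
          intro hadj
          have hmem : s(i, j) ∈ G.edgeFinset := by
            rw [SimpleGraph.mem_edgeFinset, SimpleGraph.mem_edgeSet]; exact hadj
          rw [Finset.card_eq_zero.mp hm0] at hmem
          exact absurd hmem (Finset.notMem_empty _)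
        have : t = 0 := by rw [ht, hadj0]; simp
        rw [this, mul_zero]
        linarith
      · -- m ≥ 1, so ω ≥ 2
        have hm1 : 1 ≤ G.edgeFinset.card := Nat.one_le_iff_ne_zero.mpr hm0
        have hGadj : ∃ u v, G.Adj u v := by
          obtain ⟨e, he⟩ := Finset.card_pos.mp (by omega : 0 < G.edgeFinset.card)
          rw [SimpleGraph.mem_edgeFinset] at he
          revert he
          refine Sym2.ind (fun u v he => ⟨u, v, (SimpleGraph.mem_edgeSet G).mp he⟩) e
        obtain ⟨u, v, huv⟩ := hGadj
        have hclique : G.IsClique (({u, v} : Finset (Fin n)) : Set (Fin n)) := by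
          rw [Finset.coe_insert, Finset.coe_singleton]
          exact SimpleGraph.isClique_pair.mpr fun _ => huv
        have hcard2 : ({u, v} : Finset (Fin n)).card = 2 := Finset.card_pair huv.ne
        have hω2 : 2 ≤ ω := by
          rw [hω, ← hcard2]
          exact SimpleGraph.IsClique.card_le_cliqueNum (tc := hclique)
        have hω2' : (2 : ℝ) ≤ (ω : ℝ) := by exact_mod_cast hω2
        have hwfrac : 1 / (ω : ℝ) ≤ 1 / 2 :=
          one_div_le_one_div_of_le (by norm_num) hω2'
        have hmr : (1 : ℝ) ≤ (m : ℝ) := by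
          rw [hm]; exact_mod_cast hm1
        -- t ≥ -√m
        have hts : -Real.sqrt (m : ℝ) ≤ t := by
          have h1 := inf_mul_le_dot hn (adjH G) ((WithLp.equiv 2 (Fin n → ℝ)).symm x)
          have h2 : (∑ i, x i ^ 2) = 1 := hunit
          have h3 : ((WithLp.equiv 2 (Fin n → ℝ)).symm x : Fin n → ℝ) = x := rfl
          rw [h3, h2, mul_one] at h1
          have h4 := adj_inf_ge hn G
          rw [← hm] at h4
          linarith
        have ha : 0 ≤ 1 - α := by linarith
        have step1 : -((1 - α) * Real.sqrt (m : ℝ)) ≤ (1 - α) * t := by nlinarith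
        have step2 : (1 - α) * Real.sqrt (m : ℝ) ≤ B := by
          have e1 : (1 - α) * Real.sqrt (m : ℝ) = Real.sqrt ((1 - α) ^ 2 * (m : ℝ)) := by
            rw [Real.sqrt_mul (sq_nonneg _), Real.sqrt_sq ha]
          rw [e1, hB]
          apply Real.sqrt_le_sqrt
          have hM0 : (0:ℝ) ≤ (m : ℝ) := by positivity
          nlinarith [mul_nonneg (mul_nonneg ha hM0) (by linarith : (0:ℝ) ≤ 1 - 2 * (1/(ω:ℝ))),
            mul_nonneg (mul_nonneg ha hM0) hα0]
        linarith
    have : α * (δ : ℝ) - B ≤ hH.eigenvalues i₀ := by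
      rw [← hdot, hsplit]
      linarith
    rw [hLi]; exact this
  · -- upper bound
    obtain ⟨v, hv⟩ := hδ'
    set x : EuclideanSpace ℝ (Fin n) := (WithLp.equiv 2 (Fin n → ℝ)).symm (Pi.single v 1) with hxdef
    have h1 := inf_mul_le_dot hn hH x
    have hxcoe : (x : Fin n → ℝ) = Pi.single v 1 := rfl
    have hsum1 : (∑ i, x i ^ 2) = 1 := by
      rw [show (fun i => x i ^ 2) = fun i => (Pi.single v 1 : Fin n → ℝ) i ^ 2 from rfl]
      have hterm : ∀ i, (Pi.single v 1 : Fin n → ℝ) i ^ 2 = if i = v then 1 else 0 := by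
        intro i; by_cases h : i = v <;> simp [Pi.single_apply, h]
      rw [Finset.sum_congr rfl fun i _ => hterm i, Finset.sum_ite_eq' Finset.univ v fun _ => (1:ℝ)]
      simp
    have hquad : (x : Fin n → ℝ) ⬝ᵥ ((Aalpha G α) *ᵥ (x : Fin n → ℝ)) = α * (δ : ℝ) := by
      rw [hxcoe, mulVec_single, single_dotProduct, one_mul]
      simp only [Pi.smul_apply, Matrix.col_apply, MulOpposite.op_one, one_smul]
      rw [Aalpha]
      simp only [Matrix.add_apply, Matrix.smul_apply, Matrix.diagonal_apply_eq,
        adjMatrix_apply, smul_eq_mul]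
      rw [if_neg (G.irrefl), mul_zero, add_zero, hv]
    rw [hsum1, mul_one] at h1
    rw [show ((x : Fin n → ℝ) ⬝ᵥ ((Aalpha G α) *ᵥ (x : Fin n → ℝ))) = α * (δ:ℝ) from hquad] at h1
    linarith
end

section
/- Let G be a simple graph with n ≥ 3 vertices, m edges, minimum degree δ and maximum degree Δ. Then the first Zagreb index satisfies Z₁(G) ≥ Δ² + δ² + (2m - Δ - δ)²/(n-2), with equality if and only if d₂ = d₃ = ... = d_{n-1} in the nonincreasing degree sequence. -/
open Matrix SimpleGraph Finset

lemma core {α : Type*} (S : Finset α) (hS : S.Nonempty) (f : α → ℝ) :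
    (∑ v ∈ S, f v)^2 / S.card ≤ ∑ v ∈ S, f v ^ 2 ∧
    ((∑ v ∈ S, f v)^2 / S.card = ∑ v ∈ S, f v ^ 2 ↔ ∀ a ∈ S, ∀ b ∈ S, f a = f b) := by
  have hk : (0:ℝ) < S.card := by exact_mod_cast Finset.card_pos.mpr hS
  set k : ℝ := (S.card : ℝ) with hkdef
  set T := ∑ v ∈ S, f v with hT
  set c := T / k with hc
  have key : ∑ v ∈ S, (f v - c)^2 = (∑ v ∈ S, f v^2) - T^2 / k := by
    have h1 : ∑ v ∈ S, (f v - c)^2 = ∑ v ∈ S, (f v^2 - 2*c*f v + c^2) := by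
      apply Finset.sum_congr rfl; intro v _; ring
    rw [h1, Finset.sum_add_distrib, Finset.sum_sub_distrib, ← Finset.mul_sum, ← hT,
      Finset.sum_const, nsmul_eq_mul, ← hkdef, hc]
    field_simp
    ring
  have hnn : 0 ≤ ∑ v ∈ S, (f v - c)^2 := Finset.sum_nonneg fun v _ => sq_nonneg _
  constructor
  · linarith [key ▸ hnn]
  constructor
  · intro h
    have h0 : ∑ v ∈ S, (f v - c)^2 = 0 := by rw [key, ← h]; ring
    have hz := (Finset.sum_eq_zero_iff_of_nonneg (fun v _ => sq_nonneg _)).mp h0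
    have hcv : ∀ v ∈ S, f v = c := by
      intro v hv
      have := sq_eq_zero_iff.mp (hz v hv)
      linarith [sub_eq_zero.mp this]
    intro a ha b hb
    rw [hcv a ha, hcv b hb]
  · intro hall
    obtain ⟨v0, hv0⟩ := hS
    have hconst : ∀ v ∈ S, f v = f v0 := fun v hv => hall v hv v0 hv0
    have hTe : T = k * f v0 := by
      rw [hT, Finset.sum_congr rfl hconst, Finset.sum_const, nsmul_eq_mul, hkdef]
    have hsq : ∑ v ∈ S, f v ^ 2 = k * f v0 ^ 2 := by
      rw [Finset.sum_congr rfl (fun v hv => by rw [hconst v hv]), Finset.sum_const,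
        nsmul_eq_mul, hkdef]
    rw [hTe, hsq]
    field_simp

lemma aux13 {n : ℕ} (hn : 3 ≤ n) (G : SimpleGraph (Fin n)) [DecidableRel G.Adj]
    (m Δ δ : ℕ) (hm : m = G.edgeFinset.card)
    (Z₁ : ℝ) (hZ : Z₁ = ∑ i : Fin n, (G.degree i : ℝ) ^ 2)
    (u w : Fin n) (huw : u ≠ w) (hu : G.degree u = Δ) (hw : G.degree w = δ) :
    Z₁ ≥ (Δ : ℝ) ^ 2 + (δ : ℝ) ^ 2 + (2 * (m : ℝ) - Δ - δ) ^ 2 / ((n : ℝ) - 2) ∧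
      (Z₁ = (Δ : ℝ) ^ 2 + (δ : ℝ) ^ 2 + (2 * (m : ℝ) - Δ - δ) ^ 2 / ((n : ℝ) - 2) ↔
        ∀ a b : Fin n, a ≠ u → a ≠ w → b ≠ u → b ≠ w → G.degree a = G.degree b) := by
  classical
  set f : Fin n → ℝ := fun v => (G.degree v : ℝ) with hf
  set S : Finset (Fin n) := (Finset.univ.erase u).erase w with hSdef
  have hwu : w ∈ Finset.univ.erase u := Finset.mem_erase.mpr ⟨huw.symm, Finset.mem_univ w⟩
  have hcard : S.card = n - 2 := by
    rw [hSdef, Finset.card_erase_of_mem hwu, Finset.card_erase_of_mem (Finset.mem_univ u),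
      Finset.card_univ, Fintype.card_fin]
    omega
  have hcardR : (S.card : ℝ) = (n : ℝ) - 2 := by
    rw [hcard]
    have : (2:ℕ) ≤ n := by omega
    push_cast [Nat.cast_sub this]
    ring
  have hSne : S.Nonempty := Finset.card_pos.mp (by omega)
  have hsplit : ∑ i : Fin n, f i = f u + (f w + ∑ v ∈ S, f v) := by
    rw [← Finset.add_sum_erase _ f (Finset.mem_univ u), ← Finset.add_sum_erase _ f hwu]
  have hsum2m : ∑ i : Fin n, f i = 2 * (m : ℝ) := by
    have := G.sum_degrees_eq_twice_card_edges
    rw [hf, hm]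
    rw [show ((2:ℝ) * (G.edgeFinset.card : ℝ)) = ((2 * G.edgeFinset.card : ℕ) : ℝ) by push_cast; ring, ← this]
    push_cast
    rfl
  have hTS : ∑ v ∈ S, f v = 2 * (m : ℝ) - Δ - δ := by
    have : f u = (Δ : ℝ) := by rw [hf]; exact_mod_cast congrArg _ hu
    have hw' : f w = (δ : ℝ) := by rw [hf]; exact_mod_cast congrArg _ hw
    rw [hsplit] at hsum2m
    rw [this, hw'] at hsum2m
    linarith
  have hZsplit : Z₁ = (Δ : ℝ)^2 + (δ : ℝ)^2 + ∑ v ∈ S, f v ^ 2 := by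
    have hsplit2 : ∑ i : Fin n, f i ^ 2 = f u ^ 2 + (f w ^ 2 + ∑ v ∈ S, f v ^ 2) := by
      rw [← Finset.add_sum_erase _ (fun v => f v ^ 2) (Finset.mem_univ u),
        ← Finset.add_sum_erase _ (fun v => f v ^ 2) hwu]
    rw [hZ]
    have hfu : f u = (Δ : ℝ) := by rw [hf]; exact_mod_cast congrArg _ hu
    have hfw : f w = (δ : ℝ) := by rw [hf]; exact_mod_cast congrArg _ hw
    calc ∑ i : Fin n, (G.degree i : ℝ) ^ 2 = ∑ i : Fin n, f i ^ 2 := rfl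
      _ = f u ^ 2 + (f w ^ 2 + ∑ v ∈ S, f v ^ 2) := hsplit2
      _ = (Δ : ℝ)^2 + (δ : ℝ)^2 + ∑ v ∈ S, f v ^ 2 := by rw [hfu, hfw]; ring
  obtain ⟨hineq, hiff⟩ := core S hSne f
  rw [hTS, hcardR] at hineq hiff
  have hmemS : ∀ a : Fin n, a ∈ S ↔ a ≠ u ∧ a ≠ w := by
    intro a
    rw [hSdef]
    simp [Finset.mem_erase, and_comm]
  constructor
  · rw [hZsplit]; linarith
  · rw [hZsplit]
    constructor
    · intro h
      intro a b hau haw hbu hbw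
      have ha : a ∈ S := (hmemS a).mpr ⟨hau, haw⟩
      have hb : b ∈ S := (hmemS b).mpr ⟨hbu, hbw⟩
      have hfab : f a = f b := hiff.mp (by linarith) a ha b hb
      simp only [hf] at hfab
      exact_mod_cast hfab
    · intro hall
      have : (2 * (m : ℝ) - Δ - δ) ^ 2 / ((n : ℝ) - 2) = ∑ v ∈ S, f v ^ 2 := by
        apply hiff.mpr
        intro a ha b hb
        obtain ⟨hau, haw⟩ := (hmemS a).mp ha
        obtain ⟨hbu, hbw⟩ := (hmemS b).mp hb
        rw [hf]
        exact_mod_cast congrArg Nat.cast (hall a b hau haw hbu hbw)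
      linarith

theorem stmt13 {n : ℕ} (hn : 3 ≤ n) (G : SimpleGraph (Fin n)) [DecidableRel G.Adj]
    (m Δ δ : ℕ) (hm : m = G.edgeFinset.card)
    (hΔ : ∀ v, G.degree v ≤ Δ) (hΔ' : ∃ v, G.degree v = Δ)
    (hδ : ∀ v, δ ≤ G.degree v) (hδ' : ∃ v, G.degree v = δ)
    (Z₁ : ℝ) (hZ : Z₁ = ∑ i : Fin n, (G.degree i : ℝ) ^ 2) :
    Z₁ ≥ (Δ : ℝ) ^ 2 + (δ : ℝ) ^ 2 + (2 * (m : ℝ) - Δ - δ) ^ 2 / ((n : ℝ) - 2) ∧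
      (Z₁ = (Δ : ℝ) ^ 2 + (δ : ℝ) ^ 2 + (2 * (m : ℝ) - Δ - δ) ^ 2 / ((n : ℝ) - 2) ↔
        ∃ u w : Fin n, u ≠ w ∧ G.degree u = Δ ∧ G.degree w = δ ∧
          ∀ a b : Fin n, a ≠ u → a ≠ w → b ≠ u → b ≠ w → G.degree a = G.degree b) := by
  obtain ⟨u, hu⟩ := hΔ'
  obtain ⟨w, hw⟩ := hδ'
  -- find distinct witnesses
  have hexists : ∃ u w : Fin n, u ≠ w ∧ G.degree u = Δ ∧ G.degree w = δ := by
    by_cases huw : u = w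
    · -- then Δ = δ and all degrees equal
      have hΔδ : Δ = δ := by rw [← hu, huw, hw]
      have hcard : 1 < Fintype.card (Fin n) := by rw [Fintype.card_fin]; omega
      obtain ⟨w', hw'⟩ := Fintype.exists_ne_of_one_lt_card hcard u
      refine ⟨u, w', (Ne.symm hw'), hu, ?_⟩
      have h1 := hΔ w'
      have h2 := hδ w'
      omega
    · exact ⟨u, w, huw, hu, hw⟩
  obtain ⟨u', w', hne, hu', hw'⟩ := hexists
  obtain ⟨hineq, hiff⟩ := aux13 hn G m Δ δ hm Z₁ hZ u' w' hne hu' hw'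
  refine ⟨hineq, ?_, ?_⟩
  · intro h
    exact ⟨u', w', hne, hu', hw', hiff.mp h⟩
  · rintro ⟨u'', w'', hne'', hu'', hw'', hall⟩
    obtain ⟨_, hiff2⟩ := aux13 hn G m Δ δ hm Z₁ hZ u'' w'' hne'' hu'' hw''
    exact hiff2.mpr hall
end

section
/- Let G be a graph with n vertices, m edges, minimum degree δ, and α ∈ [0,1]. Then λ₁(A_α(G)) ≤ (2αm + sqrt((n-1)(-4α²m² + 2mn((n+δ)α² - 2α + 1) - n²α²(n-1)δ)))/n. -/
open Matrix SimpleGraph Finset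

lemma trace_eq_sum_eig {n : ℕ} {A : Matrix (Fin n) (Fin n) ℝ} (hA : A.IsHermitian) :
    A.trace = ∑ i, hA.eigenvalues i := by
  conv_lhs => rw [hA.spectral_theorem, Unitary.conjStarAlgAut_apply]
  rw [Matrix.trace_mul_cycle]
  rw [show (star (hA.eigenvectorUnitary : Matrix (Fin n) (Fin n) ℝ)) *
      (hA.eigenvectorUnitary : Matrix (Fin n) (Fin n) ℝ) = 1 from
    Matrix.mem_unitaryGroup_iff'.mp hA.eigenvectorUnitary.2]
  rw [one_mul, Matrix.trace_diagonal]
  simp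

lemma trace_sq_eq_sum_eig_sq {n : ℕ} {A : Matrix (Fin n) (Fin n) ℝ} (hA : A.IsHermitian) :
    (A * A).trace = ∑ i, hA.eigenvalues i ^ 2 := by
  have hU : (star (hA.eigenvectorUnitary : Matrix (Fin n) (Fin n) ℝ)) *
      (hA.eigenvectorUnitary : Matrix (Fin n) (Fin n) ℝ) = 1 :=
    Matrix.mem_unitaryGroup_iff'.mp hA.eigenvectorUnitary.2
  set U := (hA.eigenvectorUnitary : Matrix (Fin n) (Fin n) ℝ)
  set D : Matrix (Fin n) (Fin n) ℝ := diagonal (RCLike.ofReal ∘ hA.eigenvalues) with hD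
  have h2 : A * A = U * (D * D) * star U := by
    conv_lhs => rw [hA.spectral_theorem, Unitary.conjStarAlgAut_apply]
    change (U * D * star U) * (U * D * star U) = _
    have : (U * D * star U) * (U * D * star U) = U * (D * (star U * U) * D) * star U := by
      noncomm_ring
    rw [this, hU, mul_one]
  rw [h2, Matrix.trace_mul_cycle, ← mul_assoc, hU, one_mul, hD, diagonal_mul_diagonal,
    Matrix.trace_diagonal]
  simp [sq]

lemma trace_Aalpha {n : ℕ} (G : SimpleGraph (Fin n)) [DecidableRel G.Adj] (α : ℝ) :
    (Aalpha G α).trace = α * ∑ i, (G.degree i : ℝ) := by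
  simp [Aalpha, Matrix.trace_add, Matrix.trace_smul, Matrix.trace_diagonal, smul_eq_mul]

lemma trace_Aalpha_sq {n : ℕ} (G : SimpleGraph (Fin n)) [DecidableRel G.Adj] (α : ℝ) :
    (Aalpha G α * Aalpha G α).trace =
      α ^ 2 * (∑ i, (G.degree i : ℝ) ^ 2) + (1 - α) ^ 2 * ∑ i, (G.degree i : ℝ) := by
  have hDA : Matrix.trace (Matrix.diagonal (fun i => (G.degree i : ℝ)) * G.adjMatrix ℝ) = 0 := by
    rw [Matrix.trace]
    apply Finset.sum_eq_zero
    intro x _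
    rw [Matrix.diag_apply, Matrix.diagonal_mul, SimpleGraph.adjMatrix_apply,
      if_neg (G.irrefl), mul_zero]
  have hAD : Matrix.trace (G.adjMatrix ℝ * Matrix.diagonal (fun i => (G.degree i : ℝ))) = 0 := by
    rw [Matrix.trace]
    apply Finset.sum_eq_zero
    intro x _
    rw [Matrix.diag_apply, Matrix.mul_diagonal, SimpleGraph.adjMatrix_apply,
      if_neg (G.irrefl), zero_mul]
  have hAA : Matrix.trace (G.adjMatrix ℝ * G.adjMatrix ℝ) = ∑ i, (G.degree i : ℝ) := by
    simp [Matrix.trace, Matrix.diag, G.adjMatrix_mul_self_apply_self]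
  have hDD : Matrix.trace (Matrix.diagonal (fun i => (G.degree i : ℝ)) *
      Matrix.diagonal (fun i => (G.degree i : ℝ))) = ∑ i, (G.degree i : ℝ) ^ 2 := by
    rw [Matrix.diagonal_mul_diagonal, Matrix.trace_diagonal]
    simp [sq]
  set β : ℝ := 1 - α with hβ
  have expand : Aalpha G α * Aalpha G α =
      (α * α) • (Matrix.diagonal (fun i => (G.degree i : ℝ)) *
        Matrix.diagonal (fun i => (G.degree i : ℝ))) +
      (α * β) • (Matrix.diagonal (fun i => (G.degree i : ℝ)) * G.adjMatrix ℝ) +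
      (β * α) • (G.adjMatrix ℝ * Matrix.diagonal (fun i => (G.degree i : ℝ))) +
      (β * β) • (G.adjMatrix ℝ * G.adjMatrix ℝ) := by
    show (α • _ + β • _) * (α • _ + β • _) = _
    simp only [add_mul, mul_add, smul_mul_assoc, mul_smul_comm, smul_smul, smul_add]
    module
  rw [expand]
  simp only [Matrix.trace_add, Matrix.trace_smul, hDA, hAD, hAA, hDD, smul_eq_mul, smul_zero]
  ring

theorem stmt15 {n : ℕ} (hn : 0 < n) (G : SimpleGraph (Fin n)) [DecidableRel G.Adj]
    (α : ℝ) (hα0 : 0 ≤ α) (hα1 : α ≤ 1)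
    (m δ : ℕ) (hm : m = G.edgeFinset.card)
    (hδ : ∀ v, δ ≤ G.degree v) (hδ' : ∃ v, G.degree v = δ)
    (hH : (Aalpha G α).IsHermitian) :
    (⨆ i, hH.eigenvalues i) ≤
      (2 * α * (m : ℝ) +
        Real.sqrt ((n - 1 : ℝ) *
          (-4 * α ^ 2 * (m : ℝ) ^ 2 +
            2 * (m : ℝ) * n * (((n : ℝ) + δ) * α ^ 2 - 2 * α + 1) -
            (n : ℝ) ^ 2 * α ^ 2 * ((n : ℝ) - 1) * δ))) / (n : ℝ) := by
  have hne : Nonempty (Fin n) := ⟨⟨0, hn⟩⟩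
  have hnn : (0 : ℝ) ≤ n := Nat.cast_nonneg n
  have hn1 : (1 : ℝ) ≤ n := by exact_mod_cast hn
  -- sum of degrees = 2m
  have hdeg : (∑ i, (G.degree i : ℝ)) = 2 * m := by
    rw [hm]
    exact_mod_cast G.sum_degrees_eq_twice_card_edges
  set t : ℝ := 2 * α * m with ht
  have hT : (Aalpha G α).trace = t := by
    rw [trace_Aalpha, hdeg]; ring
  set Z : ℝ := ∑ i, (G.degree i : ℝ) ^ 2 with hZ
  have hS : (Aalpha G α * Aalpha G α).trace = α ^ 2 * Z + (1 - α) ^ 2 * (2 * m) := by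
    rw [trace_Aalpha_sq, hdeg]
  -- Zagreb bound
  have hZbound : Z ≤ 2 * m * (n - 1) - δ * (n * (n - 1) - 2 * m) := by
    have key : ∀ i : Fin n, (G.degree i : ℝ) ^ 2 ≤
        (G.degree i : ℝ) * ((n : ℝ) - 1) - δ * ((n : ℝ) - 1 - G.degree i) := by
      intro i
      have h0 : G.degree i + 1 ≤ n := by
        have := G.degree_lt_card_verts i
        simpa [Fintype.card_fin] using this
      have h1 : (G.degree i : ℝ) ≤ (n : ℝ) - 1 := by
        have : ((G.degree i : ℝ)) + 1 ≤ n := by exact_mod_cast h0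
        linarith
      have h2 : (δ : ℝ) ≤ G.degree i := by exact_mod_cast hδ i
      nlinarith [mul_nonneg (sub_nonneg.mpr h2) (sub_nonneg.mpr h1)]
    calc Z ≤ ∑ i, ((G.degree i : ℝ) * ((n : ℝ) - 1) - δ * ((n : ℝ) - 1 - G.degree i)) :=
          Finset.sum_le_sum fun i _ => key i
      _ = (∑ i, (G.degree i : ℝ)) * ((n : ℝ) - 1)
            - δ * ((n : ℝ) * ((n : ℝ) - 1) - ∑ i, (G.degree i : ℝ)) := by
          rw [Finset.sum_sub_distrib, ← Finset.sum_mul, ← Finset.mul_sum]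
          congr 2
          rw [Finset.sum_sub_distrib, Finset.sum_const, Finset.card_univ, Fintype.card_fin,
            nsmul_eq_mul]
      _ = 2 * m * ((n : ℝ) - 1) - δ * ((n : ℝ) * ((n : ℝ) - 1) - 2 * m) := by rw [hdeg]
  -- the top eigenvalue
  obtain ⟨i₀, hi₀⟩ := exists_eq_ciSup_of_finite (f := hH.eigenvalues)
  set lam : ℝ := hH.eigenvalues i₀ with hlam
  rw [← hi₀]
  have hsum : ∑ i, hH.eigenvalues i = t := by rw [← trace_eq_sum_eig hH, hT]
  have hsumsq : ∑ i, hH.eigenvalues i ^ 2 = α ^ 2 * Z + (1 - α) ^ 2 * (2 * m) := by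
    rw [← trace_sq_eq_sum_eig_sq hH, hS]
  set s : ℝ := α ^ 2 * Z + (1 - α) ^ 2 * (2 * m) with hs
  -- Cauchy-Schwarz on remaining eigenvalues
  have hcard : ((Finset.univ.erase i₀).card : ℝ) = (n : ℝ) - 1 := by
    rw [Finset.card_erase_of_mem (Finset.mem_univ _)]
    simp only [Finset.card_univ, Fintype.card_fin]
    rw [Nat.cast_sub hn]; simp
  have hCS : (t - lam) ^ 2 ≤ ((n : ℝ) - 1) * (s - lam ^ 2) := by
    have e1 : ∑ i ∈ Finset.univ.erase i₀, hH.eigenvalues i = t - lam := by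
      rw [← hsum, Finset.sum_erase_eq_sub (Finset.mem_univ i₀)]
    have e2 : ∑ i ∈ Finset.univ.erase i₀, hH.eigenvalues i ^ 2 = s - lam ^ 2 := by
      rw [← hsumsq, Finset.sum_erase_eq_sub (Finset.mem_univ i₀)]
    have := sq_sum_le_card_mul_sum_sq (s := Finset.univ.erase i₀) (f := hH.eigenvalues)
    rw [e1, e2, hcard] at this
    exact this
  -- quadratic manipulation
  have hquad : ((n : ℝ) * lam - t) ^ 2 ≤ ((n : ℝ) - 1) * ((n : ℝ) * s - t ^ 2) := by
    have h1 : 0 ≤ (n : ℝ) * (((n : ℝ) - 1) * (s - lam ^ 2) - (t - lam) ^ 2) :=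
      mul_nonneg hnn (sub_nonneg.mpr hCS)
    have hid : ((n : ℝ) - 1) * ((n : ℝ) * s - t ^ 2) - ((n : ℝ) * lam - t) ^ 2 =
        (n : ℝ) * (((n : ℝ) - 1) * (s - lam ^ 2) - (t - lam) ^ 2) := by ring
    linarith [hid ▸ h1]
  set E : ℝ := -4 * α ^ 2 * (m : ℝ) ^ 2 +
      2 * (m : ℝ) * n * (((n : ℝ) + δ) * α ^ 2 - 2 * α + 1) -
      (n : ℝ) ^ 2 * α ^ 2 * ((n : ℝ) - 1) * δ with hE
  have hkey : (n : ℝ) * s - t ^ 2 ≤ E := by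
    have ha2 : (0 : ℝ) ≤ (n : ℝ) * α ^ 2 := mul_nonneg hnn (sq_nonneg α)
    have h := mul_le_mul_of_nonneg_left hZbound ha2
    calc (n : ℝ) * s - t ^ 2
        = ((n : ℝ) * α ^ 2) * Z + (2 * m * n * (1 - α) ^ 2 - 4 * α ^ 2 * (m : ℝ) ^ 2) := by
          rw [hs, ht]; ring
      _ ≤ ((n : ℝ) * α ^ 2) * (2 * m * ((n : ℝ) - 1) - δ * ((n : ℝ) * ((n : ℝ) - 1) - 2 * m))
            + (2 * m * n * (1 - α) ^ 2 - 4 * α ^ 2 * (m : ℝ) ^ 2) := by linarith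
      _ = E := by rw [hE]; ring
  have hfinal : ((n : ℝ) * lam - t) ^ 2 ≤ ((n : ℝ) - 1) * E :=
    le_trans hquad (mul_le_mul_of_nonneg_left hkey (by linarith))
  have hsqrt : (n : ℝ) * lam - t ≤ Real.sqrt (((n : ℝ) - 1) * E) := by
    calc (n : ℝ) * lam - t ≤ |(n : ℝ) * lam - t| := le_abs_self _
      _ = Real.sqrt (((n : ℝ) * lam - t) ^ 2) := (Real.sqrt_sq_eq_abs _).symm
      _ ≤ Real.sqrt (((n : ℝ) - 1) * E) := Real.sqrt_le_sqrt hfinal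
  have hnpos : (0 : ℝ) < n := by exact_mod_cast hn
  rw [le_div_iff₀ hnpos]
  rw [hE] at hsqrt
  linarith [hsqrt]
end

section
/- Let H_{n-1,Δ₂} be the connected graph on n vertices consisting of one vertex of degree n-1 joined to all other vertices, where the remaining n-1 vertices each have degree Δ₂ < n-1 (so they induce a (Δ₂-1)-regular graph). Then for α ∈ [0,1], λ₁(A_α(H_{n-1,Δ₂})) = (αn + Δ₂ - 1 + sqrt(α²n² + (Δ₂-1)² - 2α((n-2)Δ₂ + 3n - 2) + 4(n-1)))/2. -/
open Matrix SimpleGraph Finset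

lemma Aalpha_entry_nonneg {n : ℕ} (G : SimpleGraph (Fin n)) [DecidableRel G.Adj] {α : ℝ}
    (hα0 : 0 ≤ α) (hα1 : α ≤ 1) (i j : Fin n) : 0 ≤ Aalpha G α i j := by
  have hα1' : 0 ≤ 1 - α := by linarith
  simp only [Aalpha, Matrix.add_apply, Matrix.smul_apply, Matrix.diagonal_apply,
    adjMatrix_apply, smul_eq_mul]
  apply add_nonneg
  · split_ifs with h
    · exact mul_nonneg hα0 (Nat.cast_nonneg _)
    · simp
  · split_ifs with h
    · simpa using hα1'
    · simp


/-- Any eigenvalue of a real symmetric matrix occurs among `hA.eigenvalues`. -/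
lemma exists_eig_index {m : ℕ} {A : Matrix (Fin m) (Fin m) ℝ} (hA : A.IsHermitian)
    {u : Fin m → ℝ} (hu : u ≠ 0) {μ : ℝ} (h : A *ᵥ u = μ • u) :
    ∃ i, hA.eigenvalues i = μ := by
  have hmem : μ ∈ spectrum ℝ A := by
    rw [spectrum.mem_iff]
    intro hunit
    obtain ⟨⟨M, Minv, h1, h2⟩, hM⟩ := hunit
    apply hu
    have hzero : (algebraMap ℝ (Matrix (Fin m) (Fin m) ℝ) μ - A) *ᵥ u = 0 := by
      rw [sub_mulVec, Algebra.algebraMap_eq_smul_one]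
      rw [smul_mulVec, one_mulVec, h]
      simp
    have : Minv *ᵥ ((algebraMap ℝ (Matrix (Fin m) (Fin m) ℝ) μ - A) *ᵥ u) = u := by
      rw [mulVec_mulVec, ← hM, h2, one_mulVec]
    rw [hzero, mulVec_zero] at this
    exact this.symm
  rw [hA.spectrum_real_eq_range_eigenvalues] at hmem
  obtain ⟨i, hi⟩ := hmem
  exact ⟨i, hi⟩

/-- Perron-type upper bound: if a positive vector `u` satisfies `A *ᵥ u ≤ lam • u` entrywise,
`A` symmetric with nonnegative entries, then every eigenvalue of `A` is at most `lam`. -/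
lemma eig_le_of_pos_vec {m : ℕ} {A : Matrix (Fin m) (Fin m) ℝ} (hA : A.IsHermitian)
    (hnn : ∀ i j, 0 ≤ A i j) {u : Fin m → ℝ} (hu : ∀ j, 0 < u j) {lam : ℝ}
    (hAu : ∀ j, (A *ᵥ u) j ≤ lam * u j) (i : Fin m) : hA.eigenvalues i ≤ lam := by
  set μ := hA.eigenvalues i with hμ
  set v : Fin m → ℝ := ⇑(hA.eigenvectorBasis i) with hv
  have hv0 : ∃ j, v j ≠ 0 := by
    by_contra hcon
    push_neg at hcon
    have : hA.eigenvectorBasis i = 0 := by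
      ext j
      exact hcon j
    exact hA.eigenvectorBasis.orthonormal.ne_zero i this
  have hvA : A *ᵥ v = μ • v := hA.mulVec_eigenvectorBasis i
  have hsym : ∀ p q, A p q = A q p := by
    intro p q
    conv_lhs => rw [← hA]
    simp [conjTranspose_apply]
  set w : Fin m → ℝ := fun j => |v j| with hw
  have hwnn : ∀ j, 0 ≤ w j := fun j => abs_nonneg _
  have key : ∀ j, μ * w j ≤ (A *ᵥ w) j := by
    intro j
    have h1 : μ * w j ≤ |μ * v j| := by
      rw [abs_mul]
      calc μ * |v j| ≤ |μ| * |v j| := by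
            apply mul_le_mul_of_nonneg_right (le_abs_self μ) (abs_nonneg _)
        _ = |μ| * |v j| := rfl
    have h2 : |μ * v j| = |(A *ᵥ v) j| := by rw [hvA]; simp [Pi.smul_apply, smul_eq_mul]
    have h3 : |(A *ᵥ v) j| ≤ (A *ᵥ w) j := by
      rw [mulVec, dotProduct, mulVec, dotProduct]
      calc |∑ k, A j k * v k| ≤ ∑ k, |A j k * v k| := Finset.abs_sum_le_sum_abs _ _
        _ = ∑ k, A j k * w k := by
            apply Finset.sum_congr rfl
            intro k _
            rw [abs_mul, abs_of_nonneg (hnn j k)]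
    linarith
  set S := ∑ j, w j * u j with hS
  have hSpos : 0 < S := by
    obtain ⟨j0, hj0⟩ := hv0
    apply Finset.sum_pos' (fun j _ => mul_nonneg (hwnn j) (hu j).le)
    exact ⟨j0, Finset.mem_univ j0, mul_pos (abs_pos.mpr hj0) (hu j0)⟩
  have hswap : ∑ j, (A *ᵥ w) j * u j = ∑ k, w k * (A *ᵥ u) k := by
    simp only [mulVec, dotProduct, Finset.sum_mul, Finset.mul_sum]
    rw [Finset.sum_comm]
    apply Finset.sum_congr rfl
    intro k _
    apply Finset.sum_congr rfl
    intro j _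
    rw [hsym j k]
    ring
  have hub : ∑ k, w k * (A *ᵥ u) k ≤ lam * S := by
    rw [hS, Finset.mul_sum]
    apply Finset.sum_le_sum
    intro k _
    calc w k * (A *ᵥ u) k ≤ w k * (lam * u k) := by
          apply mul_le_mul_of_nonneg_left (hAu k) (hwnn k)
      _ = lam * (w k * u k) := by ring
  have hlb : μ * S ≤ ∑ j, (A *ᵥ w) j * u j := by
    rw [hS, Finset.mul_sum]
    apply Finset.sum_le_sum
    intro j _
    calc μ * (w j * u j) = (μ * w j) * u j := by ring
      _ ≤ (A *ᵥ w) j * u j := mul_le_mul_of_nonneg_right (key j) (hu j).le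
  have : μ * S ≤ lam * S := by
    calc μ * S ≤ ∑ j, (A *ᵥ w) j * u j := hlb
      _ = ∑ k, w k * (A *ᵥ u) k := hswap
      _ ≤ lam * S := hub
  exact le_of_mul_le_mul_right this hSpos

set_option maxHeartbeats 2000000 in
theorem stmt16 {n : ℕ} (hn : 2 ≤ n) (G : SimpleGraph (Fin n)) [DecidableRel G.Adj]
    (α : ℝ) (hα0 : 0 ≤ α) (hα1 : α ≤ 1)
    (Δ₂ : ℕ) (hΔ₂n : Δ₂ < n - 1)
    (c : Fin n) (hc : ∀ w ≠ c, G.Adj c w) (hdeg : ∀ w ≠ c, G.degree w = Δ₂)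
    (hH : (Aalpha G α).IsHermitian) :
    (⨆ i, hH.eigenvalues i) =
      (α * (n : ℝ) + (Δ₂ : ℝ) - 1 +
        Real.sqrt (α ^ 2 * (n : ℝ) ^ 2 + ((Δ₂ : ℝ) - 1) ^ 2 -
          2 * α * (((n : ℝ) - 2) * (Δ₂ : ℝ) + 3 * (n : ℝ) - 2) + 4 * ((n : ℝ) - 1))) / 2 := by
  classical
  have hn1 : 1 ≤ n := le_trans (by norm_num) hn
  have hnn := Aalpha_entry_nonneg G hα0 hα1
  -- notation
  set N : ℝ := (n : ℝ) with hNdef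
  set d : ℝ := (Δ₂ : ℝ) with hddef
  set E : ℝ := α ^ 2 * N ^ 2 + (d - 1) ^ 2 - 2 * α * ((N - 2) * d + 3 * N - 2) + 4 * (N - 1)
    with hEdef
  set s : ℝ := Real.sqrt E with hsdef
  set lam : ℝ := (α * N + d - 1 + s) / 2 with hlamdef
  -- basic numeric facts
  have hN2 : (2 : ℝ) ≤ N := by rw [hNdef]; exact_mod_cast hn
  have hdN : d + 2 ≤ N := by
    have h2 : Δ₂ + 2 ≤ n := by omega
    rw [hddef, hNdef]
    exact_mod_cast h2
  have hE' : E = (α * (N - 1) - (d - 1 + α)) ^ 2 + 4 * (N - 1) * (1 - α) ^ 2 := by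
    rw [hEdef]; ring
  have hEnn : 0 ≤ E := by nlinarith [sq_nonneg (α * (N - 1) - (d - 1 + α)), sq_nonneg (1 - α)]
  have hs2 : s ^ 2 = E := Real.sq_sqrt hEnn
  have hs0 : 0 ≤ s := Real.sqrt_nonneg _
  have hsge : |α * (N - 1) - (d - 1 + α)| ≤ s := by
    rw [hsdef, ← Real.sqrt_sq_eq_abs]
    apply Real.sqrt_le_sqrt
    nlinarith [sq_nonneg (1 - α)]
  have habs := abs_le.mp hsge
  have hlama : α * (N - 1) ≤ lam := by rw [hlamdef]; linarith [habs.1, habs.2]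
  have hlamb : d - 1 + α ≤ lam := by rw [hlamdef]; linarith [habs.1, habs.2]
  have hquad : (lam - α * (N - 1)) * (lam - (d - 1 + α)) = (N - 1) * (1 - α) ^ 2 := by
    have h4 : (lam - α * (N - 1)) * (lam - (d - 1 + α)) =
        (s ^ 2 - (α * (N - 1) - (d - 1 + α)) ^ 2) / 4 := by
      rw [hlamdef]; ring
    rw [h4, hs2, hE']; ring
  -- graph facts
  have hNc : G.neighborFinset c = Finset.univ.erase c := by
    ext w
    simp only [mem_neighborFinset, Finset.mem_erase, Finset.mem_univ, and_true]
    constructor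
    · intro h; exact h.ne'
    · intro h; exact hc w h
  have hdegc : G.degree c = n - 1 := by
    rw [SimpleGraph.degree, hNc, Finset.card_erase_of_mem (Finset.mem_univ c)]
    simp
  have hnR1 : ((n - 1 : ℕ) : ℝ) = N - 1 := by
    rw [hNdef]; push_cast [Nat.cast_sub hn1]; ring
  have hdegcR : (G.degree c : ℝ) = N - 1 := by rw [hdegc, hnR1]
  obtain ⟨w0, hw0⟩ : ∃ w : Fin n, w ≠ c := by
    have h1 : 1 < Fintype.card (Fin n) := by simp; omega
    exact Fintype.exists_ne_of_one_lt_card h1 c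
  have hΔ₂1 : 1 ≤ Δ₂ := by
    have h1 : c ∈ G.neighborFinset w0 := by
      rw [mem_neighborFinset]
      exact (hc w0 hw0).symm
    have h2 : 0 < G.degree w0 := Finset.card_pos.mpr ⟨c, h1⟩
    rw [hdeg w0 hw0] at h2
    omega
  have hdR1 : ((Δ₂ - 1 : ℕ) : ℝ) = d - 1 := by
    rw [hddef]; push_cast [Nat.cast_sub hΔ₂1]; ring
  -- mulVec computation for two-valued vectors
  have hmul : ∀ x y : ℝ, ∀ j : Fin n,
      (Aalpha G α *ᵥ (fun k => if k = c then x else y)) j =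
      if j = c then α * (N - 1) * x + (1 - α) * ((N - 1) * y)
      else α * d * y + (1 - α) * (x + (d - 1) * y) := by
    intro x y j
    have hexp : (Aalpha G α *ᵥ (fun k => if k = c then x else y)) j =
        α * ((G.degree j : ℝ) * (if j = c then x else y)) +
        (1 - α) * ∑ k ∈ G.neighborFinset j, (if k = c then x else y) := by
      simp [Aalpha, add_mulVec, smul_mulVec, Pi.add_apply, Pi.smul_apply,
        mulVec_diagonal, smul_eq_mul]
    by_cases hj : j = c
    · subst hj
      rw [hexp, if_pos rfl, if_pos rfl, hdegcR, hNc]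
      have hsum : ∑ k ∈ Finset.univ.erase j, (if k = j then x else y) = (N - 1) * y := by
        rw [Finset.sum_congr rfl (fun k hk => if_neg (Finset.mem_erase.mp hk).1),
          Finset.sum_const, Finset.card_erase_of_mem (Finset.mem_univ j)]
        simp only [Finset.card_univ, Fintype.card_fin, nsmul_eq_mul]
        rw [hnR1]
      rw [hsum]; ring
    · rw [hexp, if_neg hj, if_neg hj]
      have hcmem : c ∈ G.neighborFinset j := by
        rw [mem_neighborFinset]
        exact (hc j hj).symm
      have hcard : #(G.neighborFinset j) = Δ₂ := hdeg j hj
      have hsum : ∑ k ∈ G.neighborFinset j, (if k = c then x else y) = x + (d - 1) * y := by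
        rw [← Finset.add_sum_erase _ _ hcmem, if_pos rfl]
        congr 1
        rw [Finset.sum_congr rfl (fun k hk => if_neg (Finset.mem_erase.mp hk).1),
          Finset.sum_const, Finset.card_erase_of_mem hcmem, hcard, nsmul_eq_mul, hdR1]
      rw [hsum, hdeg j hj, ← hddef]; ring
  have : Nonempty (Fin n) := ⟨c⟩
  -- upper and lower bounds
  have hmain : (∀ i, hH.eigenvalues i ≤ lam) ∧ (∃ i, hH.eigenvalues i = lam) := by
    by_cases hone : α = 1
    · subst hone
      have hsE : s = N - 1 - d := by
        rw [hsdef, show E = (N - 1 - d) ^ 2 by rw [hEdef]; ring]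
        exact Real.sqrt_sq (by linarith)
      have hlamval : lam = N - 1 := by rw [hlamdef, hsE]; ring
      constructor
      · intro i
        apply eig_le_of_pos_vec hH hnn (u := fun k => if k = c then (1:ℝ) else 1)
        · intro j
          split_ifs <;> norm_num
        · intro j
          rw [hmul 1 1 j, hlamval]
          split_ifs with h
          · norm_num
          · norm_num; linarith
      · apply exists_eig_index hH (u := fun k => if k = c then (1:ℝ) else 0)
        · intro hcon
          have h1 := congrFun hcon c
          simp at h1
        · funext j
          rw [hmul 1 0 j, hlamval]
          simp only [Pi.smul_apply, smul_eq_mul]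
          split_ifs with h
          · ring
          · ring
    · have hlt : α < 1 := lt_of_le_of_ne hα1 hone
      have hy : 0 < 1 - α := by linarith
      have hx : 0 < lam - (d - 1 + α) := by
        rcases lt_or_eq_of_le (sub_nonneg.mpr hlamb) with h | h
        · exact h
        · exfalso
          have h1 : (N - 1) * (1 - α) ^ 2 = 0 := by rw [← hquad, ← h, mul_zero]
          have h2 : 0 < (1 - α) ^ 2 := pow_pos (by linarith) 2
          nlinarith
      have heig : Aalpha G α *ᵥ (fun k => if k = c then lam - (d - 1 + α) else 1 - α) =
          lam • (fun k => if k = c then lam - (d - 1 + α) else 1 - α) := by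
        funext j
        rw [hmul (lam - (d - 1 + α)) (1 - α) j]
        simp only [Pi.smul_apply, smul_eq_mul]
        split_ifs with h
        · linear_combination hquad - hs2 / 2
        · ring
      constructor
      · intro i
        apply eig_le_of_pos_vec hH hnn
          (u := fun k => if k = c then lam - (d - 1 + α) else 1 - α)
        · intro j
          split_ifs <;> assumption
        · intro j
          rw [congrFun heig j]
          simp only [Pi.smul_apply, smul_eq_mul]
          exact le_rfl
      · apply exists_eig_index hH
          (u := fun k => if k = c then lam - (d - 1 + α) else 1 - α) _ heig
        intro hcon
        have h1 := congrFun hcon w0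
        simp only [if_neg hw0, Pi.zero_apply] at h1
        exact absurd h1 (ne_of_gt hy)
  -- conclude
  obtain ⟨hub, i0, hi0⟩ := hmain
  apply le_antisymm
  · exact ciSup_le hub
  · calc lam = hH.eigenvalues i0 := hi0.symm
      _ ≤ ⨆ i, hH.eigenvalues i :=
        le_ciSup (Set.Finite.bddAbove (Set.finite_range _)) i0
end

section
/- Let G be a graph of order n with degrees d₁ ≥ d₂ ≥ ... ≥ dₙ and α ∈ [0,1]. Then for each k ∈ {1,...,n}, the k-th largest eigenvalue of A_α(G) satisfies λₖ(A_α(G)) ≤ dₖ; in particular λ₁(A_α(G)) ≤ Δ = d₁. -/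
open Matrix SimpleGraph Finset

open scoped RealInnerProductSpace

section Aux

variable {n : ℕ} {M : Matrix (Fin n) (Fin n) ℝ}

private lemma dot_inner' (x y : EuclideanSpace ℝ (Fin n)) : ⟪x, y⟫ = (x : Fin n → ℝ) ⬝ᵥ y := by
  simp [PiLp.inner_apply, dotProduct, RCLike.inner_apply, mul_comm]

private lemma symm_dot' (hM : M.IsHermitian) (v x : Fin n → ℝ) :
    v ⬝ᵥ (M *ᵥ x) = (M *ᵥ v) ⬝ᵥ x := by
  rw [dotProduct_mulVec, ← mulVec_transpose]
  congr 1
  rw [← conjTranspose_eq_transpose_of_trivial, hM.eq]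

private lemma sum_dotProduct'' (f : Fin n → Fin n → ℝ) (v : Fin n → ℝ) :
    (∑ i, f i) ⬝ᵥ v = ∑ i, f i ⬝ᵥ v := by
  simp only [dotProduct, Finset.sum_apply, Finset.sum_mul]
  exact Finset.sum_comm

private lemma quad_eq' (hM : M.IsHermitian) (x : EuclideanSpace ℝ (Fin n)) :
    (x : Fin n → ℝ) ⬝ᵥ (M *ᵥ x)
      = ∑ i, hM.eigenvalues i * ((hM.eigenvectorBasis i : Fin n → ℝ) ⬝ᵥ x)^2 := by
  set b := hM.eigenvectorBasis with hb
  have hx : ∑ i, ⟪b i, x⟫ • b i = x := b.sum_repr' x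
  have key : ∀ i, (b i : Fin n → ℝ) ⬝ᵥ (M *ᵥ x)
      = hM.eigenvalues i * ((b i : Fin n → ℝ) ⬝ᵥ x) := by
    intro i
    rw [symm_dot' hM,
      show (M *ᵥ (b i : Fin n → ℝ)) = hM.eigenvalues i • (b i : Fin n → ℝ) from
        hM.mulVec_eigenvectorBasis i, smul_dotProduct]
    rfl
  calc (x : Fin n → ℝ) ⬝ᵥ (M *ᵥ x)
      = (∑ i, ⟪b i, x⟫ • (b i : Fin n → ℝ)) ⬝ᵥ (M *ᵥ x) := by
        rw [show (∑ i, ⟪b i, x⟫ • (b i : Fin n → ℝ)) = (x : Fin n → ℝ) from by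
          have h := congrArg WithLp.ofLp hx; rw [WithLp.ofLp_sum] at h; exact h]
    _ = ∑ i, hM.eigenvalues i * ((b i : Fin n → ℝ) ⬝ᵥ x)^2 := by
        rw [sum_dotProduct'']
        refine Finset.sum_congr rfl fun i _ => ?_
        rw [smul_dotProduct, key i, dot_inner']
        simp only [smul_eq_mul]; ring

private lemma normsq_eq' (hM : M.IsHermitian) (x : EuclideanSpace ℝ (Fin n)) :
    (x : Fin n → ℝ) ⬝ᵥ x = ∑ i, ((hM.eigenvectorBasis i : Fin n → ℝ) ⬝ᵥ x)^2 := by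
  set b := hM.eigenvectorBasis with hb
  have hx : ∑ i, ⟪b i, x⟫ • b i = x := b.sum_repr' x
  calc (x : Fin n → ℝ) ⬝ᵥ x
      = (∑ i, ⟪b i, x⟫ • (b i : Fin n → ℝ)) ⬝ᵥ x := by
        rw [show (∑ i, ⟪b i, x⟫ • (b i : Fin n → ℝ)) = (x : Fin n → ℝ) from by
          have h := congrArg WithLp.ofLp hx; rw [WithLp.ofLp_sum] at h; exact h]
    _ = ∑ i, ((b i : Fin n → ℝ) ⬝ᵥ x)^2 := by
        rw [sum_dotProduct'']
        refine Finset.sum_congr rfl fun i _ => ?_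
        rw [smul_dotProduct, dot_inner']
        simp only [smul_eq_mul]; ring

private lemma adj_row_sum' (G : SimpleGraph (Fin n)) [DecidableRel G.Adj] (i : Fin n) :
    ∑ j, (G.adjMatrix ℝ) i j = (G.degree i : ℝ) := by
  simp [adjMatrix_apply, SimpleGraph.degree, neighborFinset_eq_filter, sum_boole]

private lemma form_bound' (G : SimpleGraph (Fin n)) [DecidableRel G.Adj] (α : ℝ)
    (hα0 : 0 ≤ α) (hα1 : α ≤ 1) (t : ℝ) (x : Fin n → ℝ)
    (hx : ∀ i, x i ≠ 0 → (G.degree i : ℝ) ≤ t) :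
    x ⬝ᵥ (Aalpha G α) *ᵥ x ≤ t * (x ⬝ᵥ x) := by
  have hdiag : ∀ i, (G.degree i : ℝ) * x i ^ 2 ≤ t * x i ^ 2 := by
    intro i
    by_cases h : x i = 0
    · simp [h]
    · exact mul_le_mul_of_nonneg_right (hx i h) (sq_nonneg _)
  have hsum1 : ∑ i, (G.degree i : ℝ) * x i ^ 2 ≤ t * (x ⬝ᵥ x) := by
    rw [show t * (x ⬝ᵥ x) = ∑ i, t * x i ^ 2 by simp [dotProduct, Finset.mul_sum]; ring_nf]
    exact Finset.sum_le_sum fun i _ => hdiag i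
  have hadj : x ⬝ᵥ (G.adjMatrix ℝ) *ᵥ x ≤ ∑ i, (G.degree i : ℝ) * x i ^ 2 := by
    have expand : x ⬝ᵥ (G.adjMatrix ℝ) *ᵥ x = ∑ i, ∑ j, (G.adjMatrix ℝ) i j * (x i * x j) := by
      simp [dotProduct, mulVec, Finset.mul_sum]
      try exact Finset.sum_congr rfl fun i _ => Finset.sum_congr rfl fun j _ => by ring
    rw [expand]
    have step1 : ∑ i, ∑ j, (G.adjMatrix ℝ) i j * (x i * x j)
        ≤ ∑ i, ∑ j, (G.adjMatrix ℝ) i j * ((x i ^ 2 + x j ^ 2) / 2) := by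
      refine Finset.sum_le_sum fun i _ => Finset.sum_le_sum fun j _ => ?_
      refine mul_le_mul_of_nonneg_left ?_ (by simp [adjMatrix_apply]; positivity)
      nlinarith [sq_nonneg (x i - x j)]
    refine step1.trans (le_of_eq ?_)
    have swap : ∑ i, ∑ j, (G.adjMatrix ℝ) i j * (x j ^ 2)
        = ∑ i, ∑ j, (G.adjMatrix ℝ) i j * (x i ^ 2) := by
      rw [Finset.sum_comm]
      refine Finset.sum_congr rfl fun i _ => Finset.sum_congr rfl fun j _ => ?_
      by_cases h : G.Adj i j
      · simp [h, h.symm]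
      · have h' : ¬ G.Adj j i := fun hh => h hh.symm
        simp [h, h']
    have e1 : ∀ (i j : Fin n), (G.adjMatrix ℝ) i j * ((x i ^ 2 + x j ^ 2) / 2)
        = (G.adjMatrix ℝ) i j * x i ^ 2 / 2 + (G.adjMatrix ℝ) i j * x j ^ 2 / 2 :=
      fun i j => by ring
    simp only [e1, Finset.sum_add_distrib, ← Finset.sum_div]
    rw [swap, add_halves]
    refine Finset.sum_congr rfl fun i _ => ?_
    rw [← Finset.sum_mul, adj_row_sum']
  have hdiagdot : x ⬝ᵥ (Matrix.diagonal (fun i => (G.degree i : ℝ))) *ᵥ x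
      = ∑ i, (G.degree i : ℝ) * x i ^ 2 := by
    simp [dotProduct, mulVec_diagonal]
    exact Finset.sum_congr rfl fun i _ => by ring
  have hexpand : x ⬝ᵥ (Aalpha G α) *ᵥ x
      = α * (x ⬝ᵥ (Matrix.diagonal (fun i => (G.degree i : ℝ))) *ᵥ x)
        + (1 - α) * (x ⬝ᵥ (G.adjMatrix ℝ) *ᵥ x) := by
    simp [Aalpha, add_mulVec, smul_mulVec, dotProduct_add, dotProduct_smul]
  rw [hexpand, hdiagdot]
  nlinarith [hsum1, hadj, hdiag]

/-- extension by zero as a linear map -/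
private noncomputable def extZero' (S : Finset (Fin n)) : ((↥S → ℝ)) →ₗ[ℝ] (Fin n → ℝ) where
  toFun y := fun j => if h : j ∈ S then y ⟨j, h⟩ else 0
  map_add' y z := by funext j; by_cases h : j ∈ S <;> simp [h]
  map_smul' c y := by funext j; by_cases h : j ∈ S <;> simp [h]

private lemma count_le' (hM : M.IsHermitian) (t : ℝ)
    (S : Finset (Fin n))
    (hform : ∀ x : Fin n → ℝ, (∀ i, x i ≠ 0 → i ∈ S) → x ⬝ᵥ (M *ᵥ x) ≤ t * (x ⬝ᵥ x)) :
    S.card ≤ (univ.filter fun i => hM.eigenvalues i ≤ t).card := by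
  classical
  set b := hM.eigenvectorBasis with hb
  set E : Finset (Fin n) := univ.filter fun i => hM.eigenvalues i ≤ t with hE
  let Φ : ((↥S → ℝ)) →ₗ[ℝ] ((↥E → ℝ)) :=
    { toFun := fun y => fun i => (b (i : Fin n) : Fin n → ℝ) ⬝ᵥ (extZero' S y)
      map_add' := fun y z => by funext i; simp [map_add, dotProduct_add]
      map_smul' := fun c y => by funext i; simp [_root_.map_smul, dotProduct_smul] }
  have hinj : Function.Injective Φ := by
    rw [← LinearMap.ker_eq_bot, LinearMap.ker_eq_bot']
    intro y hy
    by_contra hy0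
    set x : Fin n → ℝ := extZero' S y with hx
    have hxS : ∀ i, x i ≠ 0 → i ∈ S := by
      intro i hi
      by_contra h
      exact hi (by simp [hx, extZero', h])
    have hx0 : x ≠ 0 := by
      intro h
      apply hy0
      funext s
      have : x (s : Fin n) = y s := by simp [hx, extZero', s.2]
      rw [h] at this
      exact (this.symm.trans rfl).symm ▸ this.symm
    have hc0 : ∀ i : Fin n, hM.eigenvalues i ≤ t → (b i : Fin n → ℝ) ⬝ᵥ x = 0 := by
      intro i hi
      have him : i ∈ E := by simp [hE, hi]
      have := congrFun hy ⟨i, him⟩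
      exact this
    have hxx : (0:ℝ) < x ⬝ᵥ x := by
      obtain ⟨j, hj⟩ : ∃ j, x j ≠ 0 := by
        by_contra h
        push_neg at h
        exact hx0 (funext h)
      have : (0:ℝ) < ∑ i, x i * x i := by
        apply Finset.sum_pos' (fun i _ => mul_self_nonneg _)
        exact ⟨j, Finset.mem_univ j, by have := mul_self_pos.mpr hj; exact this⟩
      simpa [dotProduct] using this
    have hquad : t * (x ⬝ᵥ x) < x ⬝ᵥ (M *ᵥ x) := by
      have h1 : x ⬝ᵥ (M *ᵥ x) - t * (x ⬝ᵥ x)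
          = ∑ i, (hM.eigenvalues i - t) * ((b i : Fin n → ℝ) ⬝ᵥ x)^2 := by
        rw [show x ⬝ᵥ (M *ᵥ x) = ∑ i, hM.eigenvalues i * ((b i : Fin n → ℝ) ⬝ᵥ x)^2 from
            quad_eq' hM (WithLp.toLp 2 x),
          show x ⬝ᵥ x = ∑ i, ((b i : Fin n → ℝ) ⬝ᵥ x)^2 from normsq_eq' hM (WithLp.toLp 2 x), Finset.mul_sum, ← Finset.sum_sub_distrib]
        exact Finset.sum_congr rfl fun i _ => by ring
      have hterm : ∀ i ∈ (univ : Finset (Fin n)),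
          0 ≤ (hM.eigenvalues i - t) * ((b i : Fin n → ℝ) ⬝ᵥ x)^2 := by
        intro i _
        by_cases hi : hM.eigenvalues i ≤ t
        · rw [hc0 i hi]; simp
        · have : 0 ≤ hM.eigenvalues i - t := by linarith [le_of_not_ge hi]
          positivity
      obtain ⟨j, hj⟩ : ∃ j, (b j : Fin n → ℝ) ⬝ᵥ x ≠ 0 := by
        by_contra h
        push_neg at h
        rw [show x ⬝ᵥ x = ∑ i, ((b i : Fin n → ℝ) ⬝ᵥ x)^2 from
          normsq_eq' hM (WithLp.toLp 2 x)] at hxx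
        simp [h] at hxx
      have hjgt : t < hM.eigenvalues j := by
        by_contra h
        exact hj (hc0 j (le_of_not_gt h))
      have : 0 < ∑ i, (hM.eigenvalues i - t) * ((b i : Fin n → ℝ) ⬝ᵥ x)^2 := by
        apply Finset.sum_pos' hterm
        refine ⟨j, Finset.mem_univ j, ?_⟩
        have h1 : 0 < hM.eigenvalues j - t := by linarith
        have h2 : 0 < ((b j : Fin n → ℝ) ⬝ᵥ x)^2 := by positivity
        positivity
      linarith [h1 ▸ this]
    exact absurd (hform x hxS) (not_le.mpr hquad)
  have := LinearMap.finrank_le_finrank_of_injective hinj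
  simpa [Module.finrank_pi, Fintype.card_coe] using this

private lemma count_main' (G : SimpleGraph (Fin n)) [DecidableRel G.Adj] (α : ℝ)
    (hα0 : 0 ≤ α) (hα1 : α ≤ 1) (hH : (Aalpha G α).IsHermitian) (t : ℝ) :
    (univ.filter fun i => t < hH.eigenvalues i).card
      ≤ (univ.filter fun i => t < (G.degree i : ℝ)).card := by
  classical
  set S : Finset (Fin n) := univ.filter fun i => (G.degree i : ℝ) ≤ t with hS
  have hform : ∀ x : Fin n → ℝ, (∀ i, x i ≠ 0 → i ∈ S)
      → x ⬝ᵥ ((Aalpha G α) *ᵥ x) ≤ t * (x ⬝ᵥ x) := by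
    intro x hsupp
    exact form_bound' G α hα0 hα1 t x fun i hi => (Finset.mem_filter.mp (hsupp i hi)).2
  have key := count_le' hH t S hform
  have h1 : (univ.filter fun i => t < hH.eigenvalues i).card
      + (univ.filter fun i => hH.eigenvalues i ≤ t).card = n := by
    rw [show (univ.filter fun i => hH.eigenvalues i ≤ t)
        = univ.filter (fun i => ¬ t < hH.eigenvalues i) by
      apply Finset.filter_congr; intro i _; simp [not_lt]]
    rw [Finset.card_filter_add_card_filter_not, Finset.card_univ, Fintype.card_fin]
  have h2 : (univ.filter fun i => t < (G.degree i : ℝ)).card + S.card = n := by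
    rw [show S = univ.filter (fun i => ¬ t < (G.degree i : ℝ)) by
      apply Finset.filter_congr; intro i _; simp [hS, not_lt]]
    rw [Finset.card_filter_add_card_filter_not, Finset.card_univ, Fintype.card_fin]
  omega

end Aux

theorem stmt17 {n : ℕ} (G : SimpleGraph (Fin n)) [DecidableRel G.Adj]
    (α : ℝ) (hα0 : 0 ≤ α) (hα1 : α ≤ 1)
    (hH : (Aalpha G α).IsHermitian) :
    (∀ p e : Equiv.Perm (Fin n),
        Antitone (fun k => hH.eigenvalues (p k)) →
        Antitone (fun k => G.degree (e k)) →
        ∀ k : Fin n, hH.eigenvalues (p k) ≤ (G.degree (e k) : ℝ)) ∧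
      (⨆ i, hH.eigenvalues i) ≤ (G.maxDegree : ℝ) := by
  classical
  constructor
  · intro p e hp he k
    by_contra hlt
    push_neg at hlt
    set t : ℝ := (G.degree (e k) : ℝ) with ht
    have hA : (Finset.Iic k).image p ⊆ univ.filter fun i => t < hH.eigenvalues i := by
      intro i hi
      obtain ⟨j, hj, rfl⟩ := Finset.mem_image.mp hi
      have hjk : j ≤ k := Finset.mem_Iic.mp hj
      have := hp hjk
      exact Finset.mem_filter.mpr ⟨Finset.mem_univ _, lt_of_lt_of_le hlt this⟩
    have hB : (univ.filter fun i => t < (G.degree i : ℝ)) ⊆ (Finset.Iio k).image e := by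
      intro i hi
      have hti : t < (G.degree i : ℝ) := (Finset.mem_filter.mp hi).2
      have hi' : i = e (e.symm i) := (e.apply_symm_apply i).symm
      refine Finset.mem_image.mpr ⟨e.symm i, Finset.mem_Iio.mpr ?_, (e.apply_symm_apply i)⟩
      by_contra h
      push_neg at h
      have hle : G.degree (e (e.symm i)) ≤ G.degree (e k) := he h
      rw [e.apply_symm_apply] at hle
      have : (G.degree i : ℝ) ≤ t := by rw [ht]; exact_mod_cast hle
      linarith
    have hcard1 : (k : ℕ) + 1 ≤ (univ.filter fun i => t < hH.eigenvalues i).card := by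
      calc (k : ℕ) + 1 = (Finset.Iic k).card := (Fin.card_Iic k).symm
        _ = ((Finset.Iic k).image p).card :=
            (Finset.card_image_of_injective _ p.injective).symm
        _ ≤ _ := Finset.card_le_card hA
    have hcard2 : (univ.filter fun i => t < (G.degree i : ℝ)).card ≤ (k : ℕ) := by
      calc (univ.filter fun i => t < (G.degree i : ℝ)).card
          ≤ ((Finset.Iio k).image e).card := Finset.card_le_card hB
        _ ≤ (Finset.Iio k).card := Finset.card_image_le
        _ = (k : ℕ) := Fin.card_Iio k
    have := count_main' G α hα0 hα1 hH t
    omega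
  · apply Real.iSup_le _ (by positivity)
    intro i
    set b := hH.eigenvectorBasis with hb
    set v : Fin n → ℝ := (b i : Fin n → ℝ) with hv
    have hvv : (0:ℝ) < v ⬝ᵥ v := by
      have hne : b i ≠ 0 := b.orthonormal.ne_zero i
      obtain ⟨j, hj⟩ : ∃ j, v j ≠ 0 := by
        by_contra h
        push_neg at h
        exact hne (WithLp.ofLp_injective 2 (funext h))
      have : (0:ℝ) < ∑ l, v l * v l := by
        apply Finset.sum_pos' (fun l _ => mul_self_nonneg _)
        exact ⟨j, Finset.mem_univ j, by have := mul_self_pos.mpr hj; exact this⟩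
      simpa [dotProduct] using this
    have hquad : v ⬝ᵥ ((Aalpha G α) *ᵥ v) = hH.eigenvalues i * (v ⬝ᵥ v) := by
      rw [show ((Aalpha G α) *ᵥ v) = hH.eigenvalues i • v from hH.mulVec_eigenvectorBasis i,
        dotProduct_smul]
      rfl
    have hub : v ⬝ᵥ ((Aalpha G α) *ᵥ v) ≤ (G.maxDegree : ℝ) * (v ⬝ᵥ v) := by
      apply form_bound' G α hα0 hα1 _ v
      intro j _
      exact_mod_cast G.degree_le_maxDegree j
    rw [hquad] at hub
    exact le_of_mul_le_mul_right (by linarith [hub]) hvv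
end

section
/- Let G be a graph on n vertices with clique number ω. For any nonnegative vector x ∈ ℝⁿ with Σᵢ xᵢ = 1, xᵀA(G)x ≤ 1 - 1/ω, and the maximum over all such x equals 1 - 1/ω (Motzkin–Straus). -/
open Matrix SimpleGraph Finset

section MS
variable {n : ℕ} (G : SimpleGraph (Fin n)) [DecidableRel G.Adj]

lemma MS_Q_eq (x : Fin n → ℝ) :
    x ⬝ᵥ (G.adjMatrix ℝ).mulVec x = ∑ k, ∑ l, (G.adjMatrix ℝ) k l * (x k * x l) := by
  simp [dotProduct, Matrix.mulVec, Finset.mul_sum, mul_comm, mul_left_comm]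

lemma MS_dp_single (x : Fin n → ℝ) (i : Fin n) (t : ℝ) :
    x ⬝ᵥ (G.adjMatrix ℝ).mulVec (Pi.single i t) = t * ((G.adjMatrix ℝ).mulVec x i) := by
  rw [Matrix.mulVec_single]
  simp only [dotProduct, SimpleGraph.adjMatrix_mulVec_apply, Finset.mul_sum,
    SimpleGraph.adjMatrix_apply, neighborFinset_eq_filter, Finset.sum_filter,
    Pi.smul_apply, op_smul_eq_mul, Matrix.col_apply]
  apply Finset.sum_congr rfl
  intro k _
  by_cases h : G.Adj i k
  · rw [if_pos (G.adj_symm h), if_pos h]; ring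
  · rw [if_neg (fun h' => h (G.adj_symm h')), if_neg h]; ring

lemma MS_single_dp (x : Fin n → ℝ) (i : Fin n) (t : ℝ) :
    (Pi.single i t : Fin n → ℝ) ⬝ᵥ (G.adjMatrix ℝ).mulVec x = t * ((G.adjMatrix ℝ).mulVec x i) := by
  rw [single_dotProduct]

lemma MS_shift (x : Fin n → ℝ) (i j : Fin n) (t : ℝ) (hij : ¬ G.Adj i j) :
    (x + (Pi.single i t : Fin n → ℝ) - (Pi.single j t : Fin n → ℝ)) ⬝ᵥ
      (G.adjMatrix ℝ).mulVec (x + (Pi.single i t : Fin n → ℝ) - (Pi.single j t : Fin n → ℝ))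
    = x ⬝ᵥ (G.adjMatrix ℝ).mulVec x
      + 2 * t * (((G.adjMatrix ℝ).mulVec x) i - ((G.adjMatrix ℝ).mulVec x) j) := by
  have hii : (G.adjMatrix ℝ) i i = 0 := by simp
  have hjj : (G.adjMatrix ℝ) j j = 0 := by simp
  have hij' : (G.adjMatrix ℝ) i j = 0 := by simp [hij]
  have hji' : (G.adjMatrix ℝ) j i = 0 := by simp [G.adj_comm, hij]
  have h1 : ∀ (s u : ℝ) (k l : Fin n),
      (Pi.single k s : Fin n → ℝ) ⬝ᵥ (G.adjMatrix ℝ).mulVec (Pi.single l u)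
        = s * ((G.adjMatrix ℝ) k l * u) := by
    intro s u k l
    rw [Matrix.mulVec_single, single_dotProduct]; rfl
  simp only [sub_dotProduct, add_dotProduct, Matrix.mulVec_add, Matrix.mulVec_sub,
    dotProduct_add, dotProduct_sub, MS_dp_single, MS_single_dp, h1,
    hii, hjj, hij', hji']
  ring

lemma MS_clique_Q (S : Finset (Fin n)) (hS : G.IsClique ↑S) (x : Fin n → ℝ)
    (hsupp : ∀ k, k ∉ S → x k = 0) :
    x ⬝ᵥ (G.adjMatrix ℝ).mulVec x = (∑ k ∈ S, x k)^2 - ∑ k ∈ S, (x k)^2 := by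
  rw [MS_Q_eq]
  have h1 : ∑ k, ∑ l, (G.adjMatrix ℝ) k l * (x k * x l)
      = ∑ k ∈ S, ∑ l ∈ S, (G.adjMatrix ℝ) k l * (x k * x l) := by
    rw [← Finset.sum_subset S.subset_univ (fun k _ hk => by simp [hsupp k hk])]
    apply Finset.sum_congr rfl
    intro k _
    rw [← Finset.sum_subset S.subset_univ (fun l _ hl => by simp [hsupp l hl])]
  rw [h1]
  have h2 : ∀ k ∈ S, ∑ l ∈ S, (G.adjMatrix ℝ) k l * (x k * x l)
      = ∑ l ∈ S, (x k * x l - if k = l then x k * x l else 0) := by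
    intro k hk
    apply Finset.sum_congr rfl
    intro l hl
    by_cases h : k = l
    · subst h; simp
    · have : G.Adj k l := hS (by simpa using hk) (by simpa using hl) h
      simp [this, h]
  rw [Finset.sum_congr rfl h2]
  have h3 : ∀ k ∈ S, ∑ l ∈ S, (x k * x l - if k = l then x k * x l else 0)
      = x k * (∑ l ∈ S, x l) - x k * x k := by
    intro k hk
    rw [Finset.sum_sub_distrib, Finset.sum_ite_eq S k (fun l => x k * x l), if_pos hk,
      ← Finset.mul_sum]
  rw [Finset.sum_congr rfl h3, Finset.sum_sub_distrib, ← Finset.sum_mul]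
  ring_nf

lemma MS_cliqueNum_pos (hn : 0 < n) : 0 < G.cliqueNum := by
  have h : G.IsClique ({⟨0, hn⟩} : Finset (Fin n)) := by
    simp [SimpleGraph.isClique_iff, Set.Pairwise]
  have := IsClique.card_le_cliqueNum (G := G) (t := {⟨0, hn⟩}) (tc := h)
  simp at this; omega

lemma MS_upper (hn : 0 < n) : ∀ N (x : Fin n → ℝ),
    (Finset.univ.filter (fun i => x i ≠ 0)).card ≤ N →
    (∀ i, 0 ≤ x i) → ∑ i, x i = 1 →
    x ⬝ᵥ (G.adjMatrix ℝ).mulVec x ≤ 1 - 1 / (G.cliqueNum : ℝ) := by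
  intro N
  induction N with
  | zero =>
    intro x hcard hx0 hx1
    exfalso
    have : ∀ i, x i = 0 := by
        intro i
        by_contra h
        have : i ∈ Finset.univ.filter (fun i => x i ≠ 0) := by simp [h]
        rw [Nat.le_zero, Finset.card_eq_zero] at hcard
        simp [hcard] at this
    simp [this] at hx1
  | succ N ih =>
    intro x hcard hx0 hx1
    set S := Finset.univ.filter (fun i => x i ≠ 0) with hSdef
    have hsupp : ∀ k, k ∉ S → x k = 0 := by
      intro k hk; by_contra h; exact hk (by simp [hSdef, h])
    have hSne : S.Nonempty := by
      by_contra h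
      rw [Finset.not_nonempty_iff_eq_empty] at h
      have : ∀ i, x i = 0 := fun i => hsupp i (by simp [h])
      simp [this] at hx1
    by_cases hclique : G.IsClique ↑S
    · -- clique case
      rw [MS_clique_Q G S hclique x hsupp]
      have hsum : ∑ k ∈ S, x k = 1 := by
        rw [Finset.sum_subset S.subset_univ (fun k _ hk => hsupp k hk)]
        exact hx1
      rw [hsum]
      have hcard_pos : 0 < S.card := Finset.card_pos.mpr hSne
      have hcard_le : S.card ≤ G.cliqueNum :=
        IsClique.card_le_cliqueNum (G := G) (t := S) (tc := hclique)
      have hcs : (1:ℝ) ≤ S.card * ∑ k ∈ S, (x k)^2 := by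
        have := sq_sum_le_card_mul_sum_sq (s := S) (f := x)
        rw [hsum] at this
        simpa using this
      have hSpos : (0:ℝ) < S.card := by exact_mod_cast hcard_pos
      have h1 : 1 / (S.card : ℝ) ≤ ∑ k ∈ S, (x k)^2 := by
        rw [div_le_iff₀ hSpos] at *
        nlinarith
      have h2 : 1 / (G.cliqueNum : ℝ) ≤ 1 / (S.card : ℝ) := by
        apply one_div_le_one_div_of_le hSpos
        exact_mod_cast hcard_le
      nlinarith
    · -- not a clique: shift mass
      rw [SimpleGraph.isClique_iff, Set.Pairwise] at hclique
      push_neg at hclique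
      obtain ⟨i, hi, j, hj, hne, hnadj⟩ := hclique
      have hi' : i ∈ S := by simpa using hi
      have hj' : j ∈ S := by simpa using hj
      have key : ∀ i j : Fin n, i ∈ S → j ∈ S → i ≠ j → ¬ G.Adj i j →
          ((G.adjMatrix ℝ).mulVec x) j ≤ ((G.adjMatrix ℝ).mulVec x) i →
          x ⬝ᵥ (G.adjMatrix ℝ).mulVec x ≤ 1 - 1 / (G.cliqueNum : ℝ) := by
        intro i j hi hj hne hnadj hle
        set t := x j with ht
        have htpos : 0 < t := by
          rcases lt_or_eq_of_le (hx0 j) with h | h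
          · exact h
          · exact absurd h.symm (by simpa [hSdef] using hj)
        set x' := x + (Pi.single i t : Fin n → ℝ) - (Pi.single j t : Fin n → ℝ) with hx'
        have hx'apply : ∀ k, x' k = x k + (if k = i then t else 0) - (if k = j then t else 0) := by
          intro k
          simp [hx', Pi.single_apply]
        have hx'0 : ∀ k, 0 ≤ x' k := by
          intro k
          rw [hx'apply]
          by_cases hki : k = i
          · subst hki
            rw [if_pos rfl, if_neg hne]
            have := hx0 k
            linarith [htpos.le]
          · by_cases hkj : k = j
            · subst hkj
              rw [if_neg hki, if_pos rfl, ht]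
              ring_nf
              simp
            · rw [if_neg hki, if_neg hkj]
              simpa using hx0 k
        have hx'1 : ∑ k, x' k = 1 := by
          simp only [hx'apply, Finset.sum_sub_distrib, Finset.sum_add_distrib,
            Finset.sum_ite_eq' Finset.univ, Finset.mem_univ, if_true]
          rw [hx1]; ring
        have hx'supp : Finset.univ.filter (fun k => x' k ≠ 0) ⊆ S.erase j := by
          intro k hk
          simp only [Finset.mem_filter, Finset.mem_univ, true_and] at hk
          rw [Finset.mem_erase]
          constructor
          · rintro rfl
            apply hk
            rw [hx'apply, if_neg hne.symm, if_pos rfl]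
            ring
          · by_cases hki : k = i
            · subst hki; exact hi
            · by_cases hkj : k = j
              · exfalso; apply hk; rw [hx'apply, if_neg hki, if_pos hkj, hkj]; ring
              · rw [hSdef, Finset.mem_filter]
                refine ⟨Finset.mem_univ _, ?_⟩
                intro h
                apply hk
                rw [hx'apply, if_neg hki, if_neg hkj, h]; ring
        have hx'card : (Finset.univ.filter (fun k => x' k ≠ 0)).card ≤ N := by
          calc (Finset.univ.filter (fun k => x' k ≠ 0)).card
              ≤ (S.erase j).card := Finset.card_le_card hx'supp
            _ = S.card - 1 := Finset.card_erase_of_mem hj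
            _ ≤ N := by omega
        have hQ := MS_shift G x i j t hnadj
        have hIH := ih x' hx'card hx'0 hx'1
        rw [hx'] at hIH
        rw [hQ] at hIH
        nlinarith
      rcases le_total (((G.adjMatrix ℝ).mulVec x) j) (((G.adjMatrix ℝ).mulVec x) i) with h | h
      · exact key i j hi' hj' hne hnadj h
      · exact key j i hj' hi' hne.symm (fun h' => hnadj (G.adj_symm h')) h

end MS

theorem stmt18 {n : ℕ} (hn : 0 < n) (G : SimpleGraph (Fin n)) [DecidableRel G.Adj]
    (ω : ℕ) (hω : ω = G.cliqueNum) :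
    (∀ x : Fin n → ℝ, (∀ i, 0 ≤ x i) → ∑ i, x i = 1 →
        x ⬝ᵥ (G.adjMatrix ℝ).mulVec x ≤ 1 - 1 / (ω : ℝ)) ∧
      ∃ x : Fin n → ℝ, (∀ i, 0 ≤ x i) ∧ ∑ i, x i = 1 ∧
        x ⬝ᵥ (G.adjMatrix ℝ).mulVec x = 1 - 1 / (ω : ℝ) := by
  subst hω
  constructor
  · intro x hx0 hx1
    exact MS_upper G hn (Finset.univ.filter (fun i => x i ≠ 0)).card x le_rfl hx0 hx1
  · obtain ⟨s, hs⟩ := G.exists_isNClique_cliqueNum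
    have hωpos : 0 < G.cliqueNum := MS_cliqueNum_pos G hn
    have hscard : s.card = G.cliqueNum := hs.card_eq
    have hωR : (0:ℝ) < (G.cliqueNum : ℝ) := by exact_mod_cast hωpos
    refine ⟨fun i => if i ∈ s then 1 / (G.cliqueNum : ℝ) else 0, ?_, ?_, ?_⟩
    · intro i; dsimp only; split_ifs <;> positivity
    · rw [Finset.sum_ite_mem, Finset.univ_inter, Finset.sum_const, hscard, nsmul_eq_mul]
      field_simp
    · rw [MS_clique_Q G s hs.isClique _ (fun k hk => by simp [hk])]
      have e1 : ∑ k ∈ s, (if k ∈ s then 1 / (G.cliqueNum : ℝ) else 0) = 1 := by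
        rw [Finset.sum_congr rfl (fun k hk => if_pos hk), Finset.sum_const, hscard, nsmul_eq_mul]
        field_simp
      have e2 : ∑ k ∈ s, (if k ∈ s then 1 / (G.cliqueNum : ℝ) else 0)^2
          = 1 / (G.cliqueNum : ℝ) := by
        rw [Finset.sum_congr rfl (fun k hk => by rw [if_pos hk]), Finset.sum_const, hscard, nsmul_eq_mul]
        field_simp
      rw [e1, e2]
      ring
end
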